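/- arXiv:2108.08299 — 5 statements merged into one kernel-verified Lean document; each statement's English description precedes it below -/
import Mathlib

section
/- The shortest Dyck path containing a pair of consecutive valleys whose levels differ by less than d (for d < 0, with e = |d|) is the path U^{e+2} D U D^{e+2} U D, which has semi-length e + 4. Consequently, every Dyck path of semi-length at most e + 3 is a d-Dyck path. -/
/-- Value of a step: `true` = up-step U, `false` = down-step D. -/
def stepVal (b : Bool) : ℤ := if b then 1 else -1

/-- Heights (y-coordinates) of all lattice points visited along the path,
starting at 0. -/
def heights (p : List Bool) : List ℤ := p.scanl (fun h b => h + stepVal b) 0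

/-- A Dyck path: equal numbers of up and down steps, never going below the x-axis. -/
def IsDyck (p : List Bool) : Prop :=
  p.count true = p.count false ∧ ∀ h ∈ heights p, 0 ≤ h

/-- Semi-length of a path: the number of up-steps. -/
def semilength (p : List Bool) : ℕ := p.count true

/-- Levels (y-coordinates of the local minima) of the valleys (DU factors),
read from left to right. -/
def valleyLevels (p : List Bool) : List ℤ :=
  ((p.zip p.tail).zip (heights p).tail).filterMap
    (fun x => if x.1.1 = false ∧ x.1.2 = true then some x.2 else none)

/-- A path is restricted `d`-Dyck (on the valley condition) if consecutive
valley levels `ν_i, ν_{i+1}` satisfy `ν_{i+1} - ν_i ≥ d`. -/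
def RestrictedD (d : ℤ) (p : List Bool) : Prop :=
  List.Chain' (fun a b => d ≤ b - a) (valleyLevels p)

/-- Number of peaks (UD factors) of a path. -/
def peaks (p : List Bool) : ℕ := (p.zip p.tail).countP (fun x => x.1 && !x.2)

/-- The area of a path: the sum of the y-coordinates of all lattice points on it. -/
def pathArea (p : List Bool) : ℤ := (heights p).sum

/-- `dDyckCount d n` = number of `d`-Dyck paths of semi-length `n`. -/
noncomputable def dDyckCount (d : ℤ) (n : ℕ) : ℕ :=
  {p : List Bool | IsDyck p ∧ semilength p = n ∧ RestrictedD d p}.ncard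


/-- prefix height function -/
def Hc (p : List Bool) (k : ℕ) : ℤ :=
  ((p.take k).count true : ℤ) - ((p.take k).count false : ℤ)

lemma scanl_shift (p : List Bool) (c : ℤ) :
    p.scanl (fun h b => h + stepVal b) c = (heights p).map (fun h => c + h) := by
  induction p generalizing c with
  | nil => simp [heights]
  | cons x xs ih =>
    rw [List.scanl_cons]
    rw [heights, List.scanl_cons]
    simp only [List.map_append, List.map_cons, List.map_nil]
    rw [ih, ih, List.map_map]
    simp only [List.singleton_append, List.cons.injEq]
    constructor
    · ring
    · congr 1; funext h; simp; ring

lemma heights_cons (x : Bool) (p : List Bool) :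
    heights (x :: p) = 0 :: (heights p).map (fun h => stepVal x + h) := by
  rw [heights, List.scanl_cons, scanl_shift]
  simp

lemma length_heights (p : List Bool) : (heights p).length = p.length + 1 := by
  rw [heights, List.length_scanl]

lemma Hc_cons (x : Bool) (p : List Bool) (k : ℕ) :
    Hc (x :: p) (k + 1) = stepVal x + Hc p k := by
  simp only [Hc, List.take_succ_cons, List.count_cons]
  cases x <;> simp [stepVal] <;> push_cast <;> ring

lemma heights_getElem (p : List Bool) (k : ℕ) (hk : k < (heights p).length) :
    (heights p)[k] = Hc p k := by
  induction p generalizing k with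
  | nil =>
    rw [heights, List.length_scanl] at hk
    simp at hk
    subst hk
    simp [heights, Hc]
  | cons x xs ih =>
    match k with
    | 0 => simp [heights_cons, Hc]
    | k + 1 =>
      have hk' : k < (heights xs).length := by
        rw [heights_cons] at hk; simpa using hk
      rw [Hc_cons, ← ih k hk']
      simp [heights_cons]

lemma Hc_nonneg {p : List Bool} (hp : IsDyck p) (k : ℕ) (hk : k ≤ p.length) :
    0 ≤ Hc p k := by
  have h1 : k < (heights p).length := by rw [length_heights]; omega
  rw [← heights_getElem p k h1]
  exact hp.2 _ (List.getElem_mem h1)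

lemma count_take_mono (p : List Bool) (b : Bool) {k1 k2 : ℕ} (h : k1 ≤ k2) :
    (p.take k1).count b ≤ (p.take k2).count b := by
  have : p.take k1 = (p.take k2).take k1 := by rw [List.take_take, min_eq_left h]
  rw [this]
  exact (List.take_sublist _ _).count_le b

lemma Hc_segment (p : List Bool) {k1 k2 : ℕ} (h : k1 ≤ k2) :
    Hc p k1 - Hc p k2 ≤ ((p.take k2).count false : ℤ) - ((p.take k1).count false : ℤ) := by
  have := count_take_mono p true h
  unfold Hc
  push_cast
  omega

lemma count_take_succ_false (p : List Bool) (k : ℕ) (hk : k < p.length) (hpk : p[k] = false) :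
    ((p.take (k+1)).count false = (p.take k).count false + 1) ∧
    ((p.take (k+1)).count true = (p.take k).count true) := by
  rw [← List.take_concat_get hk, hpk]
  simp [List.concat_eq_append, List.count_append]

lemma count_take_succ_true (p : List Bool) (k : ℕ) (hk : k < p.length) (hpk : p[k] = true) :
    ((p.take (k+1)).count false = (p.take k).count false) ∧
    ((p.take (k+1)).count true = (p.take k).count true + 1) := by
  rw [← List.take_concat_get hk, hpk]
  simp [List.concat_eq_append, List.count_append]

lemma Hc_length (p : List Bool) (hp : IsDyck p) : Hc p p.length = 0 := by
  simp [Hc, List.take_length, hp.1]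

abbrev Zl (p : List Bool) : List ((Bool × Bool) × ℤ) :=
  (p.zip p.tail).zip (heights p).tail

lemma Zl_length (p : List Bool) : (Zl p).length = p.length - 1 := by
  simp [Zl, List.length_zip, length_heights]

lemma Zl_getElem (p : List Bool) (k : ℕ) (hk : k < (Zl p).length) :
    (Zl p)[k] = ((p[k]'(by rw [Zl_length] at hk; omega),
                  p[k+1]'(by rw [Zl_length] at hk; omega)), Hc p (k+1)) := by
  have hk1 : k + 1 < p.length := by rw [Zl_length] at hk; omega
  have hh : k + 1 < (heights p).length := by rw [length_heights]; omega
  simp only [Zl, List.getElem_zip, List.getElem_tail]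
  rw [heights_getElem p (k+1) hh]

lemma chain'_violation {α : Type*} {R : α → α → Prop} {l : List α} (h : ¬ List.Chain' R l) :
    ∃ a b, List.Sublist [a, b] l ∧ ¬ R a b := by
  induction l with
  | nil => exact (h List.IsChain.nil).elim
  | cons x t ih =>
    match t with
    | [] => exact (h (List.IsChain.singleton _)).elim
    | y :: t' =>
      simp only [List.Chain', List.isChain_cons_cons] at h
      by_cases hR : R x y
      · have h2 : ¬ List.Chain' R (y :: t') := by tauto
        obtain ⟨a, b, hs, hr⟩ := ih h2
        exact ⟨a, b, hs.trans (List.sublist_cons_self x _), hr⟩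
      · exact ⟨x, y, ((List.nil_sublist t').cons₂ y).cons₂ x, hR⟩

/-- from a violated chain, extract two ordered valley indices -/
lemma exists_valleys {d : ℤ} {p : List Bool} (h : ¬ RestrictedD d p) :
    ∃ i j : ℕ, i < j ∧ j + 1 < p.length ∧
      p[i]! = false ∧ p[i+1]! = true ∧ p[j]! = false ∧ p[j+1]! = true ∧
      Hc p (j+1) - Hc p (i+1) < d := by
  obtain ⟨a, b, hsub0, hviol⟩ := chain'_violation h
  have hviol' : b - a < d := by omega
  have hsub : List.Sublist [a, b] ((Zl p).filterMap
      (fun x => if x.1.1 = false ∧ x.1.2 = true then some x.2 else none)) := hsub0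
  rw [List.sublist_filterMap_iff] at hsub
  obtain ⟨Z', hZ'sub, hZ'fm⟩ := hsub
  symm at hZ'fm
  rw [List.filterMap_eq_cons_iff] at hZ'fm
  obtain ⟨l1, x, l2, hZ'eq, -, hfx, hl2⟩ := hZ'fm
  rw [List.filterMap_eq_cons_iff] at hl2
  obtain ⟨l3, y, l4, hl2eq, -, hfy, -⟩ := hl2
  have hx : x.1.1 = false ∧ x.1.2 = true ∧ x.2 = a := by
    by_cases hc : x.1.1 = false ∧ x.1.2 = true
    · simp [hc] at hfx; exact ⟨hc.1, hc.2, hfx⟩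
    · simp [hc] at hfx
  have hy : y.1.1 = false ∧ y.1.2 = true ∧ y.2 = b := by
    by_cases hc : y.1.1 = false ∧ y.1.2 = true
    · simp [hc] at hfy; exact ⟨hc.1, hc.2, hfy⟩
    · simp [hc] at hfy
  have hxy : List.Sublist [x, y] (Zl p) := by
    refine .trans ?_ hZ'sub
    rw [hZ'eq, hl2eq]
    refine .trans ?_ (List.sublist_append_right l1 _)
    refine List.Sublist.cons₂ x ?_
    refine .trans ?_ (List.sublist_append_right l3 _)
    exact (List.nil_sublist l4).cons₂ y
  obtain ⟨is, hmap, hpw⟩ := List.sublist_eq_map_getElem hxy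
  match is, hmap with
  | [i1, i2], hmap =>
    simp only [List.map_cons, List.map_nil, List.cons.injEq, and_true] at hmap
    obtain ⟨hx1, hy1⟩ := hmap
    have hij : (i1 : ℕ) < (i2 : ℕ) := (List.pairwise_cons.1 hpw).1 i2 (by simp)
    have hi1 : (i1 : ℕ) + 1 < p.length := by have h1 := i1.isLt; have h2 := Zl_length p; omega
    have hi2 : (i2 : ℕ) + 1 < p.length := by have h1 := i2.isLt; have h2 := Zl_length p; omega
    rw [Fin.getElem_fin, Zl_getElem p i1 i1.isLt] at hx1
    rw [Fin.getElem_fin, Zl_getElem p i2 i2.isLt] at hy1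
    obtain ⟨ha1, ha2, ha3⟩ := hx
    obtain ⟨hb1, hb2, hb3⟩ := hy
    rw [hx1] at ha1 ha2 ha3
    rw [hy1] at hb1 hb2 hb3
    simp only at ha1 ha2 ha3 hb1 hb2 hb3
    refine ⟨i1, i2, hij, hi2, ?_, ?_, ?_, ?_, ?_⟩
    · rw [getElem!_pos p _ (by omega)]; exact ha1
    · rw [getElem!_pos p _ (by omega)]; exact ha2
    · rw [getElem!_pos p _ (by omega)]; exact hb1
    · rw [getElem!_pos p _ (by omega)]; exact hb2
    · rw [ha3, hb3]
      exact hviol'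

lemma key_bound {d : ℤ} {e : ℕ} (hde : d = -(e:ℤ)) {p : List Bool} (hp : IsDyck p)
    (hr : ¬ RestrictedD d p) : e + 4 ≤ semilength p := by
  obtain ⟨i, j, hij, hjlen, hpi, hpi1, hpj, hpj1, hH⟩ := exists_valleys hr
  rw [getElem!_pos p i (by omega)] at hpi
  rw [getElem!_pos p (i+1) (by omega)] at hpi1
  rw [getElem!_pos p j (by omega)] at hpj
  rw [getElem!_pos p (j+1) (by omega)] at hpj1
  have hne : j ≠ i + 1 := by
    intro hh
    subst hh
    rw [hpi1] at hpj
    exact Bool.noConfusion hpj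
  have hb0 : 0 ≤ Hc p (j+1) := Hc_nonneg hp _ (by omega)
  have c1 := count_take_succ_false p i (by omega) hpi
  have c2 := count_take_succ_true p (i+1) (by omega) hpi1
  have c4 := count_take_succ_true p (j+1) (by omega) hpj1
  have seg1 := Hc_segment p (show i+2 ≤ j+1 by omega)
  have seg2 := Hc_segment p (show j+2 ≤ p.length by omega)
  have hlen := Hc_length p hp
  have hsemi : (p.take p.length).count false = semilength p := by
    rw [List.take_length, ← hp.1]; rfl
  have e1 : i + 1 + 1 = i + 2 := rfl
  have e2 : j + 1 + 1 = j + 2 := rfl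
  rw [e1] at c2
  rw [e2] at c4
  simp only [Hc] at hb0 seg1 seg2 hlen hH
  omega

def Wf (c : ℤ) (p : List Bool) : List ℤ :=
  ((p.zip p.tail).zip (p.scanl (fun h b => h + stepVal b) c).tail).filterMap
    (fun x => if x.1.1 = false ∧ x.1.2 = true then some x.2 else none)

lemma valleyLevels_eq_Wf (p : List Bool) : valleyLevels p = Wf 0 p := rfl

lemma Wf_nil (c : ℤ) : Wf c [] = [] := rfl
lemma Wf_single (c : ℤ) (x : Bool) : Wf c [x] = [] := rfl

lemma Wf_cons (c : ℤ) (x y : Bool) (l : List Bool) :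
    Wf c (x :: y :: l) =
      (if x = false ∧ y = true then [c + stepVal x] else []) ++ Wf (c + stepVal x) (y :: l) := by
  by_cases h : x = false ∧ y = true <;>
    simp [Wf, List.zip_cons_cons, List.scanl_cons, List.filterMap_cons, h]

lemma Wf_replicate_true (n : ℕ) (c : ℤ) (l : List Bool) :
    Wf c (List.replicate n true ++ l) = Wf (c + n) l := by
  induction n generalizing c with
  | zero => simp
  | succ n ih =>
    rw [List.replicate_succ, List.cons_append]
    rcases hm : List.replicate n true ++ l with - | ⟨y, t⟩
    · rcases List.append_eq_nil_iff.1 hm with ⟨h1, h2⟩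
      have hn : n = 0 := by simpa using congrArg List.length h1
      subst h2 hn
      simp [Wf_single, Wf_nil]
    · rw [Wf_cons]
      rw [← hm]
      rw [ih]
      rw [if_neg (by simp)]
      rw [List.nil_append]
      congr 1
      show c + stepVal true + (n : ℤ) = c + ((n : ℤ) + 1)
      simp [stepVal]
      ring

lemma Wf_replicate_false_true (n : ℕ) (c : ℤ) (l : List Bool) :
    Wf c (List.replicate (n+1) false ++ (true :: l)) =
      (c - (n+1)) :: Wf (c - (n+1)) (true :: l) := by
  induction n generalizing c with
  | zero =>
    rw [show List.replicate 1 false ++ (true :: l) = false :: true :: l from rfl]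
    rw [Wf_cons, if_pos ⟨rfl, rfl⟩]
    simp [stepVal, sub_eq_add_neg]
  | succ n ih =>
    have hsplit : List.replicate (n+1+1) false ++ (true :: l)
        = false :: (List.replicate (n+1) false ++ (true :: l)) := by
      rw [List.replicate_succ, List.cons_append]
    rw [hsplit]
    have hsplit2 : List.replicate (n+1) false ++ (true :: l)
        = false :: (List.replicate n false ++ (true :: l)) := by
      rw [List.replicate_succ, List.cons_append]
    rw [hsplit2, Wf_cons, if_neg (by simp), List.nil_append, ← hsplit2, ih]
    have harith : c + stepVal false - (↑n + 1) = c - (↑(n + 1 + 1) : ℕ) := by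
      simp [stepVal]; push_cast; ring
    rw [harith]
    norm_num

lemma valleyLevels_explicit (e : ℕ) :
    valleyLevels (List.replicate (e + 2) true ++ [false, true] ++
        List.replicate (e + 2) false ++ [true, false]) = [(e : ℤ) + 1, 0] := by
  rw [valleyLevels_eq_Wf]
  have hP : List.replicate (e + 2) true ++ [false, true] ++
        List.replicate (e + 2) false ++ [true, false]
      = List.replicate (e + 2) true ++
        (false :: true :: (List.replicate (e + 2) false ++ (true :: [false]))) := by
    simp [List.append_assoc]
  rw [hP, Wf_replicate_true]
  rw [Wf_cons, if_pos ⟨rfl, rfl⟩]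
  have h1 : (0 : ℤ) + (↑(e + 2) : ℕ) + stepVal false = (e : ℤ) + 1 := by
    simp [stepVal]; push_cast; ring
  rw [h1]
  rw [show (true : Bool) :: (List.replicate (e + 2) false ++ (true :: [false]))
      = List.replicate 1 true ++ (List.replicate (e + 2) false ++ (true :: [false])) from rfl]
  rw [Wf_replicate_true]
  rw [show e + 2 = (e + 1) + 1 from rfl]
  rw [Wf_replicate_false_true]
  have h2 : (e : ℤ) + 1 + (↑(1:ℕ)) - (↑(e+1) + 1) = 0 := by push_cast; ring
  rw [h2]
  rw [show ((true : Bool) :: [false]) = true :: false :: ([] : List Bool) from rfl]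
  rw [Wf_cons, if_neg (by simp), List.nil_append, Wf_single]
  simp

lemma Hc_prefix (l1 l2 : List Bool) (k : ℕ) (h : k ≤ l1.length) :
    Hc (l1 ++ l2) k = Hc l1 k := by
  unfold Hc
  rw [List.take_append, Nat.sub_eq_zero_of_le h, List.take_zero, List.append_nil]

lemma Hc_append_long (l1 l2 : List Bool) (k : ℕ) :
    Hc (l1 ++ l2) (l1.length + k) = Hc l1 l1.length + Hc l2 k := by
  unfold Hc
  rw [List.take_append, List.take_of_length_le (by omega),
    Nat.add_sub_cancel_left, List.take_length]
  simp [List.count_append]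
  push_cast
  ring

lemma Hc_replicate_true (n k : ℕ) : Hc (List.replicate n true) k = min k n := by
  unfold Hc
  rw [List.take_replicate]
  simp [List.count_replicate]

lemma Hc_replicate_false (n k : ℕ) : Hc (List.replicate n false) k = -(min k n : ℤ) := by
  unfold Hc
  rw [List.take_replicate]
  simp [List.count_replicate]

lemma Hc_fb (k : ℕ) : Hc [false, true] k = if k = 0 then 0 else if k = 1 then -1 else 0 := by
  match k with
  | 0 => decide
  | 1 => decide
  | (k+2) =>
    unfold Hc
    rw [List.take_of_length_le (by simp), if_neg (by omega), if_neg (by omega)]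
    decide

lemma Hc_tf (k : ℕ) : Hc [true, false] k = if k = 0 then 0 else if k = 1 then 1 else 0 := by
  match k with
  | 0 => decide
  | 1 => decide
  | (k+2) =>
    unfold Hc
    rw [List.take_of_length_le (by simp), if_neg (by omega), if_neg (by omega)]
    decide

lemma Hc_explicit_nonneg (e : ℕ) (k : ℕ) :
    0 ≤ Hc (List.replicate (e + 2) true ++ ([false, true] ++
        (List.replicate (e + 2) false ++ [true, false]))) k := by
  set A := List.replicate (e + 2) true with hA
  set B := ([false, true] : List Bool) with hB
  set C := List.replicate (e + 2) false with hC
  set D := ([true, false] : List Bool) with hD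
  have hAlen : A.length = e + 2 := by simp [hA]
  have hBlen : B.length = 2 := by simp [hB]
  have hClen : C.length = e + 2 := by simp [hC]
  rcases le_or_gt k (e + 2) with hk | hk
  · rw [Hc_prefix _ _ k (by omega), hA, Hc_replicate_true]
    omega
  · obtain ⟨k1, rfl⟩ : ∃ k1, k = (e + 2) + k1 := ⟨k - (e+2), by omega⟩
    rw [show (e+2) + k1 = A.length + k1 by omega, Hc_append_long]
    have hHA : Hc A A.length = e + 2 := by
      rw [hA, Hc_replicate_true]; simp [hA]
    rw [hHA]
    rcases le_or_gt k1 2 with hk1 | hk1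
    · rw [Hc_prefix _ _ k1 (by omega), hB, Hc_fb]
      split_ifs <;> omega
    · obtain ⟨k2, rfl⟩ : ∃ k2, k1 = 2 + k2 := ⟨k1 - 2, by omega⟩
      rw [show 2 + k2 = B.length + k2 by omega, Hc_append_long]
      have hHB : Hc B B.length = 0 := by rw [hBlen, hB, Hc_fb]; simp
      rw [hHB]
      rcases le_or_gt k2 (e + 2) with hk2 | hk2
      · rw [Hc_prefix _ _ k2 (by omega), hC, Hc_replicate_false]
        omega
      · obtain ⟨k3, rfl⟩ : ∃ k3, k2 = (e + 2) + k3 := ⟨k2 - (e+2), by omega⟩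
        rw [show (e+2) + k3 = C.length + k3 by omega, Hc_append_long]
        have hHC : Hc C C.length = -((e : ℤ) + 2) := by
          rw [hC, Hc_replicate_false]; simp [hC]
        rw [hHC, Hc_tf]
        split_ifs <;> push_cast <;> omega

/-- The shortest Dyck path violating the `d`-restriction (`d < 0`, `e = |d|`)
is `U^{e+2} D U D^{e+2} U D`, of semi-length `e + 4`; consequently every Dyck
path of semi-length at most `e + 3` is a `d`-Dyck path. -/
theorem shortest_non_dDyck (d : ℤ) (hd : d < 0) (e : ℕ) (he : (e : ℤ) = |d|) :
    (IsDyck (List.replicate (e + 2) true ++ [false, true] ++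
        List.replicate (e + 2) false ++ [true, false]) ∧
      semilength (List.replicate (e + 2) true ++ [false, true] ++
        List.replicate (e + 2) false ++ [true, false]) = e + 4 ∧
      ¬ RestrictedD d (List.replicate (e + 2) true ++ [false, true] ++
        List.replicate (e + 2) false ++ [true, false])) ∧
    (∀ p : List Bool, IsDyck p → ¬ RestrictedD d p → e + 4 ≤ semilength p) ∧
    (∀ p : List Bool, IsDyck p → semilength p ≤ e + 3 → RestrictedD d p) := by
  have hde : d = -(e : ℤ) := by
    rw [abs_of_neg hd] at he; omega
  refine ⟨⟨⟨?_, ?_⟩, ?_, ?_⟩, ?_, ?_⟩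
  · simp [List.count_append, List.count_replicate]
  · intro h hmem
    have hassoc : List.replicate (e + 2) true ++ [false, true] ++
        List.replicate (e + 2) false ++ [true, false]
        = List.replicate (e + 2) true ++ ([false, true] ++
        (List.replicate (e + 2) false ++ [true, false])) := by
      simp [List.append_assoc]
    rw [hassoc] at hmem
    obtain ⟨k, hk, rfl⟩ := List.mem_iff_getElem.1 hmem
    rw [heights_getElem _ k hk]
    exact Hc_explicit_nonneg e k
  · simp [semilength, List.count_append, List.count_replicate]
  · intro hch
    rw [RestrictedD, valleyLevels_explicit e] at hch
    simp only [List.Chain', List.isChain_cons_cons] at hch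
    have := hch.1
    omega
  · exact fun p hp hr => key_bound hde hp hr
  · intro p hp hsl
    by_contra hr
    have := key_bound hde hp hr
    omega
end

section
/- For d ≥ 0, the number of d-Dyck paths of semi-length n having exactly k peaks equals binom(n + k − d(k−2) − 2, 2(k−1)). -/
/-- `peakCount d n k` = number of `d`-Dyck paths of semi-length `n` with exactly `k` peaks. -/
noncomputable def peakCount (d : ℤ) (n k : ℕ) : ℕ :=
  {p : List Bool | IsDyck p ∧ semilength p = n ∧ RestrictedD d p ∧ peaks p = k}.ncard

namespace DyckAux

/-- recursive version of "all heights ≥ 0" starting at `h` -/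
def okH : ℤ → List Bool → Prop
  | h, [] => 0 ≤ h
  | h, b :: t => 0 ≤ h ∧ okH (h + stepVal b) t

@[simp] lemma okH_nil (h : ℤ) : okH h [] ↔ 0 ≤ h := Iff.rfl
@[simp] lemma okH_cons (h : ℤ) (b t) : okH h (b :: t) ↔ 0 ≤ h ∧ okH (h + stepVal b) t := Iff.rfl

lemma okH_nonneg {h : ℤ} {p : List Bool} (hp : okH h p) : 0 ≤ h := by
  cases p with
  | nil => exact hp
  | cons b t => exact hp.1

lemma scanl_ok (p : List Bool) (h : ℤ) :
    (∀ x ∈ p.scanl (fun h b => h + stepVal b) h, 0 ≤ x) ↔ okH h p := by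
  induction p generalizing h with
  | nil => simp [okH]
  | cons b t ih => simp [List.scanl_cons, okH, ih]

lemma heights_ok (p : List Bool) : (∀ x ∈ heights p, 0 ≤ x) ↔ okH 0 p := scanl_ok p 0


def pks : List Bool → ℕ
  | x :: y :: t => (if x = true ∧ y = false then 1 else 0) + pks (y :: t)
  | _ => 0

@[simp] lemma pks_nil : pks [] = 0 := rfl
@[simp] lemma pks_single (x : Bool) : pks [x] = 0 := rfl
@[simp] lemma pks_cons2 (x y t) :
    pks (x :: y :: t) = (if x = true ∧ y = false then 1 else 0) + pks (y :: t) := rfl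

def vl : ℤ → List Bool → List ℤ
  | h, x :: y :: t =>
      (if x = false ∧ y = true then [h + stepVal x] else []) ++ vl (h + stepVal x) (y :: t)
  | _, _ => []

@[simp] lemma vl_nil (h : ℤ) : vl h [] = [] := rfl
@[simp] lemma vl_single (h : ℤ) (x) : vl h [x] = [] := rfl
@[simp] lemma vl_cons2 (h : ℤ) (x y t) :
    vl h (x :: y :: t) =
      (if x = false ∧ y = true then [h + stepVal x] else []) ++ vl (h + stepVal x) (y :: t) := rfl

lemma peaks_eq : ∀ p, peaks p = pks p
  | [] => rfl
  | [x] => rfl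
  | x :: y :: t => by
      have := peaks_eq (y :: t)
      simp only [peaks, List.tail_cons, List.zip_cons_cons, List.countP_cons] at *
      rw [this]
      cases x <;> cases y <;> simp [Nat.add_comm]

lemma vl_eq_aux : ∀ (p : List Bool) (h : ℤ),
    ((p.zip p.tail).zip (p.scanl (fun h b => h + stepVal b) h).tail).filterMap
      (fun x => if x.1.1 = false ∧ x.1.2 = true then some x.2 else none) = vl h p
  | [], h => rfl
  | [x], h => rfl
  | x :: y :: t, h => by
      have := vl_eq_aux (y :: t) (h + stepVal x)
      simp only [List.singleton_append, List.tail_cons, List.zip_cons_cons, List.scanl_cons, List.filterMap_cons] at *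
      rw [this]
      cases x <;> cases y <;> simp

lemma valleyLevels_eq (p : List Bool) : valleyLevels p = vl 0 p := vl_eq_aux p 0


/-! ### block encodings -/

def enc : List (ℕ × ℕ) → List Bool
  | [] => []
  | (a, b) :: t => List.replicate a true ++ (List.replicate b false ++ enc t)

def Pos (l : List (ℕ × ℕ)) : Prop := ∀ x ∈ l, 1 ≤ x.1 ∧ 1 ≤ x.2

@[simp] lemma enc_nil : enc [] = [] := rfl
@[simp] lemma enc_cons (a b t) :
    enc ((a, b) :: t) = List.replicate a true ++ (List.replicate b false ++ enc t) := rfl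

lemma pos_cons {a b : ℕ} {t} (h : Pos ((a,b) :: t)) : 1 ≤ a ∧ 1 ≤ b ∧ Pos t :=
  ⟨(h _ List.mem_cons_self).1, (h _ List.mem_cons_self).2,
    fun x hx => h x (List.mem_cons_of_mem _ hx)⟩

lemma enc_head {a b : ℕ} {t} (ha : 1 ≤ a) :
    ∃ u, enc ((a,b) :: t) = true :: u := by
  cases a with
  | zero => omega
  | succ a => exact ⟨_, rfl⟩

/-! replicate-run lemmas -/

lemma pks_repl_true : ∀ (a : ℕ) (q : List Bool),
    pks (List.replicate (a+1) true ++ (false :: q)) = 1 + pks (false :: q)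
  | 0, q => by simp
  | a+1, q => by
      have ih := pks_repl_true a q
      rw [List.replicate_succ, List.cons_append] at ih
      rw [List.replicate_succ, List.cons_append, List.replicate_succ, List.cons_append,
        pks_cons2, ih]
      simp

lemma pks_repl_false : ∀ (b : ℕ) (q : List Bool),
    pks (List.replicate b false ++ q) = pks q
  | 0, q => by simp
  | b+1, q => by
      have ih := pks_repl_false b q
      rw [List.replicate_succ, List.cons_append]
      rcases hb : List.replicate b false ++ q with _ | ⟨y, t⟩
      · rw [List.append_eq_nil_iff] at hb
        simp [hb.2]
      · have h0 : (if false = true ∧ y = false then 1 else 0) = 0 := by simp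
        rw [pks_cons2, h0, ← hb, ih, Nat.zero_add]

lemma okH_repl_true : ∀ (a : ℕ) (h : ℤ) (q : List Bool),
    okH h (List.replicate a true ++ q) ↔ 0 ≤ h ∧ okH (h + a) q
  | 0, h, q => by
      simp only [List.replicate_zero, List.nil_append, Nat.cast_zero, add_zero]
      exact ⟨fun hq => ⟨okH_nonneg hq, hq⟩, fun hq => hq.2⟩
  | a+1, h, q => by
      rw [List.replicate_succ, List.cons_append, okH_cons, okH_repl_true a _ q]
      have e : h + stepVal true + (a:ℤ) = h + ((a+1 : ℕ) : ℤ) := by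
        simp [stepVal]; push_cast; ring
      rw [e]
      constructor
      · rintro ⟨h1, _, h3⟩; exact ⟨h1, h3⟩
      · rintro ⟨h1, h3⟩
        exact ⟨h1, by simp [stepVal]; omega, h3⟩

lemma okH_repl_false : ∀ (b : ℕ) (h : ℤ) (q : List Bool),
    okH h (List.replicate b false ++ q) ↔ okH (h - b) q
  | 0, h, q => by simp
  | b+1, h, q => by
      rw [List.replicate_succ, List.cons_append, okH_cons, okH_repl_false b _ q]
      have harith : h + stepVal false - b = h - (b+1 : ℕ) := by simp [stepVal]; push_cast; ring
      rw [harith]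
      constructor
      · rintro ⟨_, h2⟩; exact h2
      · intro h2
        refine ⟨?_, h2⟩
        have := okH_nonneg h2
        push_cast at this ⊢
        omega

lemma vl_repl_true : ∀ (a : ℕ) (h : ℤ) (q : List Bool),
    vl h (List.replicate a true ++ q) = vl (h + a) q
  | 0, h, q => by simp
  | a+1, h, q => by
      rw [List.replicate_succ, List.cons_append]
      rcases hb : List.replicate a true ++ q with _ | ⟨y, t⟩
      · rw [List.append_eq_nil_iff] at hb
        simp [hb.2]
      · rw [vl_cons2, ← hb, vl_repl_true a _ q]
        have : ¬ (true = false ∧ y = true) := by simp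
        rw [if_neg this]
        simp only [List.nil_append]
        congr 1
        simp [stepVal]; push_cast; ring

lemma vl_repl_false_nil : ∀ (b : ℕ) (h : ℤ), vl h (List.replicate b false) = []
  | 0, h => by simp
  | b+1, h => by
      rw [List.replicate_succ]
      rcases hb : List.replicate b false with _ | ⟨y, t⟩
      · simp [hb]
      · have hy : y = false := by
          have := List.eq_of_mem_replicate (hb ▸ (List.mem_cons_self : y ∈ y :: t))
          exact this
        rw [vl_cons2, ← hb, vl_repl_false_nil b]
        simp [hy]

lemma vl_repl_false_true : ∀ (b : ℕ) (h : ℤ) (q : List Bool),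
    vl h (List.replicate (b+1) false ++ (true :: q)) =
      (h - (b+1 : ℕ)) :: vl (h - (b+1 : ℕ)) (true :: q)
  | 0, h, q => by
      simp only [List.replicate_succ, List.replicate_zero, List.cons_append, List.nil_append,
        vl_cons2]
      norm_num [stepVal, sub_eq_add_neg]
  | b+1, h, q => by
      have ih := vl_repl_false_true b (h + stepVal false) q
      rw [List.replicate_succ (n := b+1), List.cons_append]
      rcases hb : List.replicate (b+1) false ++ (true :: q) with _ | ⟨y, t⟩
      · simp at hb
      · have hy : y = false := by
          rw [List.replicate_succ, List.cons_append] at hb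
          exact ((List.cons.injEq ..).mp hb).1.symm
        rw [vl_cons2, ← hb, ih]
        have : ¬ (false = false ∧ y = true) := by simp [hy]
        rw [if_neg this]
        simp only [List.nil_append]
        have harith : h + stepVal false - (b+1 : ℕ) = h - (b+1+1 : ℕ) := by
          simp [stepVal]; push_cast; ring
        rw [harith]


/-! ### block-level conditions -/

def okB : ℤ → List (ℕ × ℕ) → Prop
  | v, [] => 0 ≤ v
  | v, (a, b) :: t => 0 ≤ v ∧ okB (v + a - b) t

@[simp] lemma okB_nil (v : ℤ) : okB v [] ↔ 0 ≤ v := Iff.rfl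
@[simp] lemma okB_cons (v : ℤ) (a b t) :
    okB v ((a, b) :: t) ↔ 0 ≤ v ∧ okB (v + a - b) t := Iff.rfl

lemma okB_nonneg {v : ℤ} {l} (h : okB v l) : 0 ≤ v := by
  cases l with
  | nil => exact h
  | cons x t => exact (by cases x; exact h.1)

def vlB : ℤ → List (ℕ × ℕ) → List ℤ
  | _, [] => []
  | _, [_] => []
  | v, (a, b) :: t => (v + a - b) :: vlB (v + a - b) t

@[simp] lemma vlB_nil (v : ℤ) : vlB v [] = [] := rfl
@[simp] lemma vlB_single (v : ℤ) (x) : vlB v [x] = [] := rfl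
@[simp] lemma vlB_cons2 (v : ℤ) (a b x t) :
    vlB v ((a, b) :: x :: t) = (v + a - b) :: vlB (v + a - b) (x :: t) := rfl

def sfst (l : List (ℕ × ℕ)) : ℕ := (l.map Prod.fst).sum
def ssnd (l : List (ℕ × ℕ)) : ℕ := (l.map Prod.snd).sum

@[simp] lemma sfst_nil : sfst [] = 0 := rfl
@[simp] lemma sfst_cons (a b t) : sfst ((a,b) :: t) = a + sfst t := rfl
@[simp] lemma ssnd_nil : ssnd [] = 0 := rfl
@[simp] lemma ssnd_cons (a b t) : ssnd ((a,b) :: t) = b + ssnd t := rfl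

lemma count_enc_true : ∀ l, (enc l).count true = sfst l
  | [] => rfl
  | (a, b) :: t => by
      rw [enc_cons, List.count_append, List.count_append, count_enc_true t]
      simp [List.count_replicate, sfst]

lemma count_enc_false : ∀ l, (enc l).count false = ssnd l
  | [] => rfl
  | (a, b) :: t => by
      rw [enc_cons, List.count_append, List.count_append, count_enc_false t]
      simp [List.count_replicate, ssnd]

lemma pks_enc : ∀ l, Pos l → pks (enc l) = l.length
  | [], _ => rfl
  | (a, b) :: t, hp => by
      obtain ⟨ha, hb, ht⟩ := pos_cons hp
      obtain ⟨a, rfl⟩ : ∃ a', a = a' + 1 := ⟨a - 1, by omega⟩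
      obtain ⟨b, rfl⟩ : ∃ b', b = b' + 1 := ⟨b - 1, by omega⟩
      rw [enc_cons, show List.replicate (b+1) false ++ enc t
            = false :: (List.replicate b false ++ enc t) from by
          rw [List.replicate_succ, List.cons_append],
        pks_repl_true, ← List.cons_append, ← List.replicate_succ, pks_repl_false,
        pks_enc t ht]
      simp [Nat.add_comm]

lemma okH_enc : ∀ l (h : ℤ), Pos l → (okH h (enc l) ↔ okB h l)
  | [], h, _ => Iff.rfl
  | (a, b) :: t, h, hp => by
      obtain ⟨ha, hb, ht⟩ := pos_cons hp
      rw [enc_cons, okH_repl_true, okH_repl_false, okH_enc t _ ht, okB_cons]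

lemma vlB_enc : ∀ l (h : ℤ), Pos l → vl h (enc l) = vlB h l
  | [], h, _ => rfl
  | [(a, b)], h, hp => by
      rw [enc_cons, vl_repl_true, enc_nil, List.append_nil, vl_repl_false_nil, vlB_single]
  | (a, b) :: (a', b') :: t, h, hp => by
      obtain ⟨ha, hb, ht⟩ := pos_cons hp
      obtain ⟨ha', hb', ht'⟩ := pos_cons ht
      obtain ⟨u, hu⟩ := enc_head (t := t) (b := b') ha'
      obtain ⟨b, rfl⟩ : ∃ b'', b = b'' + 1 := ⟨b - 1, by omega⟩
      rw [enc_cons, vl_repl_true, hu, vl_repl_false_true, ← hu, vlB_enc ((a',b') :: t) _ ht,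
        vlB_cons2]

/-- signed sum of blocks -/
def svB (l : List (ℕ × ℕ)) : ℤ := (l.map (fun x => (x.1 : ℤ) - x.2)).sum

@[simp] lemma svB_nil : svB [] = 0 := rfl
@[simp] lemma svB_cons (a b t) : svB ((a,b) :: t) = (a : ℤ) - b + svB t := rfl

lemma svB_eq (l : List (ℕ × ℕ)) : svB l = (sfst l : ℤ) - ssnd l := by
  induction l with
  | nil => simp
  | cons x t ih => cases x; simp [ih]; push_cast; ring


/-! ### structure of Dyck words -/

def sv (p : List Bool) : ℤ := (p.map stepVal).sum

@[simp] lemma sv_nil : sv [] = 0 := rfl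
@[simp] lemma sv_cons (b t) : sv (b :: t) = stepVal b + sv t := rfl

lemma sv_counts (p : List Bool) : sv p = (p.count true : ℤ) - p.count false := by
  induction p with
  | nil => simp
  | cons b t ih =>
      cases b <;> simp [stepVal, ih, List.count_cons] <;> push_cast <;> ring

lemma okH_concat : ∀ (xs : List Bool) (h : ℤ) (b : Bool), okH h (xs ++ [b]) → 0 ≤ h + sv xs
  | [], h, b, hk => by simpa using hk.1
  | x :: xs, h, b, hk => by
      have := okH_concat xs (h + stepVal x) b hk.2
      simp only [sv_cons]
      omega

lemma head_eq_true {p : List Bool} (hp : okH 0 p) (hne : p ≠ []) : ∃ t, p = true :: t := by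
  rcases p with _ | ⟨b, t⟩
  · exact absurd rfl hne
  · cases b
    · have := okH_nonneg hp.2
      simp [stepVal] at this
    · exact ⟨t, rfl⟩

lemma getLast?_eq_false {p : List Bool} (hp : okH 0 p) (hne : p ≠ [])
    (hc : p.count true = p.count false) : p.getLast? = some false := by
  have hd : p = p.dropLast ++ [p.getLast hne] := (List.dropLast_append_getLast hne).symm
  cases hlast : p.getLast hne with
  | false => rw [List.getLast?_eq_getLast hne, hlast]
  | true =>
    exfalso
    rw [hlast] at hd
    have h1 := okH_concat p.dropLast 0 true (by rw [← hd]; exact hp)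
    have h2 : sv p = 0 := by rw [sv_counts, hc]; ring
    rw [hd] at h2
    have h3 : sv (p.dropLast ++ [true]) = sv p.dropLast + 1 := by
      simp [sv, stepVal]
    omega

lemma dropWhile_head_false : ∀ (q : Bool → Bool) (l : List Bool) (x : Bool) (t : List Bool),
    l.dropWhile q = x :: t → q x = false
  | q, [], x, t => by simp
  | q, b :: l, x, t => by
      intro h
      rw [List.dropWhile_cons] at h
      by_cases hb : q b = true
      · rw [if_pos hb] at h
        exact dropWhile_head_false q l x t h
      · rw [if_neg hb] at h
        cases h
        simpa using hb

lemma decomp_aux : ∀ (N : ℕ) (p : List Bool), p.length ≤ N → p.head? = some true →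
    p.getLast? = some false → ∃ l, Pos l ∧ p = enc l := by
  intro N
  induction N with
  | zero =>
      intro p hlen hh _
      rcases p with _|⟨b,t⟩
      · simp at hh
      · simp at hlen
  | succ N ih =>
      intro p hlen hh hl
      set a := (p.takeWhile (fun x => x)).length with ha
      set r := p.dropWhile (fun x => x) with hr
      have hsplit : p.takeWhile (fun x => x) ++ r = p := List.takeWhile_append_dropWhile
      have htw : p.takeWhile (fun x => x) = List.replicate a true := by
        rw [List.eq_replicate_iff]
        exact ⟨rfl, fun b hb => by simpa using List.mem_takeWhile_imp hb⟩
      have hp_eq : p = List.replicate a true ++ r := by rw [← hsplit, htw]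
      have ha1 : 1 ≤ a := by
        rcases p with _|⟨b,t⟩
        · simp at hh
        · have hb : b = true := by simpa using hh
          subst hb
          rw [ha, List.takeWhile_cons]
          simp
      rcases hrr : r with _|⟨y, rt⟩
      · exfalso
        rw [hrr, List.append_nil] at hp_eq
        rw [hp_eq, List.getLast?_replicate] at hl
        simp only [ite_eq_iff] at hl
        rcases hl with ⟨_, h⟩ | ⟨_, h⟩
        · simp at h
        · simp at h
      · have hy : y = false := by simpa using dropWhile_head_false _ p y rt hrr
        subst hy
        -- second run
        set b := (r.takeWhile (fun x => !x)).length with hbdef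
        set q := r.dropWhile (fun x => !x) with hq
        have hsplit2 : r.takeWhile (fun x => !x) ++ q = r := List.takeWhile_append_dropWhile
        have htw2 : r.takeWhile (fun x => !x) = List.replicate b false := by
          rw [List.eq_replicate_iff]
          exact ⟨rfl, fun c hc => by simpa using List.mem_takeWhile_imp hc⟩
        have hr_eq : r = List.replicate b false ++ q := by rw [← hsplit2, htw2]
        have hb1 : 1 ≤ b := by
          rw [hrr] at hbdef
          simp [List.takeWhile_cons] at hbdef
          omega
        have hp2 : p = List.replicate a true ++ (List.replicate b false ++ q) := by
          rw [hp_eq, hr_eq]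
        rcases hqq : q with _|⟨z, qt⟩
        · refine ⟨[(a, b)], ?_, ?_⟩
          · intro x hx; simp at hx; subst hx; exact ⟨ha1, hb1⟩
          · rw [enc_cons, enc_nil, List.append_nil, hp2, hqq, List.append_nil]
        · have hz : z = true := by
            have := dropWhile_head_false _ r z qt (hq.symm.trans hqq).symm.symm
            simpa using this
          subst hz
          have hqlast : q.getLast? = some false := by
            have hne' : (true :: qt : List Bool) ≠ [] := by simp
            have : p.getLast? = q.getLast? := by
              rw [hp2, hqq, List.getLast?_append, List.getLast?_append,
                List.getLast?_eq_getLast hne']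
              rfl
            rw [← this, hl]
          have hqlen : q.length ≤ N := by
            have : p.length = a + b + q.length := by
              rw [hp2]; simp [List.length_append]; omega
            omega
          obtain ⟨l, hlpos, hlq⟩ := ih q hqlen (by rw [hqq]; rfl) hqlast
          refine ⟨(a, b) :: l, ?_, ?_⟩
          · intro x hx
            rcases List.mem_cons.mp hx with rfl | hx
            · exact ⟨ha1, hb1⟩
            · exact hlpos x hx
          · rw [enc_cons, ← hlq, ← hp2]

lemma decomp {p : List Bool} (hok : okH 0 p) (hne : p ≠ [])
    (hc : p.count true = p.count false) : ∃ l, Pos l ∧ p = enc l := by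
  obtain ⟨t, ht⟩ := head_eq_true hok hne
  exact decomp_aux p.length p le_rfl (by rw [ht]; rfl) (getLast?_eq_false hok hne hc)


/-! ### injectivity of enc -/

lemma peel : ∀ (c : Bool) (a a' : ℕ) (u u' : List Bool), u.head? ≠ some c → u'.head? ≠ some c →
    List.replicate a c ++ u = List.replicate a' c ++ u' → a = a' ∧ u = u'
  | c, 0, 0, u, u', _, _, h => ⟨rfl, by simpa using h⟩
  | c, 0, a'+1, u, u', hu, _, h => by
      exfalso
      simp only [List.replicate_zero, List.nil_append, List.replicate_succ,
        List.cons_append] at h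
      exact hu (by rw [h]; rfl)
  | c, a+1, 0, u, u', _, hu', h => by
      exfalso
      simp only [List.replicate_zero, List.nil_append, List.replicate_succ,
        List.cons_append] at h
      exact hu' (by rw [← h]; rfl)
  | c, a+1, a'+1, u, u', hu, hu', h => by
      rw [List.replicate_succ, List.replicate_succ, List.cons_append, List.cons_append] at h
      obtain ⟨rfl, hu⟩ := peel c a a' u u' hu hu' (by exact (List.cons.injEq .. ▸ h).2)
      exact ⟨rfl, hu⟩

lemma enc_ne_nil {a b : ℕ} {t} (ha : 1 ≤ a) : enc ((a,b) :: t) ≠ [] := by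
  obtain ⟨u, hu⟩ := enc_head (t := t) (b := b) ha
  rw [hu]
  simp

lemma enc_inj : ∀ (l1 : List (ℕ × ℕ)), Pos l1 → ∀ (l2 : List (ℕ × ℕ)), Pos l2 →
    enc l1 = enc l2 → l1 = l2
  | [], _, [], _, _ => rfl
  | [], _, (a,b) :: t, h2, he => absurd he.symm (enc_ne_nil (pos_cons h2).1)
  | (a,b) :: t, h1, [], _, he => absurd he (enc_ne_nil (pos_cons h1).1)
  | (a,b) :: t, h1, (a',b') :: t', h2, he => by
      obtain ⟨ha, hb, ht⟩ := pos_cons h1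
      obtain ⟨ha', hb', ht'⟩ := pos_cons h2
      rw [enc_cons, enc_cons] at he
      have hfh : ∀ (b : ℕ) (t : List (ℕ×ℕ)), 1 ≤ b →
          (List.replicate b false ++ enc t).head? ≠ some true := by
        intro b t hb
        obtain ⟨b, rfl⟩ : ∃ b'', b = b'' + 1 := ⟨b - 1, by omega⟩
        rw [List.replicate_succ, List.cons_append]
        simp
      obtain ⟨rfl, he2⟩ := peel true a a' _ _ (hfh b t hb) (hfh b' t' hb') he
      have hfh2 : ∀ (t : List (ℕ×ℕ)), Pos t → (enc t).head? ≠ some false := by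
        intro t ht
        rcases t with _ | ⟨⟨x, y⟩, t⟩
        · simp
        · obtain ⟨u, hu⟩ := enc_head (t := t) (b := y) (pos_cons ht).1
          rw [hu]
          simp
      obtain ⟨rfl, he3⟩ := peel false b b' _ _ (hfh2 t ht) (hfh2 t' ht') he2
      rw [enc_inj t ht t' ht' he3]


/-! ### the parametrization -/

def goB (d : ℕ) : ℕ → List ℕ → List (ℕ × ℕ)
  | v, [f] => [(1 + f, v + 1 + f)]
  | v, e :: f :: r => (d + e + 1 + f, 1 + f) :: goB d (v + d + e) r
  | _, [] => []

@[simp] lemma goB_nil (d v) : goB d v [] = [] := rfl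
@[simp] lemma goB_single (d v f) : goB d v [f] = [(1 + f, v + 1 + f)] := rfl
@[simp] lemma goB_cons2 (d v e f r) :
    goB d v (e :: f :: r) = (d + e + 1 + f, 1 + f) :: goB d (v + d + e) r := rfl

def theta (d : ℕ) : List ℕ → List (ℕ × ℕ)
  | [f] => [(1 + f, 1 + f)]
  | e :: f :: r => (e + 1 + f, 1 + f) :: goB d e r
  | [] => []

@[simp] lemma theta_single (d f) : theta d [f] = [(1 + f, 1 + f)] := rfl
@[simp] lemma theta_cons2 (d e f r) :
    theta d (e :: f :: r) = (e + 1 + f, 1 + f) :: goB d e r := rfl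

lemma goB_ne_nil : ∀ (d v : ℕ) (r : List ℕ), r.length % 2 = 1 → goB d v r ≠ []
  | d, v, [], h => by simp at h
  | d, v, [f], _ => by simp
  | d, v, e :: f :: r, _ => by simp

lemma goB_pos : ∀ (d v : ℕ) (r : List ℕ), Pos (goB d v r)
  | d, v, [] => by intro x hx; simp at hx
  | d, v, [f] => by
      intro x hx
      simp only [goB_single, List.mem_singleton] at hx
      subst hx
      exact ⟨by change 1 ≤ 1 + f; omega, by change 1 ≤ v + 1 + f; omega⟩
  | d, v, e :: f :: r => by
      intro x hx
      rw [goB_cons2, List.mem_cons] at hx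
      rcases hx with rfl | hx
      · exact ⟨by change 1 ≤ d + e + 1 + f; omega, by change 1 ≤ 1 + f; omega⟩
      · exact goB_pos d (v + d + e) r x hx

lemma goB_length : ∀ (d v : ℕ) (r : List ℕ), r.length % 2 = 1 →
    (goB d v r).length = (r.length + 1) / 2
  | d, v, [], h => by simp at h
  | d, v, [f], _ => by simp
  | d, v, e :: f :: r, h => by
      simp only [List.length_cons] at h ⊢
      rw [goB_cons2, List.length_cons, goB_length d (v + d + e) r (by omega)]
      omega

lemma goB_sfst : ∀ (d v : ℕ) (r : List ℕ), r.length % 2 = 1 →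
    sfst (goB d v r) = r.sum + (r.length + 1) / 2 + d * ((r.length + 1) / 2 - 1)
  | d, v, [], h => by simp at h
  | d, v, [f], _ => by simp only [goB_single, sfst_cons, sfst_nil, List.sum_cons, List.sum_nil, List.length_cons, List.length_nil]; omega
  | d, v, e :: f :: r, h => by
      simp only [List.length_cons] at h ⊢
      rw [goB_cons2, sfst_cons, goB_sfst d (v + d + e) r (by omega)]
      have h1 : 1 ≤ (r.length + 1) / 2 := by omega
      have h2 : (r.length + 1 + 1 + 1) / 2 = (r.length + 1) / 2 + 1 := by omega
      rw [h2]
      simp only [List.sum_cons]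
      have h3 : (r.length + 1) / 2 - 1 + 1 = (r.length + 1) / 2 := by omega
      set P := d * ((r.length + 1) / 2 - 1) with hP
      have h4 : d * ((r.length + 1) / 2 + 1 - 1) = P + d := by
        rw [hP]; have : (r.length + 1) / 2 + 1 - 1 = ((r.length + 1) / 2 - 1) + 1 := by omega
        rw [this]; ring
      omega

lemma goB_svB : ∀ (d v : ℕ) (r : List ℕ), r.length % 2 = 1 → svB (goB d v r) = -(v : ℤ)
  | d, v, [], h => by simp at h
  | d, v, [f], _ => by
      simp only [goB_single, svB_cons, svB_nil]
      push_cast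
      ring
  | d, v, e :: f :: r, h => by
      simp only [List.length_cons] at h
      rw [goB_cons2, svB_cons, goB_svB d (v + d + e) r (by omega)]
      push_cast
      ring

lemma goB_okB : ∀ (d v : ℕ) (r : List ℕ), okB (v : ℤ) (goB d v r)
  | d, v, [] => by simp
  | d, v, [f] => by
      refine ⟨by positivity, ?_⟩
      simp only [okB_nil]
      push_cast
      omega
  | d, v, e :: f :: r => by
      refine ⟨by positivity, ?_⟩
      have := goB_okB d (v + d + e) r
      have harith : (v : ℤ) + (d + e + 1 + f : ℕ) - (1 + f : ℕ) = ((v + d + e : ℕ) : ℤ) := by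
        push_cast; ring
      rw [harith]
      exact this

lemma goB_chain : ∀ (d v : ℕ) (r : List ℕ), r.length % 2 = 1 →
    List.Chain' (fun a b => (d : ℤ) ≤ b - a) ((v : ℤ) :: vlB v (goB d v r))
  | d, v, [], h => by simp at h
  | d, v, [f], _ => by exact List.isChain_singleton _
  | d, v, e :: f :: r, h => by
      simp only [List.length_cons] at h
      have hr : r.length % 2 = 1 := by omega
      rw [goB_cons2]
      obtain ⟨x, t, hxt⟩ := List.exists_cons_of_ne_nil (goB_ne_nil d (v + d + e) r hr)
      rw [hxt, vlB_cons2]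
      have harith : (v : ℤ) + (d + e + 1 + f : ℕ) - (1 + f : ℕ) = ((v + d + e : ℕ) : ℤ) := by
        push_cast; ring
      rw [harith]
      refine List.IsChain.cons_cons (by push_cast; omega) ?_
      have := goB_chain d (v + d + e) r hr
      rwa [hxt] at this

lemma theta_pos : ∀ (d : ℕ) (ws : List ℕ), Pos (theta d ws)
  | d, [] => by intro x hx; simp [theta] at hx
  | d, [f] => by
      intro x hx
      simp only [theta_single, List.mem_singleton] at hx
      subst hx
      exact ⟨by change 1 ≤ 1 + f; omega, by change 1 ≤ 1 + f; omega⟩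
  | d, e :: f :: r => by
      intro x hx
      rw [theta_cons2, List.mem_cons] at hx
      rcases hx with rfl | hx
      · exact ⟨by change 1 ≤ e + 1 + f; omega, by change 1 ≤ 1 + f; omega⟩
      · exact goB_pos d e r x hx

lemma theta_length (d : ℕ) (ws : List ℕ) (h : ws.length % 2 = 1) :
    (theta d ws).length = (ws.length + 1) / 2 := by
  match ws with
  | [] => simp at h
  | [f] => simp
  | e :: f :: r =>
      simp only [List.length_cons] at h ⊢
      rw [theta_cons2, List.length_cons, goB_length d e r (by omega)]
      omega

lemma theta_sfst (d : ℕ) (ws : List ℕ) (h : ws.length % 2 = 1) :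
    sfst (theta d ws) = ws.sum + (ws.length + 1) / 2 + d * ((ws.length + 1) / 2 - 2) := by
  match ws with
  | [] => simp at h
  | [f] => simp only [theta_single, sfst_cons, sfst_nil, List.sum_cons, List.sum_nil, List.length_cons, List.length_nil]; omega
  | e :: f :: r =>
      simp only [List.length_cons] at h ⊢
      rw [theta_cons2, sfst_cons, goB_sfst d e r (by omega)]
      have h1 : 1 ≤ (r.length + 1) / 2 := by omega
      have h2 : (r.length + 1 + 1 + 1) / 2 = (r.length + 1) / 2 + 1 := by omega
      rw [h2]
      simp only [List.sum_cons]
      have h3 : (r.length + 1) / 2 + 1 - 2 = (r.length + 1) / 2 - 1 := by omega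
      rw [h3]
      set P := d * ((r.length + 1) / 2 - 1) with hP
      omega

lemma theta_svB (d : ℕ) (ws : List ℕ) (h : ws.length % 2 = 1) : svB (theta d ws) = 0 := by
  match ws with
  | [] => simp at h
  | [f] => simp
  | e :: f :: r =>
      simp only [List.length_cons] at h
      rw [theta_cons2, svB_cons, goB_svB d e r (by omega)]
      push_cast
      ring

lemma theta_okB (d : ℕ) (ws : List ℕ) (h : ws.length % 2 = 1) : okB 0 (theta d ws) := by
  match ws with
  | [] => simp at h
  | [f] => exact ⟨le_refl 0, by norm_num⟩
  | e :: f :: r =>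
      refine ⟨le_refl 0, ?_⟩
      have harith : (0 : ℤ) + (e + 1 + f : ℕ) - (1 + f : ℕ) = ((e : ℕ) : ℤ) := by
        push_cast; ring
      rw [harith]
      exact goB_okB d e r

lemma theta_chain (d : ℕ) (ws : List ℕ) (h : ws.length % 2 = 1) :
    List.Chain' (fun a b => (d : ℤ) ≤ b - a) (vlB 0 (theta d ws)) := by
  match ws with
  | [] => simp at h
  | [f] => exact List.isChain_nil
  | e :: f :: r =>
      simp only [List.length_cons] at h
      have hr : r.length % 2 = 1 := by omega
      rw [theta_cons2]
      obtain ⟨x, t, hxt⟩ := List.exists_cons_of_ne_nil (goB_ne_nil d e r hr)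
      rw [hxt, vlB_cons2]
      have harith : (0 : ℤ) + (e + 1 + f : ℕ) - (1 + f : ℕ) = ((e : ℕ) : ℤ) := by
        push_cast; ring
      rw [harith]
      have := goB_chain d e r hr
      rwa [hxt] at this


/-! ### surjectivity and injectivity of the parametrization -/

lemma goB_surj (d : ℕ) : ∀ (t : List (ℕ × ℕ)) (v : ℕ), Pos t → t ≠ [] → okB (v : ℤ) t →
    svB t = -(v : ℤ) → List.Chain' (fun a b => (d : ℤ) ≤ b - a) ((v : ℤ) :: vlB v t) →
    ∃ r : List ℕ, r.length = 2 * t.length - 1 ∧ t = goB d v r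
  | [], v, _, hne, _, _, _ => absurd rfl hne
  | [(a, b)], v, hpos, _, hok, hsv, _ => by
      obtain ⟨ha, hb, _⟩ := pos_cons hpos
      have hsv' : (a : ℤ) - b = -(v : ℤ) := by simpa using hsv
      have hba : b = a + v := by omega
      refine ⟨[a - 1], by simp, ?_⟩
      rw [goB_single]
      have h1 : 1 + (a - 1) = a := by omega
      have h2 : v + 1 + (a - 1) = b := by omega
      rw [h1, h2]
  | (a, b) :: (a', b') :: t, v, hpos, _, hok, hsv, hch => by
      obtain ⟨ha, hb, hpos'⟩ := pos_cons hpos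
      rw [vlB_cons2] at hch
      have hrel : (d : ℤ) ≤ ((v : ℤ) + a - b) - v := (List.isChain_cons_cons.mp hch).1
      have hstep : b + d ≤ a := by omega
      set v' : ℕ := v + d + (a - (b + d)) with hv'
      have hv'cast : ((v' : ℕ) : ℤ) = (v : ℤ) + a - b := by
        rw [hv']; push_cast; omega
      have hok' : okB (v' : ℤ) ((a', b') :: t) := by
        rw [hv'cast]; exact hok.2
      have hsv'' : svB ((a', b') :: t) = -(v' : ℤ) := by
        have : (a : ℤ) - b + svB ((a', b') :: t) = -(v : ℤ) := by simpa using hsv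
        rw [hv'cast]; omega
      have hch' : List.Chain' (fun a b => (d : ℤ) ≤ b - a) ((v' : ℤ) :: vlB v' ((a', b') :: t)) := by
        rw [hv'cast]
        exact (List.isChain_cons_cons.mp hch).2
      obtain ⟨r, hrlen, hr⟩ := goB_surj d ((a', b') :: t) v' hpos' (by simp) hok' hsv'' hch'
      refine ⟨(a - (b + d)) :: (b - 1) :: r, by simp [hrlen]; omega, ?_⟩
      rw [goB_cons2, ← hv', ← hr]
      have h1 : d + (a - (b + d)) + 1 + (b - 1) = a := by omega
      have h2 : 1 + (b - 1) = b := by omega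
      rw [h1, h2]

lemma goB_inj (d : ℕ) : ∀ (r1 r2 : List ℕ) (v : ℕ), r1.length % 2 = 1 → r2.length % 2 = 1 →
    goB d v r1 = goB d v r2 → r1 = r2
  | [], _, _, h1, _, _ => by simp at h1
  | _ :: _, [], _, _, h2, _ => by simp at h2
  | [f], [f'], v, _, _, he => by
      simp only [goB_single, List.cons.injEq, Prod.mk.injEq] at he
      have : f = f' := by omega
      rw [this]
  | [f], e' :: f' :: r', v, _, h2, he => by
      exfalso
      simp only [List.length_cons] at h2
      rw [goB_single, goB_cons2] at he
      have h3 := congrArg List.length he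
      simp only [List.length_cons, List.length_singleton] at h3
      have := goB_ne_nil d (v + d + e') r' (by omega)
      rcases List.exists_cons_of_ne_nil this with ⟨x, t, hxt⟩
      rw [hxt] at h3
      simp at h3
  | e :: f :: r, [f'], v, h1, _, he => by
      exfalso
      simp only [List.length_cons] at h1
      rw [goB_single, goB_cons2] at he
      have h3 := congrArg List.length he
      simp only [List.length_cons, List.length_singleton] at h3
      have := goB_ne_nil d (v + d + e) r (by omega)
      rcases List.exists_cons_of_ne_nil this with ⟨x, t, hxt⟩
      rw [hxt] at h3
      simp at h3
  | e :: f :: r, e' :: f' :: r', v, h1, h2, he => by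
      simp only [List.length_cons] at h1 h2
      rw [goB_cons2, goB_cons2] at he
      simp only [List.cons.injEq, Prod.mk.injEq] at he
      obtain ⟨⟨hef, hff⟩, htail⟩ := he
      have hf : f = f' := by omega
      have hee : e = e' := by omega
      subst hf; subst hee
      rw [goB_inj d r r' (v + d + e) (by omega) (by omega) htail]

lemma theta_inj (d : ℕ) : ∀ (w1 w2 : List ℕ), w1.length % 2 = 1 → w2.length % 2 = 1 →
    theta d w1 = theta d w2 → w1 = w2
  | [], _, h1, _, _ => by simp at h1
  | _ :: _, [], _, h2, _ => by simp at h2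
  | [f], [f'], _, _, he => by
      simp only [theta_single, List.cons.injEq, Prod.mk.injEq] at he
      have : f = f' := by omega
      rw [this]
  | [f], e' :: f' :: r', _, h2, he => by
      exfalso
      simp only [List.length_cons] at h2
      rw [theta_single, theta_cons2] at he
      have h3 := congrArg List.length he
      simp only [List.length_cons, List.length_singleton] at h3
      have := goB_ne_nil d e' r' (by omega)
      rcases List.exists_cons_of_ne_nil this with ⟨x, t, hxt⟩
      rw [hxt] at h3
      simp at h3
  | e :: f :: r, [f'], h1, _, he => by
      exfalso
      simp only [List.length_cons] at h1
      rw [theta_single, theta_cons2] at he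
      have h3 := congrArg List.length he
      simp only [List.length_cons, List.length_singleton] at h3
      have := goB_ne_nil d e r (by omega)
      rcases List.exists_cons_of_ne_nil this with ⟨x, t, hxt⟩
      rw [hxt] at h3
      simp at h3
  | e :: f :: r, e' :: f' :: r', h1, h2, he => by
      simp only [List.length_cons] at h1 h2
      rw [theta_cons2, theta_cons2] at he
      simp only [List.cons.injEq, Prod.mk.injEq] at he
      obtain ⟨⟨hef, hff⟩, htail⟩ := he
      have hf : f = f' := by omega
      have hee : e = e' := by omega
      subst hf; subst hee
      rw [goB_inj d r r' e (by omega) (by omega) htail]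


/-! ### counting lists with given length and sum -/

def LS : ℕ → ℕ → Finset (List ℕ)
  | 0, m => if m = 0 then {[]} else ∅
  | L + 1, m => (Finset.range (m + 1)).biUnion
      (fun w => (LS L (m - w)).image (fun ws => w :: ws))

lemma mem_LS : ∀ (L m : ℕ) (ws : List ℕ), ws ∈ LS L m ↔ ws.length = L ∧ ws.sum = m
  | 0, m, ws => by
      rw [LS]
      constructor
      · intro h
        by_cases hm : m = 0
        · rw [if_pos hm] at h
          simp at h
          subst h
          simp [hm]
        · rw [if_neg hm] at h
          simp at h
      · rintro ⟨h1, h2⟩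
        rw [List.length_eq_zero_iff] at h1
        subst h1
        simp at h2
        simp [h2]
  | L + 1, m, ws => by
      rw [LS, Finset.mem_biUnion]
      constructor
      · rintro ⟨w, hw, hws⟩
        rw [Finset.mem_image] at hws
        obtain ⟨ws', hws', rfl⟩ := hws
        rw [mem_LS L (m - w) ws'] at hws'
        rw [Finset.mem_range] at hw
        refine ⟨by simp [hws'.1], ?_⟩
        simp [hws'.2]
        omega
      · rintro ⟨h1, h2⟩
        rcases ws with _ | ⟨w, ws⟩
        · simp at h1
        · refine ⟨w, ?_, ?_⟩
          · rw [Finset.mem_range]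
            simp at h2
            omega
          · rw [Finset.mem_image]
            refine ⟨ws, ?_, rfl⟩
            rw [mem_LS L (m - w) ws]
            simp at h1 h2
            exact ⟨h1, by omega⟩

lemma hockey (r : ℕ) : ∀ (m : ℕ), ∑ s ∈ Finset.range (m + 1), (s + r).choose s = (m + r + 1).choose m
  | 0 => by simp
  | m + 1 => by
      rw [Finset.sum_range_succ, hockey r m]
      have h1 : (m + 1 + r + 1).choose (m + 1) = (m + r + 1).choose m + (m + r + 1).choose (m + 1) := by
        have := Nat.choose_succ_succ' (m + r + 1) m
        rw [show m + 1 + r + 1 = m + r + 1 + 1 by ring, this]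
      rw [h1]
      congr 1
      congr 1
      omega

lemma card_LS : ∀ (L m : ℕ), (LS L m).card = (m + L - 1).choose m
  | 0, m => by
      rw [LS]
      by_cases hm : m = 0
      · subst hm; simp
      · rw [if_neg hm]
        simp
        rw [Nat.choose_eq_zero_of_lt (by omega)]
  | L + 1, m => by
      rw [LS, Finset.card_biUnion]
      · have him : ∀ w ∈ Finset.range (m + 1),
            ((LS L (m - w)).image (fun ws => w :: ws)).card = ((m - w) + L - 1).choose (m - w) := by
          intro w _
          rw [Finset.card_image_of_injective _ (fun a b h => by simpa using h), card_LS L (m - w)]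
        rw [Finset.sum_congr rfl him]
        have hre : ∑ w ∈ Finset.range (m + 1), ((m - w) + L - 1).choose (m - w)
            = ∑ s ∈ Finset.range (m + 1), (s + L - 1).choose s := by
          rw [← Finset.sum_range_reflect (fun s => (s + L - 1).choose s) (m + 1)]
          refine Finset.sum_congr rfl ?_
          intro i hi
          rw [Finset.mem_range] at hi
          congr 1 <;> omega
        rw [hre]
        rcases L with _ | L
        · have hsum : ∑ s ∈ Finset.range (m + 1), (s + 0 - 1).choose s = 1 := by
            rw [Finset.sum_eq_single 0]
            · rfl
            · intro s hs hs0
              rcases s with _ | s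
              · exact absurd rfl hs0
              · simp only [Nat.add_zero, Nat.succ_sub_one]
                exact Nat.choose_eq_zero_of_lt (by omega)
            · intro h
              exact absurd (Finset.mem_range.mpr (by omega)) h
          rw [hsum, show m + (0 + 1) - 1 = m from by omega, Nat.choose_self]
        · have h5 : ∀ s ∈ Finset.range (m + 1), (s + (L + 1) - 1).choose s = (s + L).choose s := by
            intro s _
            rfl
          rw [Finset.sum_congr rfl h5, hockey L m]
          congr 1
      · intro w1 h1 w2 h2 hne
        simp only [Finset.disjoint_left]
        intro ws hws1 hws2
        rw [Finset.mem_image] at hws1 hws2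
        obtain ⟨x1, _, he1⟩ := hws1
        obtain ⟨x2, _, he2⟩ := hws2
        apply hne
        rw [← he1] at he2
        exact (List.cons.injEq .. ▸ he2).1.symm ▸ rfl

end DyckAux

open DyckAux

/-- For `d ≥ 0`, the number of `d`-Dyck paths of semi-length `n` with exactly `k`
peaks is `C(n + k - d(k-2) - 2, 2(k-1))`. -/
theorem peak_count_formula (d : ℕ) (n k : ℕ) (hn : 1 ≤ n) (hk : 1 ≤ k) :
    peakCount (d : ℤ) n k =
      (((n : ℤ) + (k : ℤ) - (d : ℤ) * ((k : ℤ) - 2) - 2).toNat).choose (2 * (k - 1)) := by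
  classical
  set D : Set (List ℕ) := {ws | ws.length = 2 * k - 1 ∧ ws.sum + (k + d * (k - 2)) = n} with hD
  have hSD : {p : List Bool | IsDyck p ∧ semilength p = n ∧ RestrictedD (d : ℤ) p ∧ peaks p = k}
      = (fun ws => enc (theta d ws)) '' D := by
    ext p
    simp only [Set.mem_setOf_eq, Set.mem_image]
    constructor
    · rintro ⟨⟨hcnt, hhts⟩, hsem, hres, hpk⟩
      have hok : okH 0 p := (heights_ok p).mp hhts
      have hne : p ≠ [] := by
        intro h
        rw [h] at hsem
        simp [semilength] at hsem
        omega
      obtain ⟨l, hlpos, rfl⟩ := decomp hok hne hcnt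
      have hsf : sfst l = n := by rw [← count_enc_true l]; exact hsem
      have hsn : ssnd l = n := by rw [← count_enc_false l, ← hcnt]; exact hsem
      have hlen : l.length = k := by rw [← pks_enc l hlpos, ← peaks_eq]; exact hpk
      have hokB : okB 0 l := (okH_enc l 0 hlpos).mp hok
      have hch : List.Chain' (fun a b => (d : ℤ) ≤ b - a) (vlB 0 l) := by
        rw [← vlB_enc l 0 hlpos, ← valleyLevels_eq]
        exact hres
      have hsvl : svB l = 0 := by
        rw [svB_eq, hsf, hsn]
        ring
      rcases l with _ | ⟨⟨a, b⟩, t⟩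
      · simp at hlen; omega
      obtain ⟨ha, hb, htpos⟩ := pos_cons hlpos
      rcases t with _ | ⟨⟨a', b'⟩, t'⟩
      · -- one block : k = 1
        have hk1 : k = 1 := by simpa using hlen.symm
        have han : a = n := by simpa [sfst] using hsf
        have hbn : b = n := by simpa [ssnd] using hsn
        refine ⟨[n - 1], ⟨by simp [hk1], by simp [hk1]; omega⟩, ?_⟩
        rw [theta_single, show 1 + (n - 1) = n from by omega, han, hbn]
      · -- at least two blocks
        have hab : b ≤ a := by
          have h0 := okB_nonneg hokB.2
          omega
        set v : ℕ := a - b with hv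
        have hvcast : ((v : ℕ) : ℤ) = 0 + (a : ℤ) - b := by rw [hv]; push_cast; omega
        have hokt : okB (v : ℤ) ((a', b') :: t') := by rw [hvcast]; exact hokB.2
        have hsvt : svB ((a', b') :: t') = -(v : ℤ) := by
          have : (a : ℤ) - b + svB ((a', b') :: t') = 0 := by simpa using hsvl
          omega
        have hcht : List.Chain' (fun a b => (d : ℤ) ≤ b - a)
            ((v : ℤ) :: vlB (v : ℤ) ((a', b') :: t')) := by
          rw [hvcast]
          rwa [vlB_cons2] at hch
        obtain ⟨r, hrlen, hr⟩ := goB_surj d ((a', b') :: t') v htpos (by simp) hokt hsvt hcht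
        have hth : theta d (v :: (b - 1) :: r) = (a, b) :: (a', b') :: t' := by
          rw [theta_cons2, show v + 1 + (b - 1) = a from by omega,
            show 1 + (b - 1) = b from by omega, ← hr]
        have hwlen : (v :: (b - 1) :: r).length = 2 * k - 1 := by
          simp only [List.length_cons]
          simp only [List.length_cons] at hlen hrlen
          omega
        refine ⟨v :: (b - 1) :: r, ⟨hwlen, ?_⟩, by rw [hth]⟩
        have hodd : (v :: (b - 1) :: r).length % 2 = 1 := by rw [hwlen]; omega
        have h2 : ((v :: (b - 1) :: r).length + 1) / 2 = k := by rw [hwlen]; omega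
        have := theta_sfst d (v :: (b - 1) :: r) hodd
        rw [h2, hth, hsf] at this
        omega
    · rintro ⟨ws, ⟨hlen, hsum⟩, rfl⟩
      have hodd : ws.length % 2 = 1 := by omega
      have hk2 : (ws.length + 1) / 2 = k := by omega
      have hpos := theta_pos d ws
      have hsf : sfst (theta d ws) = n := by
        rw [theta_sfst d ws hodd, hk2]
        omega
      have hsv := theta_svB d ws hodd
      have hsn : ssnd (theta d ws) = n := by
        have h := svB_eq (theta d ws)
        rw [hsv, hsf] at h
        omega
      refine ⟨⟨?_, ?_⟩, ?_, ?_, ?_⟩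
      · rw [count_enc_true, count_enc_false, hsf, hsn]
      · exact (heights_ok _).mpr ((okH_enc _ 0 hpos).mpr (theta_okB d ws hodd))
      · show (enc (theta d ws)).count true = n
        rw [count_enc_true, hsf]
      · show List.Chain' _ (valleyLevels _)
        rw [valleyLevels_eq, vlB_enc _ 0 hpos]
        exact theta_chain d ws hodd
      · rw [peaks_eq, pks_enc _ hpos, theta_length d ws hodd, hk2]
  have hinj : Set.InjOn (fun ws => enc (theta d ws)) D := by
    intro w1 h1 w2 h2 he
    simp only [hD, Set.mem_setOf_eq] at h1 h2
    have hthe : theta d w1 = theta d w2 :=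
      enc_inj _ (theta_pos d w1) _ (theta_pos d w2) he
    exact theta_inj d w1 w2 (by omega) (by omega) hthe
  have hcard : peakCount (d : ℤ) n k = D.ncard := by
    rw [peakCount, hSD, Set.ncard_image_of_injOn hinj]
  rw [hcard]
  by_cases hcase : k + d * (k - 2) ≤ n
  · set m : ℕ := n - (k + d * (k - 2)) with hm
    have hDL : D = ↑(LS (2 * k - 1) m) := by
      ext ws
      rw [hD, Set.mem_setOf_eq, Finset.mem_coe, mem_LS]
      constructor
      · rintro ⟨h1, h2⟩; exact ⟨h1, by omega⟩
      · rintro ⟨h1, h2⟩; exact ⟨h1, by omega⟩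
    rw [hDL, Set.ncard_coe_finset, card_LS]
    rcases Nat.lt_or_ge k 2 with hk1 | hk2
    · have hk1 : k = 1 := by omega
      subst hk1
      rw [show 2 * (1 - 1) = 0 from rfl, Nat.choose_zero_right,
        show m + (2 * 1 - 1) - 1 = m from by omega, Nat.choose_self]
    · have hc : ((d * (k - 2) : ℕ) : ℤ) = (d : ℤ) * ((k : ℤ) - 2) := by
        push_cast [Nat.cast_sub (by omega : 2 ≤ k)]
        ring
      have htn : ((n : ℤ) + (k : ℤ) - (d : ℤ) * ((k : ℤ) - 2) - 2).toNat = m + 2 * k - 2 := by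
        rw [← hc]
        omega
      rw [htn]
      have h1 : m + (2 * k - 1) - 1 = m + 2 * k - 2 := by omega
      rw [h1]
      have h2 : 2 * (k - 1) ≤ m + 2 * k - 2 := by omega
      have h3 := Nat.choose_symm h2
      rw [show m + 2 * k - 2 - 2 * (k - 1) = m from by omega] at h3
      rw [h3]
  · have hDempty : D = ∅ := by
      ext ws
      rw [hD, Set.mem_setOf_eq]
      simp only [Set.mem_empty_iff_false, iff_false]
      rintro ⟨_, h2⟩
      omega
    rw [hDempty, Set.ncard_empty]
    have hk2 : 2 ≤ k := by
      by_contra h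
      have : k = 1 := by omega
      subst this
      simp at hcase
      omega
    have hc : ((d * (k - 2) : ℕ) : ℤ) = (d : ℤ) * ((k : ℤ) - 2) := by
      push_cast [Nat.cast_sub (by omega : 2 ≤ k)]
      ring
    rw [Nat.choose_eq_zero_of_lt]
    rw [← hc]
    omega
end

section
/- Let r(n) be the number of (−1)-Dyck paths of semi-length n and let q_n be the number of (−1)-Dyck paths of semi-length n with at least one valley whose last valley is at ground level. Then for n > 3, r(n) = 3·r(n−1) − r(n−2) + q_{n−2} + Σ_{i=2}^{n−3} q_i·(r(n−i−1) − r(n−i−2)), with r(1) = 1, r(2) = 2, r(3) = 5. -/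
/-- The path has no valleys, or its last valley is at ground level. -/
def NoValleyOrLastGround (p : List Bool) : Prop :=
  valleyLevels p = [] ∨ (valleyLevels p).getLast? = some 0

/-- `bCount n` = number of `(-1)`-Dyck paths of semi-length `n` having either
no valleys or last valley at ground level. -/
noncomputable def bCount (n : ℕ) : ℕ :=
  {p : List Bool | IsDyck p ∧ semilength p = n ∧ RestrictedD (-1) p ∧
    NoValleyOrLastGround p}.ncard

/-- `qCount n` = number of `(-1)`-Dyck paths of semi-length `n` having at least
one valley, with the last valley at ground level. -/
noncomputable def qCount (n : ℕ) : ℕ :=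
  {p : List Bool | IsDyck p ∧ semilength p = n ∧ RestrictedD (-1) p ∧
    (valleyLevels p).getLast? = some 0}.ncard

namespace Aux

def hsum (l : List Bool) : ℤ := (l.map stepVal).sum

@[simp] lemma hsum_nil : hsum [] = 0 := rfl
@[simp] lemma hsum_cons (a l) : hsum (a :: l) = stepVal a + hsum l := by
  simp [hsum]
@[simp] lemma hsum_append (l m) : hsum (l ++ m) = hsum l + hsum m := by
  simp [hsum]

lemma hsum_counts (l : List Bool) : hsum l = (l.count true : ℤ) - l.count false := by
  induction l with
  | nil => simp
  | cons a t ih => cases a <;> simp [ih, stepVal, List.count_cons] <;> ring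

lemma length_counts (l : List Bool) : l.length = l.count true + l.count false := by
  induction l with
  | nil => simp
  | cons a t ih =>
    cases a <;> simp only [List.count_cons, List.length_cons, ih] <;> simp <;> omega

lemma scanl_eq (p : List Bool) : ∀ a : ℤ,
    p.scanl (fun h b => h + stepVal b) a
      = (List.range (p.length + 1)).map (fun k => a + hsum (p.take k)) := by
  induction p with
  | nil => intro a; simp
  | cons b t ih =>
    intro a
    have : (b :: t).length + 1 = (t.length + 1) + 1 := by simp
    rw [this, List.range_succ_eq_map, List.scanl_cons, ih]
    simp only [List.map_cons, List.map_map, List.singleton_append]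
    congr 1
    · simp
    · apply List.map_congr_left
      intro k _
      simp only [Function.comp_apply, List.take_succ_cons, hsum_cons]
      ring

lemma mem_heights (p : List Bool) (x : ℤ) :
    x ∈ heights p ↔ ∃ k ≤ p.length, x = hsum (p.take k) := by
  rw [heights, scanl_eq]
  simp only [List.mem_map, List.mem_range]
  constructor
  · rintro ⟨k, hk, rfl⟩; exact ⟨k, by omega, by ring⟩
  · rintro ⟨k, hk, rfl⟩; exact ⟨k, by omega, by ring⟩

lemma isDyck_iff (p : List Bool) :
    IsDyck p ↔ hsum p = 0 ∧ ∀ k, 0 ≤ hsum (p.take k) := by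
  constructor
  · rintro ⟨hc, hh⟩
    have h0 : hsum p = 0 := by rw [hsum_counts, hc]; ring
    refine ⟨h0, fun k => ?_⟩
    rcases le_or_gt k p.length with h | h
    · exact hh _ ((mem_heights p _).2 ⟨k, h, rfl⟩)
    · rw [List.take_of_length_le (le_of_lt h), h0]
  · rintro ⟨h0, hk⟩
    constructor
    · have := hsum_counts p; omega
    · intro h hh
      rcases (mem_heights p _).1 hh with ⟨k, _, rfl⟩
      exact hk k

end Aux

namespace Aux

/-- optional valley contributed by a step `a` at height-before `h`, followed by `x`. -/
def optV (h : ℤ) (a : Bool) (x : Option Bool) : List ℤ :=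
  if a = false ∧ x = some true then [h - 1] else []

/-- valley levels of `p`, starting from height `h`. -/
def vl (h : ℤ) : List Bool → List ℤ
  | a :: b :: t => optV h a (some b) ++ vl (h + stepVal a) (b :: t)
  | _ => []

lemma vl_nil (h : ℤ) : vl h [] = [] := rfl
lemma vl_single (h : ℤ) (a : Bool) : vl h [a] = [] := rfl

lemma vl_short (h : ℤ) (l : List Bool) (hl : l.length ≤ 1) : vl h l = [] := by
  match l, hl with
  | [], _ => rfl
  | [a], _ => rfl

lemma vl_cons (h : ℤ) (a : Bool) (l : List Bool) :
    vl h (a :: l) = optV h a l.head? ++ vl (h + stepVal a) l := by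
  match l with
  | [] => simp [vl, optV]
  | b :: t => rfl

lemma valleyLevels_eq_vl (p : List Bool) : valleyLevels p = vl 0 p := by
  suffices H : ∀ (p : List Bool) (h : ℤ),
      ((p.zip p.tail).zip (p.scanl (fun h b => h + stepVal b) h).tail).filterMap
        (fun x => if x.1.1 = false ∧ x.1.2 = true then some x.2 else none) = vl h p by
    exact H p 0
  intro p
  induction p with
  | nil => intro h; rfl
  | cons a t ih =>
    intro h
    match t with
    | [] => rfl
    | b :: t' =>
      rw [List.scanl_cons]
      simp only [List.singleton_append, List.tail_cons, List.zip_cons_cons]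
      have hd : ∃ r, (b :: t').scanl (fun h b => h + stepVal b) (h + stepVal a)
          = (h + stepVal a) :: r := ⟨_, List.scanl_cons⟩
      obtain ⟨r, hr⟩ := hd
      rw [hr]
      simp only [List.tail_cons, List.zip_cons_cons, List.filterMap_cons]
      rw [vl_cons]
      have := ih (h + stepVal a)
      rw [hr] at this
      simp only [List.tail_cons] at this
      rw [this]
      by_cases hc : a = false ∧ b = true
      · simp [hc, optV, hc.1, stepVal]
        omega
      · have hc' : ¬(a = false ∧ (some b : Option Bool) = some true) := by
          simpa using hc
        simp only [if_neg hc, optV, List.head?_cons, if_neg hc']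
        simp
        cases b <;> simp_all

lemma vl_shift (c : ℤ) (p : List Bool) : ∀ h, vl (h + c) p = (vl h p).map (· + c) := by
  induction p with
  | nil => intro h; rfl
  | cons a t ih =>
    intro h
    match t with
    | [] => rfl
    | b :: t' =>
      rw [vl_cons (h + c) a, vl_cons h a]
      have h2 : h + c + stepVal a = (h + stepVal a) + c := by ring
      rw [h2, ih]
      simp only [List.map_append]
      congr 1
      unfold optV
      by_cases hc : a = false ∧ (b :: t').head? = some true
      · simp only [hc, if_true, and_self, List.map_cons, List.map_nil]
        congr 1
        ring
      · have hc' : ¬(a = false ∧ b = true) := by simpa using hc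
        simp [hc']

lemma vl_mem_levels {x : ℤ} {h : ℤ} {p : List Bool} (hx : x ∈ vl h p) :
    ∃ k ≤ p.length, x = h + hsum (p.take k) := by
  induction p generalizing h with
  | nil => simp [vl_nil] at hx
  | cons a t ih =>
    match t with
    | [] => simp [vl_single] at hx
    | b :: t' =>
      rw [vl_cons] at hx
      rcases List.mem_append.1 hx with hx | hx
      · unfold optV at hx
        split at hx
        · rename_i hc
          simp at hx
          refine ⟨1, by simp, ?_⟩
          simp [hx, hc.1, stepVal, sub_eq_add_neg]
        · simp at hx
      · rcases ih hx with ⟨k, hk, rfl⟩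
        exact ⟨k + 1, by simpa using hk, by simp [List.take_succ_cons]; ring⟩

/-- valleys of a Dyck path are nonnegative -/
lemma vl_nonneg {p : List Bool} (hp : IsDyck p) {x : ℤ} (hx : x ∈ vl 0 p) : 0 ≤ x := by
  rcases vl_mem_levels hx with ⟨k, _, rfl⟩
  have := ((isDyck_iff p).1 hp).2 k
  omega

lemma vl_chop (p : List Bool) : ∀ (q : List Bool) (h : ℤ),
    vl h (p ++ q) = vl h (p ++ q.take 1) ++ vl (h + hsum p) q := by
  induction p with
  | nil =>
    intro q h
    simp only [List.nil_append, hsum_nil, add_zero]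
    rw [vl_short h (q.take 1) (by simpa using List.length_take_le 1 q)]
    simp
  | cons a p' ih =>
    intro q h
    simp only [List.cons_append]
    rw [vl_cons, vl_cons, ih]
    have hheads : (p' ++ q).head? = (p' ++ q.take 1).head? := by
      match p' with
      | [] => simp; match q with
              | [] => rfl
              | c :: q' => rfl
      | d :: p'' => simp
    rw [hheads]
    simp only [hsum_cons, List.append_assoc]
    congr 2
    ring

lemma vl_append_false (p : List Bool) : ∀ h, vl h (p ++ [false]) = vl h p := by
  induction p with
  | nil => intro h; rfl
  | cons a p' ih =>
    intro h
    simp only [List.cons_append]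
    rw [vl_cons, vl_cons, ih]
    congr 1
    match p' with
    | [] => simp [optV]
    | d :: p'' => simp

lemma vl_cons_true (h : ℤ) (l : List Bool) : vl h (true :: l) = vl (h + 1) l := by
  rw [vl_cons]
  simp [optV, stepVal]

lemma vl_false_true (h : ℤ) (t : List Bool) :
    vl h (false :: true :: t) = (h - 1) :: vl (h - 1) (true :: t) := by
  rw [vl_cons]
  simp [optV, stepVal, sub_eq_add_neg]

/-- Main valley-decomposition formula, nonempty second part. -/
lemma valleyLevels_decomp_ne (A B' : List Bool) (hA : hsum A = 0) :
    valleyLevels (true :: A ++ false :: true :: B')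
      = (valleyLevels A).map (· + 1) ++ 0 :: valleyLevels (true :: B') := by
  rw [valleyLevels_eq_vl, valleyLevels_eq_vl, valleyLevels_eq_vl]
  rw [List.cons_append, vl_cons_true, vl_chop A (false :: true :: B') (0 + 1)]
  simp only [List.take_succ_cons, List.take_zero]
  rw [vl_append_false, hA, add_zero, vl_false_true, vl_shift 1 A 0]
  norm_num

/-- Main valley-decomposition formula, empty second part. -/
lemma valleyLevels_decomp_nil (A : List Bool) :
    valleyLevels (true :: A ++ [false]) = (valleyLevels A).map (· + 1) := by
  rw [valleyLevels_eq_vl, valleyLevels_eq_vl]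
  rw [List.cons_append, vl_cons_true, vl_append_false]
  exact vl_shift 1 A 0

end Aux

namespace Aux

lemma semilength_phi (A B : List Bool) :
    semilength (true :: A ++ false :: B) = semilength A + semilength B + 1 := by
  simp [semilength, List.count_cons, List.count_append]

lemma isDyck_phi {A B : List Bool} (hA : IsDyck A) (hB : IsDyck B) :
    IsDyck (true :: A ++ false :: B) := by
  rw [isDyck_iff] at hA hB ⊢
  obtain ⟨hA0, hAk⟩ := hA
  obtain ⟨hB0, hBk⟩ := hB
  constructor
  · simp [hA0, hB0, stepVal]
  · intro k
    match k with
    | 0 => simp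
    | j + 1 =>
      rw [show (true :: A ++ false :: B : List Bool) = true :: (A ++ false :: B) from rfl]
      rw [List.take_succ_cons, hsum_cons]
      rcases le_or_gt j A.length with hj | hj
      · rw [List.take_append_of_le_length hj]
        have := hAk j
        simp [stepVal]; omega
      · obtain ⟨i, rfl⟩ : ∃ i, j = A.length + i := ⟨j - A.length, by omega⟩
        rw [List.take_append]
        match i with
        | 0 => simp [hA0, stepVal]
        | m + 1 =>
          rw [Nat.add_sub_cancel_left, List.take_of_length_le (by omega), List.take_succ_cons]
          simp only [hsum_append, hA0, hsum_cons]
          have := hBk m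
          simp [stepVal]; omega

lemma phi_ne_nil_head (p : List Bool) (hp : IsDyck p) (hne : p ≠ []) :
    ∃ t, p = true :: t := by
  match p, hne with
  | b :: t, _ =>
    rcases (isDyck_iff _).1 hp with ⟨_, hk⟩
    have h1 := hk 1
    simp only [List.take_succ_cons, List.take_zero, hsum_cons, hsum_nil, add_zero] at h1
    cases b with
    | false => simp [stepVal] at h1
    | true => exact ⟨t, rfl⟩

lemma exists_decomp {p : List Bool} (hp : IsDyck p) (hne : p ≠ []) :
    ∃ A B, p = true :: A ++ false :: B ∧ IsDyck A ∧ IsDyck B := by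
  obtain ⟨t, rfl⟩ := phi_ne_nil_head p hp hne
  rw [isDyck_iff] at hp
  obtain ⟨h0, hk⟩ := hp
  simp only [hsum_cons, stepVal, if_true] at h0
  have ht : hsum t = -1 := by omega
  have hkt : ∀ j, -1 ≤ hsum (t.take j) := by
    intro j
    have := hk (j + 1)
    simp only [List.take_succ_cons, hsum_cons, stepVal, if_true] at this
    omega
  -- minimal k with prefix sum < 0
  have hex : ∃ k, hsum (t.take k) < 0 := ⟨t.length, by rw [List.take_of_length_le le_rfl]; omega⟩
  classical
  set k := Nat.find hex with hkdef
  have hklt : hsum (t.take k) < 0 := Nat.find_spec hex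
  have hmin : ∀ j < k, 0 ≤ hsum (t.take j) := fun j hj => by
    have := Nat.find_min hex hj; omega
  have hk1 : k ≠ 0 := by
    intro h; rw [h] at hklt; simp at hklt
  obtain ⟨k', hk'⟩ : ∃ k', k = k' + 1 := ⟨k - 1, by omega⟩
  rw [hk'] at hklt
  have hmin : ∀ j < k' + 1, 0 ≤ hsum (t.take j) := fun j hj => hmin j (by omega)
  have hkle : k' + 1 ≤ t.length := by
    by_contra hcon
    push_neg at hcon
    have h1 : t.take (k' + 1) = t := List.take_of_length_le (by omega)
    have h2 : t.take k' = t := List.take_of_length_le (by omega)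
    have := hmin k' (by omega)
    rw [h2] at this
    omega
  have hlt : k' < t.length := by omega
  have hget : t.take (k' + 1) = t.take k' ++ [t[k']] := by
    rw [List.take_succ, List.getElem?_eq_getElem hlt]
    rfl
  have hstep : t[k'] = false ∧ hsum (t.take k') = 0 := by
    have h1 := hmin k' (by omega)
    rw [hget, hsum_append] at hklt
    simp only [hsum_cons, hsum_nil, add_zero] at hklt
    cases hc : t[k'] with
    | true => rw [hc] at hklt; simp [stepVal] at hklt; omega
    | false =>
      rw [hc] at hklt
      simp only [stepVal, if_false] at hklt
      constructor
      · rfl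
      · simp [stepVal] at hklt ⊢
        omega
  refine ⟨t.take k', t.drop (k' + 1), ?_, ?_, ?_⟩
  · have := List.take_append_drop (k' + 1) t
    rw [hget, hstep.1] at this
    have h5 : t = List.take k' t ++ false :: List.drop (k' + 1) t := by
      conv_lhs => rw [← this]
      rw [List.append_assoc, List.singleton_append]
    exact congrArg (fun x => true :: x) h5
  · rw [isDyck_iff]
    refine ⟨hstep.2, fun j => ?_⟩
    rw [List.take_take]
    exact hmin (min j k') (by omega)
  · rw [isDyck_iff]
    have hsum_k1 : hsum (t.take (k' + 1)) = -1 := by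
      rw [hget, hstep.1, hsum_append]
      simp [stepVal, hstep.2]
    constructor
    · have := List.take_append_drop (k' + 1) t
      have h2 : hsum (t.take (k' + 1)) + hsum (t.drop (k' + 1)) = hsum t := by
        rw [← hsum_append, this]
      omega
    · intro i
      have h3 : t.take (k' + 1 + i) = t.take (k' + 1) ++ (t.drop (k' + 1)).take i :=
        List.take_add
      have h4 := hkt (k' + 1 + i)
      rw [h3, hsum_append, hsum_k1] at h4
      omega

end Aux

namespace Aux

lemma phi_inj_aux {A A' B B' : List Bool} (hA : IsDyck A) (hA' : IsDyck A')
    (heq : A ++ false :: B = A' ++ false :: B') (hle : A.length ≤ A'.length) : A = A' := by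
  rcases eq_or_lt_of_le hle with h | h
  · have h1 : (A ++ false :: B).take A.length = A := by
      rw [List.take_append_of_le_length le_rfl, List.take_of_length_le le_rfl]
    have h2 : (A' ++ false :: B').take A.length = A'.take A.length := by
      rw [List.take_append_of_le_length (le_of_eq h)]
    rw [heq, h2] at h1
    rw [← h1, h, List.take_of_length_le le_rfl]
  · exfalso
    have h1 : (A ++ false :: B).take (A.length + 1) = A ++ [false] := by
      rw [List.take_append]
      simp
    have h2 : (A' ++ false :: B').take (A.length + 1) = A'.take (A.length + 1) :=
      List.take_append_of_le_length (by omega)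
    rw [heq, h2] at h1
    have h3 := ((isDyck_iff A').1 hA').2 (A.length + 1)
    rw [h1, hsum_append] at h3
    have h4 : hsum A = 0 := ((isDyck_iff A).1 hA).1
    simp [stepVal, h4] at h3

lemma phi_inj {A A' B B' : List Bool} (hA : IsDyck A) (hA' : IsDyck A')
    (heq : A ++ false :: B = A' ++ false :: B') : A = A' ∧ B = B' := by
  have hAA : A = A' := by
    rcases le_total A.length A'.length with h | h
    · exact phi_inj_aux hA hA' heq h
    · exact (phi_inj_aux hA' hA heq.symm h).symm
  subst hAA
  refine ⟨rfl, ?_⟩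
  have := List.append_cancel_left heq
  simpa using this

lemma restricted_phi_nil {A : List Bool} :
    RestrictedD (-1) (true :: A ++ [false]) ↔ RestrictedD (-1) A := by
  unfold RestrictedD List.Chain'
  rw [valleyLevels_decomp_nil, List.isChain_map]
  constructor <;> intro h <;> refine h.imp ?_ <;> intro a b <;> intro hab <;> omega

lemma restricted_phi_ne {A B' : List Bool} (hA : IsDyck A) (hB : IsDyck (true :: B')) :
    RestrictedD (-1) (true :: A ++ false :: true :: B') ↔
      RestrictedD (-1) A ∧ NoValleyOrLastGround A ∧ RestrictedD (-1) (true :: B') := by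
  have hA0 : hsum A = 0 := ((isDyck_iff A).1 hA).1
  unfold RestrictedD NoValleyOrLastGround List.Chain'
  rw [valleyLevels_decomp_ne A B' hA0, List.isChain_append, List.isChain_cons]
  constructor
  · rintro ⟨h1, ⟨h2, h3⟩, h4⟩
    refine ⟨?_, ?_, h3⟩
    · rw [List.isChain_map] at h1
      exact h1.imp (fun a b hab => by omega)
    · rcases hl : (valleyLevels A).getLast? with _ | x
      · left; exact List.getLast?_eq_none_iff.1 hl
      · right
        have hx0 : 0 ≤ x := by
          apply vl_nonneg hA
          rw [← valleyLevels_eq_vl]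
          exact List.mem_of_mem_getLast? (by rw [hl]; rfl)
        have hx1 : x + 1 ≤ 1 := by
          have := h4 (x + 1) (by rw [List.getLast?_map, hl]; rfl) 0 rfl
          omega
        have : x = 0 := by omega
        rw [this]
  · rintro ⟨h1, h2, h3⟩
    refine ⟨?_, ⟨?_, h3⟩, ?_⟩
    · rw [List.isChain_map]
      exact h1.imp (fun a b hab => by omega)
    · intro y hy
      have hy0 : 0 ≤ y := by
        apply vl_nonneg hB
        rw [← valleyLevels_eq_vl]
        exact List.mem_of_mem_head? hy
      omega
    · intro x hx y hy
      rcases h2 with h2 | h2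
      · rw [h2] at hx; simp at hx
      · rw [List.getLast?_map, h2] at hx
        simp only [Option.map_some, Option.mem_def, Option.some.injEq] at hx
        simp only [List.head?_cons, Option.mem_def, Option.some.injEq] at hy
        omega

end Aux

namespace Aux

open Set

lemma ncard_prod {α β : Type*} (s : Set α) (t : Set β) :
    (s ×ˢ t).ncard = s.ncard * t.ncard := by
  rw [← Nat.card_coe_set_eq, ← Nat.card_coe_set_eq, ← Nat.card_coe_set_eq,
    Nat.card_congr (Equiv.Set.prod s t), Nat.card_prod]

lemma ncard_biUnion {ι α : Type*} (s : Finset ι) (f : ι → Set α)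
    (hf : ∀ i ∈ s, (f i).Finite)
    (hd : ∀ i ∈ s, ∀ j ∈ s, i ≠ j → Disjoint (f i) (f j)) :
    (⋃ i ∈ s, f i).ncard = ∑ i ∈ s, (f i).ncard := by
  classical
  induction s using Finset.induction with
  | empty => simp
  | @insert a s ha ih =>
    rw [Finset.set_biUnion_insert, Finset.sum_insert ha]
    have hfin : (⋃ i ∈ s, f i).Finite :=
      Set.Finite.biUnion s.finite_toSet (fun i hi => hf i (Finset.mem_insert_of_mem hi))
    rw [Set.ncard_union_eq ?_ (hf a (Finset.mem_insert_self a s)) hfin]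
    · rw [ih (fun i hi => hf i (Finset.mem_insert_of_mem hi))
        (fun i hi j hj hij => hd i (Finset.mem_insert_of_mem hi) j
          (Finset.mem_insert_of_mem hj) hij)]
    · rw [Set.disjoint_iUnion_right]
      intro i
      rw [Set.disjoint_iUnion_right]
      intro hi
      exact hd a (Finset.mem_insert_self a s) i (Finset.mem_insert_of_mem hi)
        (fun h => ha (h ▸ hi))

def Dset (n : ℕ) : Set (List Bool) :=
  {p | IsDyck p ∧ semilength p = n ∧ RestrictedD (-1) p}
def Bset (n : ℕ) : Set (List Bool) :=
  {p | IsDyck p ∧ semilength p = n ∧ RestrictedD (-1) p ∧ NoValleyOrLastGround p}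
def Qset (n : ℕ) : Set (List Bool) :=
  {p | IsDyck p ∧ semilength p = n ∧ RestrictedD (-1) p ∧
    (valleyLevels p).getLast? = some 0}

lemma dDyckCount_eq (n : ℕ) : dDyckCount (-1) n = (Dset n).ncard := rfl
lemma bCount_eq (n : ℕ) : bCount n = (Bset n).ncard := rfl
lemma qCount_eq (n : ℕ) : qCount n = (Qset n).ncard := rfl

lemma length_of_dyck {p : List Bool} (hp : IsDyck p) : p.length = 2 * semilength p := by
  have h1 := length_counts p
  have h2 := hp.1
  unfold semilength
  omega

lemma Dset_finite (n : ℕ) : (Dset n).Finite := by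
  apply Set.Finite.subset (List.finite_length_eq Bool (2 * n))
  rintro p ⟨hp, hn, -⟩
  simp only [Set.mem_setOf_eq]
  rw [length_of_dyck hp, hn]

lemma Bset_finite (n : ℕ) : (Bset n).Finite := by
  apply Set.Finite.subset (List.finite_length_eq Bool (2 * n))
  rintro p ⟨hp, hn, -, -⟩
  simp only [Set.mem_setOf_eq]
  rw [length_of_dyck hp, hn]

lemma Qset_finite (n : ℕ) : (Qset n).Finite := by
  apply Set.Finite.subset (List.finite_length_eq Bool (2 * n))
  rintro p ⟨hp, hn, -, -⟩
  simp only [Set.mem_setOf_eq]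
  rw [length_of_dyck hp, hn]

lemma valleyLevels_nil : valleyLevels [] = [] := rfl

lemma restricted_nil : RestrictedD (-1) ([] : List Bool) := by
  unfold RestrictedD
  rw [valleyLevels_nil]
  exact List.isChain_nil

lemma isDyck_nil : IsDyck ([] : List Bool) := by
  rw [isDyck_iff]; exact ⟨rfl, fun k => by simp⟩

lemma eq_nil_of_semilength_zero {p : List Bool} (hp : IsDyck p) (h : semilength p = 0) :
    p = [] := by
  have := length_of_dyck hp
  rw [h] at this
  exact List.eq_nil_of_length_eq_zero (by omega)

def Eset (m : ℕ) : Set (List Bool × List Bool) :=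
  {AB | IsDyck AB.1 ∧ IsDyck AB.2 ∧ RestrictedD (-1) AB.1 ∧ RestrictedD (-1) AB.2 ∧
    semilength AB.1 + semilength AB.2 = m ∧ (AB.2 ≠ [] → NoValleyOrLastGround AB.1)}

def phi (AB : List Bool × List Bool) : List Bool := true :: AB.1 ++ false :: AB.2

lemma Dset_eq_image (n : ℕ) (hn : 1 ≤ n) : Dset n = phi '' Eset (n - 1) := by
  ext p
  constructor
  · rintro ⟨hp, hn', hr⟩
    have hne : p ≠ [] := by
      intro h
      rw [h] at hn'
      simp [semilength] at hn'
      omega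
    obtain ⟨A, B, rfl, hA, hB⟩ := exists_decomp hp hne
    have hsl : semilength A + semilength B + 1 = n := by
      rw [← hn', semilength_phi]
    by_cases hBe : B = []
    · subst hBe
      refine ⟨(A, []), ⟨hA, hB, ?_, restricted_nil, by dsimp only; omega, by simp⟩, rfl⟩
      exact restricted_phi_nil.1 hr
    · obtain ⟨B', rfl⟩ := phi_ne_nil_head B hB hBe
      obtain ⟨hrA, hnv, hrB⟩ := (restricted_phi_ne hA hB).1 hr
      exact ⟨(A, true :: B'), ⟨hA, hB, hrA, hrB, by dsimp only; omega,
        fun _ => hnv⟩, rfl⟩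
  · rintro ⟨⟨A, B⟩, ⟨hA, hB, hrA, hrB, hsl, himp⟩, rfl⟩
    have hsl' : semilength A + semilength B = n - 1 := hsl
    have himp' : B ≠ [] → NoValleyOrLastGround A := himp
    refine ⟨isDyck_phi hA hB, ?_, ?_⟩
    · rw [phi, semilength_phi]; omega
    · by_cases hBe : B = []
      · subst hBe
        exact restricted_phi_nil.2 hrA
      · obtain ⟨B', rfl⟩ := phi_ne_nil_head B hB hBe
        exact (restricted_phi_ne hA hB).2 ⟨hrA, himp' (by simp), hrB⟩

end Aux

namespace Aux

lemma phi_injOn (m : ℕ) : Set.InjOn phi (Eset m) := by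
  rintro ⟨A, B⟩ ⟨hA, hB, -⟩ ⟨A', B'⟩ ⟨hA', hB', -⟩ heq
  unfold phi at heq
  simp only [List.cons_append, List.cons.injEq, true_and] at heq
  obtain ⟨h1, h2⟩ := phi_inj hA hA' heq
  exact Prod.ext h1 h2

lemma Eset_eq (m : ℕ) :
    Eset m = (Dset m ×ˢ ({[]} : Set (List Bool))) ∪
      ⋃ j ∈ Finset.Icc 1 m, (Bset (m - j) ×ˢ Dset j) := by
  ext ⟨A, B⟩
  constructor
  · rintro ⟨hA, hB, hrA, hrB, hsl, himp⟩
    have hA2 : IsDyck A := hA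
    have hB2 : IsDyck B := hB
    have hrA2 : RestrictedD (-1) A := hrA
    have hrB2 : RestrictedD (-1) B := hrB
    have himp2 : B ≠ [] → NoValleyOrLastGround A := himp
    have hsl' : semilength A + semilength B = m := hsl
    by_cases hB0 : semilength B = 0
    · left
      have hBnil : B = [] := eq_nil_of_semilength_zero hB2 hB0
      subst hBnil
      exact ⟨⟨hA2, by show semilength A = m; omega, hrA2⟩, rfl⟩
    · right
      rw [Set.mem_iUnion]
      refine ⟨semilength B, ?_⟩
      rw [Set.mem_iUnion]
      refine ⟨Finset.mem_Icc.2 ⟨by omega, by omega⟩, ?_⟩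
      have hBne : B ≠ [] := by
        intro h; rw [h] at hB0; exact hB0 (by rfl)
      exact ⟨⟨hA2, by show semilength A = m - semilength B; omega, hrA2, himp2 hBne⟩, ⟨hB2, rfl, hrB2⟩⟩
  · rintro (⟨⟨hA, hsl, hrA⟩, hB⟩ | h)
    · have hBnil : B = [] := hB
      subst hBnil
      have h1 : semilength A = m := hsl
      refine ⟨hA, isDyck_nil, hrA, restricted_nil, ?_, by simp⟩
      show semilength A + semilength ([] : List Bool) = m
      have h2 : semilength ([] : List Bool) = 0 := rfl
      omega
    · rw [Set.mem_iUnion] at h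
      obtain ⟨j, h⟩ := h
      rw [Set.mem_iUnion] at h
      obtain ⟨hj, ⟨hA, hslA, hrA, hnv⟩, hB, hslB, hrB⟩ := h
      rw [Finset.mem_Icc] at hj
      refine ⟨hA, hB, hrA, hrB, ?_, fun _ => hnv⟩
      have h1 : semilength A = m - j := hslA
      have h2 : semilength B = j := hslB
      show semilength A + semilength B = m
      omega

lemma ncard_Eset (m : ℕ) :
    (Eset m).ncard = (Dset m).ncard +
      ∑ j ∈ Finset.Icc 1 m, (Bset (m - j)).ncard * (Dset j).ncard := by
  rw [Eset_eq]
  have hfinL : (Dset m ×ˢ ({[]} : Set (List Bool))).Finite :=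
    (Dset_finite m).prod (Set.finite_singleton _)
  have hfinR : (⋃ j ∈ Finset.Icc 1 m, (Bset (m - j) ×ˢ Dset j)).Finite :=
    Set.Finite.biUnion (Finset.Icc 1 m).finite_toSet
      (fun j _ => (Bset_finite (m - j)).prod (Dset_finite j))
  have hdisj : Disjoint (Dset m ×ˢ ({[]} : Set (List Bool)))
      (⋃ j ∈ Finset.Icc 1 m, (Bset (m - j) ×ˢ Dset j)) := by
    rw [Set.disjoint_left]
    rintro ⟨A, B⟩ ⟨-, hB⟩ hmem
    have hBnil : B = [] := hB
    rw [Set.mem_iUnion] at hmem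
    obtain ⟨j, hmem⟩ := hmem
    rw [Set.mem_iUnion] at hmem
    obtain ⟨hj, -, hB', hslB, -⟩ := hmem
    rw [Finset.mem_Icc] at hj
    have : semilength B = j := hslB
    rw [hBnil] at this
    simp [semilength] at this
    omega
  rw [Set.ncard_union_eq hdisj hfinL hfinR]
  congr 1
  · rw [ncard_prod]
    simp
  · rw [ncard_biUnion _ _ (fun j _ => (Bset_finite (m - j)).prod (Dset_finite j))]
    · exact Finset.sum_congr rfl (fun j _ => ncard_prod _ _)
    · intro i hi j hj hij
      rw [Set.disjoint_left]
      rintro ⟨A, B⟩ ⟨-, hBi, hsli, -⟩ ⟨-, hBj, hslj, -⟩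
      have h1 : semilength B = i := hsli
      have h2 : semilength B = j := hslj
      exact hij (h1 ▸ h2 ▸ rfl)

/-- The first-return recurrence. -/
lemma star (n : ℕ) (hn : 1 ≤ n) :
    dDyckCount (-1) n = dDyckCount (-1) (n - 1) +
      ∑ j ∈ Finset.Icc 1 (n - 1), bCount (n - 1 - j) * dDyckCount (-1) j := by
  rw [dDyckCount_eq n, Dset_eq_image n hn,
    Set.ncard_image_of_injOn (phi_injOn (n - 1)), ncard_Eset]
  rfl

end Aux

namespace Aux

def un (n : ℕ) : List Bool := List.replicate n true ++ List.replicate n false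

lemma hsum_replicate (k : ℕ) (b : Bool) : hsum (List.replicate k b) = k * stepVal b := by
  induction k with
  | zero => simp
  | succ k ih => rw [List.replicate_succ, hsum_cons, ih]; push_cast; ring

lemma isDyck_un (n : ℕ) : IsDyck (un n) := by
  rw [isDyck_iff]
  constructor
  · simp [un, hsum_replicate, stepVal]
  · intro k
    rw [un, List.take_append, List.take_replicate, List.take_replicate,
      hsum_append, hsum_replicate, hsum_replicate]
    simp only [List.length_replicate, show stepVal true = 1 from rfl, show stepVal false = -1 from rfl]
    simp only [mul_one, mul_neg]
    have h1 : min k n ≤ n := min_le_right _ _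
    have h2 : min (k - n) n ≤ min k n := by omega
    push_cast
    omega

lemma semilength_un (n : ℕ) : semilength (un n) = n := by
  simp [un, semilength, List.count_replicate, List.count_append]

lemma vl_rep_false (b : ℕ) : ∀ h, vl h (List.replicate b false) = [] := by
  induction b with
  | zero => intro h; rfl
  | succ b ih =>
    intro h
    rw [List.replicate_succ, vl_cons, ih]
    match b with
    | 0 => rfl
    | b' + 1 =>
      rw [List.replicate_succ]
      simp [optV]

lemma vl_un (a : ℕ) : ∀ h b, vl h (List.replicate a true ++ List.replicate b false) = [] := by
  induction a with
  | zero => intro h b; simp [vl_rep_false]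
  | succ a ih =>
    intro h b
    rw [List.replicate_succ, List.cons_append, vl_cons_true, ih]

lemma valleyLevels_un (n : ℕ) : valleyLevels (un n) = [] := by
  rw [valleyLevels_eq_vl, un, vl_un]

lemma no_valley_shape {p : List Bool} : ∀ h, vl h p = [] →
    ∃ a b, p = List.replicate a true ++ List.replicate b false := by
  induction p with
  | nil => exact fun h _ => ⟨0, 0, rfl⟩
  | cons c t ih =>
    intro h hv
    rw [vl_cons] at hv
    rcases List.append_eq_nil_iff.1 hv with ⟨hv1, hv2⟩
    obtain ⟨a, b, rfl⟩ := ih (h + stepVal c) hv2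
    cases c with
    | true =>
      exact ⟨a + 1, b, by rw [List.replicate_succ]; rfl⟩
    | false =>
      match a with
      | 0 =>
        refine ⟨0, b + 1, ?_⟩
        rw [List.replicate_succ]
        simp
      | a' + 1 =>
        exfalso
        rw [List.replicate_succ] at hv1
        simp [optV] at hv1

lemma eq_un_of_no_valley {p : List Bool} (hp : IsDyck p) (hv : valleyLevels p = []) :
    p = un (semilength p) := by
  rw [valleyLevels_eq_vl] at hv
  obtain ⟨a, b, rfl⟩ := no_valley_shape 0 hv
  have h0 : hsum (List.replicate a true ++ List.replicate b false) = 0 :=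
    ((isDyck_iff _).1 hp).1
  rw [hsum_append, hsum_replicate, hsum_replicate] at h0
  simp only [show stepVal true = 1 from rfl, show stepVal false = -1 from rfl, mul_one, mul_neg] at h0
  have hab : a = b := by omega
  have hsl : semilength (List.replicate a true ++ List.replicate b false) = a := by
    simp [semilength, List.count_replicate, List.count_append]
  rw [hsl, un, hab]

lemma Dset_zero : Dset 0 = {[]} := by
  ext p
  constructor
  · rintro ⟨hp, h0, -⟩
    exact eq_nil_of_semilength_zero hp h0
  · rintro rfl
    exact ⟨isDyck_nil, rfl, restricted_nil⟩

lemma dDyckCount_zero : dDyckCount (-1) 0 = 1 := by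
  rw [dDyckCount_eq, Dset_zero, Set.ncard_singleton]

lemma qCount_zero : qCount 0 = 0 := by
  rw [qCount_eq]
  convert Set.ncard_empty (List Bool)
  ext p
  simp only [Set.mem_empty_iff_false, iff_false]
  rintro ⟨hp, h0, -, hlast⟩
  have : p = [] := eq_nil_of_semilength_zero hp h0
  subst this
  rw [valleyLevels_nil] at hlast
  simp at hlast

lemma qCount_one : qCount 1 = 0 := by
  rw [qCount_eq]
  convert Set.ncard_empty (List Bool)
  ext p
  simp only [Set.mem_empty_iff_false, iff_false]
  rintro ⟨hp, h1, hr, hlast⟩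
  have hne : p ≠ [] := by
    rintro rfl
    simp [semilength] at h1
  obtain ⟨A, B, rfl, hA, hB⟩ := exists_decomp hp hne
  rw [semilength_phi] at h1
  have hA0 : A = [] := eq_nil_of_semilength_zero hA (by omega)
  have hB0 : B = [] := eq_nil_of_semilength_zero hB (by omega)
  subst hA0; subst hB0
  rw [show (true :: [] ++ false :: [] : List Bool) = true :: [] ++ [false] from rfl,
    valleyLevels_decomp_nil] at hlast
  rw [valleyLevels_nil] at hlast
  simp at hlast

lemma Bset_eq_union (n : ℕ) :
    Bset n = (Dset n ∩ {p | valleyLevels p = []}) ∪ Qset n := by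
  ext p
  constructor
  · rintro ⟨hp, hn, hr, hnv | hlast⟩
    · exact Or.inl ⟨⟨hp, hn, hr⟩, hnv⟩
    · exact Or.inr ⟨hp, hn, hr, hlast⟩
  · rintro (⟨⟨hp, hn, hr⟩, hnv⟩ | ⟨hp, hn, hr, hlast⟩)
    · exact ⟨hp, hn, hr, Or.inl hnv⟩
    · exact ⟨hp, hn, hr, Or.inr hlast⟩

lemma Dset_inter_novalley (n : ℕ) : Dset n ∩ {p | valleyLevels p = []} = {un n} := by
  ext p
  constructor
  · rintro ⟨⟨hp, hn, -⟩, hnv⟩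
    have := eq_un_of_no_valley hp hnv
    rw [hn] at this
    exact this
  · rintro rfl
    refine ⟨⟨isDyck_un n, semilength_un n, ?_⟩, valleyLevels_un n⟩
    unfold RestrictedD
    rw [valleyLevels_un]
    exact List.isChain_nil

lemma bCount_eq_qCount (n : ℕ) : bCount n = qCount n + 1 := by
  rw [bCount_eq, qCount_eq, Bset_eq_union, Dset_inter_novalley]
  rw [Set.ncard_union_eq ?_ (Set.finite_singleton _) (Qset_finite n)]
  · rw [Set.ncard_singleton]; omega
  · rw [Set.disjoint_left]
    rintro p hp ⟨-, -, -, hlast⟩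
    rw [Set.mem_singleton_iff] at hp
    subst hp
    rw [valleyLevels_un] at hlast
    simp at hlast

end Aux

namespace Aux

noncomputable def Rz (n : ℕ) : ℤ := (dDyckCount (-1) n : ℤ)
noncomputable def Qz (n : ℕ) : ℤ := (qCount n : ℤ)

lemma starZ (n : ℕ) (hn : 1 ≤ n) :
    Rz n = Rz (n - 1) + ∑ j ∈ Finset.Icc 1 (n - 1), (Qz (n - 1 - j) + 1) * Rz j := by
  have h := star n hn
  have h2 : ∑ j ∈ Finset.Icc 1 (n - 1), bCount (n - 1 - j) * dDyckCount (-1) j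
      = ∑ j ∈ Finset.Icc 1 (n - 1), (qCount (n - 1 - j) + 1) * dDyckCount (-1) j :=
    Finset.sum_congr rfl (fun j _ => by rw [bCount_eq_qCount])
  rw [h2] at h
  unfold Rz Qz
  rw [h]
  push_cast
  ring

lemma rone : dDyckCount (-1) 1 = 1 := by
  have h := starZ 1 le_rfl
  rw [show (1 : ℕ) - 1 = 0 from rfl, Finset.Icc_eq_empty (by omega)] at h
  simp only [Finset.sum_empty, add_zero] at h
  have : Rz 0 = 1 := by unfold Rz; rw [dDyckCount_zero]; norm_num
  rw [this] at h
  unfold Rz at h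
  exact_mod_cast h

lemma rtwo : dDyckCount (-1) 2 = 2 := by
  have h := starZ 2 (by omega)
  rw [show (2 : ℕ) - 1 = 1 from rfl, Finset.Icc_self, Finset.sum_singleton] at h
  rw [show (1 : ℕ) - 1 = 0 from rfl] at h
  have h0 : Qz 0 = 0 := by unfold Qz; rw [qCount_zero]; norm_num
  have h1 : Rz 1 = 1 := by unfold Rz; rw [rone]; norm_num
  rw [h0, h1] at h
  norm_num at h
  unfold Rz at h
  exact_mod_cast h

lemma rthree : dDyckCount (-1) 3 = 5 := by
  have h := starZ 3 (by omega)
  rw [show (3 : ℕ) - 1 = 2 from rfl] at h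
  rw [show (2 : ℕ) = 1 + 1 from rfl, Finset.sum_Icc_succ_top (by omega)] at h
  rw [Finset.Icc_self, Finset.sum_singleton] at h
  norm_num at h
  have h0 : Qz 0 = 0 := by unfold Qz; rw [qCount_zero]; norm_num
  have hq1 : Qz 1 = 0 := by unfold Qz; rw [qCount_one]; norm_num
  have h1 : Rz 1 = 1 := by unfold Rz; rw [rone]; norm_num
  have h2 : Rz 2 = 2 := by unfold Rz; rw [rtwo]; norm_num
  rw [h0, hq1, h1, h2] at h
  norm_num at h
  unfold Rz at h
  exact_mod_cast h

lemma sum_Icc_split_bot (a M : ℕ) (h : a ≤ M) (f : ℕ → ℤ) :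
    ∑ j ∈ Finset.Icc a M, f j = f a + ∑ j ∈ Finset.Icc (a + 1) M, f j := by
  rw [show Finset.Icc a M = insert a (Finset.Icc (a + 1) M) by
    ext x; simp only [Finset.mem_Icc, Finset.mem_insert]; omega]
  rw [Finset.sum_insert (by simp only [Finset.mem_Icc]; omega)]

lemma sum_reflect (M : ℕ) (f : ℕ → ℤ) :
    ∑ j ∈ Finset.Icc 1 M, f j = ∑ j ∈ Finset.Icc 1 M, f (M + 1 - j) := by
  apply Finset.sum_nbij' (i := fun j => M + 1 - j) (j := fun j => M + 1 - j)
  · intro a ha; rw [Finset.mem_Icc] at ha ⊢; omega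
  · intro a ha; rw [Finset.mem_Icc] at ha ⊢; omega
  · intro a ha; rw [Finset.mem_Icc] at ha; omega
  · intro a ha; rw [Finset.mem_Icc] at ha; omega
  · intro a ha
    rw [Finset.mem_Icc] at ha
    congr 1
    omega

lemma main_rec (k : ℕ) :
    Rz (k + 4) = 3 * Rz (k + 3) - Rz (k + 2) + Qz (k + 2) +
        ∑ i ∈ Finset.Icc 2 (k + 1), Qz i * (Rz (k + 3 - i) - Rz (k + 2 - i)) := by
  have hq0 : Qz 0 = 0 := by unfold Qz; rw [qCount_zero]; norm_num
  have hq1 : Qz 1 = 0 := by unfold Qz; rw [qCount_one]; norm_num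
  have hr1 : Rz 1 = 1 := by unfold Rz; rw [rone]; norm_num
  have E1 := starZ (k + 4) (by omega)
  have E2 := starZ (k + 3) (by omega)
  rw [show k + 4 - 1 = k + 3 from rfl] at E1
  rw [show k + 3 - 1 = k + 2 from rfl] at E2
  rw [show k + 3 = (k + 2) + 1 from rfl, Finset.sum_Icc_succ_top (by omega)] at E1
  rw [show k + 2 + 1 - (k + 2 + 1) = 0 from by omega, hq0] at E1
  have hA : ∑ j ∈ Finset.Icc 1 (k + 2), (Qz (k + 2 + 1 - j) + 1) * Rz j
      = ∑ j ∈ Finset.Icc 1 (k + 2), Qz (k + 3 - j) * Rz j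
        + ∑ j ∈ Finset.Icc 1 (k + 2), Rz j := by
    rw [← Finset.sum_add_distrib]
    exact Finset.sum_congr rfl (fun j hj => by
      rw [show k + 2 + 1 - j = k + 3 - j from by omega]; ring)
  have hB : ∑ j ∈ Finset.Icc 1 (k + 2), (Qz (k + 2 - j) + 1) * Rz j
      = ∑ j ∈ Finset.Icc 1 (k + 2), Qz (k + 2 - j) * Rz j
        + ∑ j ∈ Finset.Icc 1 (k + 2), Rz j := by
    rw [← Finset.sum_add_distrib]
    exact Finset.sum_congr rfl (fun j hj => by ring)
  rw [hA] at E1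
  rw [hB] at E2
  have hrefl1 : ∑ j ∈ Finset.Icc 1 (k + 2), Qz (k + 3 - j) * Rz j
      = Qz (k + 2) + ∑ i ∈ Finset.Icc 2 (k + 1), Qz i * Rz (k + 3 - i) := by
    rw [sum_reflect]
    have h1 : ∑ j ∈ Finset.Icc 1 (k + 2), Qz (k + 3 - (k + 2 + 1 - j)) * Rz (k + 2 + 1 - j)
        = ∑ j ∈ Finset.Icc 1 (k + 2), Qz j * Rz (k + 3 - j) :=
      Finset.sum_congr rfl (fun j hj => by
        rw [Finset.mem_Icc] at hj
        rw [show k + 3 - (k + 2 + 1 - j) = j from by omega,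
          show k + 2 + 1 - j = k + 3 - j from by omega])
    rw [h1, sum_Icc_split_bot 1 (k + 2) (by omega), hq1, zero_mul, zero_add,
      show k + 2 = (k + 1) + 1 from rfl, Finset.sum_Icc_succ_top (by omega),
      show k + 3 - (k + 1 + 1) = 1 from by omega, hr1,
      show k + 1 + 1 = k + 2 from rfl]
    ring
  have hrefl2 : ∑ j ∈ Finset.Icc 1 (k + 2), Qz (k + 2 - j) * Rz j
      = ∑ i ∈ Finset.Icc 2 (k + 1), Qz i * Rz (k + 2 - i) := by
    rw [show k + 2 = (k + 1) + 1 from rfl, Finset.sum_Icc_succ_top (by omega),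
      show k + 2 - (k + 1 + 1) = 0 from by omega, hq0, zero_mul, add_zero, sum_reflect]
    have h1 : ∑ j ∈ Finset.Icc 1 (k + 1), Qz (k + 2 - (k + 1 + 1 - j)) * Rz (k + 1 + 1 - j)
        = ∑ j ∈ Finset.Icc 1 (k + 1), Qz j * Rz (k + 2 - j) :=
      Finset.sum_congr rfl (fun j hj => by
        rw [Finset.mem_Icc] at hj
        rw [show k + 2 - (k + 1 + 1 - j) = j from by omega,
          show k + 1 + 1 - j = k + 2 - j from by omega])
    rw [h1, sum_Icc_split_bot 1 (k + 1) (by omega), hq1, zero_mul, zero_add]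
  rw [hrefl1] at E1
  rw [hrefl2] at E2
  have hsplit : ∑ i ∈ Finset.Icc 2 (k + 1), Qz i * (Rz (k + 3 - i) - Rz (k + 2 - i))
      = ∑ i ∈ Finset.Icc 2 (k + 1), Qz i * Rz (k + 3 - i)
        - ∑ i ∈ Finset.Icc 2 (k + 1), Qz i * Rz (k + 2 - i) := by
    rw [← Finset.sum_sub_distrib]
    exact Finset.sum_congr rfl (fun i _ => by ring)
  have e2' : ∑ j ∈ Finset.Icc 1 (k + 2), Rz j
      = Rz (k + 3) - Rz (k + 2) - ∑ i ∈ Finset.Icc 2 (k + 1), Qz i * Rz (k + 2 - i) := by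
    rw [E2]; ring
  rw [hsplit, E1, e2', show k + 2 + 1 = k + 3 from rfl]
  ring

end Aux

/-- For `n > 3`,
`r(n) = 3r(n-1) - r(n-2) + q_{n-2} + Σ_{i=2}^{n-3} q_i (r(n-i-1) - r(n-i-2))`,
with `r(1) = 1`, `r(2) = 2`, `r(3) = 5`. -/
theorem rCount_recurrence :
    (∀ n : ℕ, 3 < n →
      (dDyckCount (-1) n : ℤ) =
        3 * dDyckCount (-1) (n - 1) - dDyckCount (-1) (n - 2) + qCount (n - 2) +
        ∑ i ∈ Finset.Icc 2 (n - 3),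
          (qCount i : ℤ) *
            ((dDyckCount (-1) (n - i - 1) : ℤ) - (dDyckCount (-1) (n - i - 2) : ℤ))) ∧
    dDyckCount (-1) 1 = 1 ∧ dDyckCount (-1) 2 = 2 ∧ dDyckCount (-1) 3 = 5 := by
  refine ⟨?_, Aux.rone, Aux.rtwo, Aux.rthree⟩
  intro n hn
  obtain ⟨k, rfl⟩ : ∃ k, n = k + 4 := ⟨n - 4, by omega⟩
  have h := Aux.main_rec k
  simp only [Aux.Rz, Aux.Qz] at h
  rw [show k + 4 - 1 = k + 3 from rfl, show k + 4 - 2 = k + 2 from rfl,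
    show k + 4 - 3 = k + 1 from rfl, h]
  congr 1
  apply Finset.sum_congr rfl
  intro i hi
  rw [Finset.mem_Icc] at hi
  rw [show k + 4 - i - 1 = k + 3 - i from by omega,
    show k + 4 - i - 2 = k + 2 - i from by omega]
end

section
/- The generating function L(x) = Σ_{n≥1} r(n)·x^n of the numbers r(n) of (−1)-Dyck paths of semi-length n satisfies the algebraic equation obtained from L(x) = (−1 + 4x − 3x² + √(1 − 4x + 2x² + x⁴)) / (2(1 − 4x + 2x²)); equivalently, (2(1 − 4x + 2x²)·L(x) + 1 − 4x + 3x²)² = 1 − 4x + 2x² + x⁴ as formal power series. -/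
open List DyckStep

namespace DAux


def htsFrom (a : ℤ) (l : List Bool) : List ℤ := l.scanl (fun h b => h + stepVal b) a

lemma heights_eq (l : List Bool) : heights l = htsFrom 0 l := rfl

@[simp] lemma htsFrom_nil (a : ℤ) : htsFrom a [] = [a] := rfl

@[simp] lemma htsFrom_cons (a : ℤ) (b : Bool) (l : List Bool) :
    htsFrom a (b :: l) = a :: htsFrom (a + stepVal b) l := List.scanl_cons

def delta (l : List Bool) : ℤ := (l.map stepVal).sum

@[simp] lemma delta_nil : delta [] = 0 := rfl

@[simp] lemma delta_cons (b l) : delta (b :: l) = stepVal b + delta l := rfl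

@[simp] lemma delta_append (l₁ l₂ : List Bool) : delta (l₁ ++ l₂) = delta l₁ + delta l₂ := by
  simp [delta]

lemma delta_eq_counts (l : List Bool) :
    delta l = (l.count true : ℤ) - (l.count false : ℤ) := by
  induction l with
  | nil => simp
  | cons b l ih =>
    cases b <;> simp [ih, stepVal, List.count_cons] <;> ring

lemma mem_htsFrom {h a : ℤ} {l : List Bool} :
    h ∈ htsFrom a l ↔ ∃ t, t <+: l ∧ h = a + delta t := by
  induction l generalizing a with
  | nil =>
    simp only [htsFrom_nil, List.mem_singleton]
    constructor
    · rintro rfl; exact ⟨[], List.nil_prefix, by simp⟩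
    · rintro ⟨t, ht, rfl⟩; simp [List.prefix_nil.mp ht]
  | cons b l ih =>
    simp only [htsFrom_cons, List.mem_cons, ih]
    constructor
    · rintro (rfl | ⟨t, ht, rfl⟩)
      · exact ⟨[], List.nil_prefix, by simp⟩
      · obtain ⟨s, hs⟩ := ht
        exact ⟨b :: t, ⟨s, by simp [hs]⟩, by simp; ring⟩
    · rintro ⟨t, ht, rfl⟩
      cases t with
      | nil => left; simp
      | cons c t =>
        obtain ⟨s, hs⟩ := ht
        injection hs with h1 h2
        subst h1
        right; exact ⟨t, ⟨s, h2⟩, by simp; ring⟩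

/-- step → bool -/
def sb : DyckStep → Bool | U => true | D => false

/-- bool → step -/
def bs : Bool → DyckStep | true => U | false => D

@[simp] lemma sb_bs (b : Bool) : sb (bs b) = b := by cases b <;> rfl
@[simp] lemma bs_sb (s : DyckStep) : bs (sb s) = s := by cases s <;> rfl

lemma sb_injective : Function.Injective sb := fun a b h => by
  have := congrArg bs h; simpa using this

def W (p : DyckWord) : List Bool := p.toList.map sb

lemma count_true_map_sb (l : List DyckStep) : (l.map sb).count true = l.count U := by
  induction l with
  | nil => rfl
  | cons s l ih => cases s <;> simp [List.count_cons, ih, sb]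

lemma count_false_map_sb (l : List DyckStep) : (l.map sb).count false = l.count D := by
  induction l with
  | nil => rfl
  | cons s l ih => cases s <;> simp [List.count_cons, ih, sb]

lemma count_U_map_bs (l : List Bool) : (l.map bs).count U = l.count true := by
  induction l with
  | nil => rfl
  | cons b l ih => cases b <;> simp [List.count_cons, ih, bs]

lemma count_D_map_bs (l : List Bool) : (l.map bs).count D = l.count false := by
  induction l with
  | nil => rfl
  | cons b l ih => cases b <;> simp [List.count_cons, ih, bs]

lemma count_true_W (p : DyckWord) : (W p).count true = p.toList.count U :=
  count_true_map_sb _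

lemma count_false_W (p : DyckWord) : (W p).count false = p.toList.count D :=
  count_false_map_sb _

lemma take_W (p : DyckWord) (k : ℕ) : (W p).take k = (p.toList.take k).map sb :=
  List.map_take.symm

lemma isDyck_W (p : DyckWord) : IsDyck (W p) := by
  constructor
  · rw [count_true_W, count_false_W, p.count_U_eq_count_D]
  · intro h hm
    rw [heights_eq, mem_htsFrom] at hm
    obtain ⟨t, ht, rfl⟩ := hm
    obtain ⟨k, rfl⟩ : ∃ k, t = (W p).take k := ⟨t.length, (List.prefix_iff_eq_take.mp ht)⟩
    rw [take_W, delta_eq_counts, count_true_map_sb, count_false_map_sb]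
    have := p.count_D_le_count_U k
    push_cast
    omega

lemma semilength_W (p : DyckWord) : semilength (W p) = p.semilength := count_true_W p

lemma W_injective : Function.Injective W := by
  intro p q h
  ext1
  exact List.map_injective_iff.mpr sb_injective h

/-- Build a DyckWord from an IsDyck list. -/
def toDW (l : List Bool) (hl : IsDyck l) : DyckWord where
  toList := l.map bs
  count_U_eq_count_D := by
    rw [count_U_map_bs, count_D_map_bs]; exact hl.1
  count_D_le_count_U i := by
    rw [← List.map_take, count_U_map_bs, count_D_map_bs]
    have h0 : (0:ℤ) ≤ delta (l.take i) := by
      have := hl.2 (0 + delta (l.take i)) (by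
        rw [heights_eq, mem_htsFrom]
        exact ⟨l.take i, List.take_prefix i l, rfl⟩)
      simpa using this
    rw [delta_eq_counts] at h0
    omega

@[simp] lemma W_toDW (l : List Bool) (hl : IsDyck l) : W (toDW l hl) = l := by
  simp [W, toDW, List.map_map, Function.comp_def]



def vA (a : ℤ) : List Bool → List ℤ
  | b :: c :: t => (if b = false ∧ c = true then [a + stepVal b] else []) ++ vA (a + stepVal b) (c :: t)
  | _ => []

@[simp] lemma vA_nil (a : ℤ) : vA a [] = [] := rfl
@[simp] lemma vA_single (a : ℤ) (b : Bool) : vA a [b] = [] := rfl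
lemma vA_cons2 (a : ℤ) (b c : Bool) (t : List Bool) :
    vA a (b :: c :: t) =
      (if b = false ∧ c = true then [a + stepVal b] else []) ++ vA (a + stepVal b) (c :: t) := rfl

lemma vA_eq : ∀ (l : List Bool) (a : ℤ),
    ((l.zip l.tail).zip ((htsFrom a l).tail)).filterMap
      (fun x => if x.1.1 = false ∧ x.1.2 = true then some x.2 else none) = vA a l
  | [], a => rfl
  | [b], a => rfl
  | b :: c :: t, a => by
    have ih := vA_eq (c :: t) (a + stepVal b)
    rw [vA_cons2, ← ih]
    simp only [List.tail_cons, List.zip_cons_cons, htsFrom_cons, List.filterMap_cons]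
    by_cases h : b = false ∧ c = true
    · simp [h]
    · simp [h]

lemma valleyLevels_eq_vA (l : List Bool) : valleyLevels l = vA 0 l := by
  rw [valleyLevels, heights_eq]; exact vA_eq l 0

lemma vA_shift : ∀ (l : List Bool) (a c : ℤ), vA (a + c) l = (vA a l).map (· + c)
  | [], a, c => rfl
  | [b], a, c => rfl
  | b :: c' :: t, a, c => by
    have ih := vA_shift (c' :: t) (a + stepVal b) c
    have e : a + c + stepVal b = a + stepVal b + c := by ring
    rw [vA_cons2, vA_cons2, e, ih]
    by_cases h : b = false ∧ c' = true <;> simp [h]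

lemma vA_true_cons (a : ℤ) (l : List Bool) : vA a (true :: l) = vA (a + 1) l := by
  cases l with
  | nil => rfl
  | cons c t => rw [vA_cons2]; simp [stepVal]

lemma vA_append_false : ∀ (l₁ : List Bool) (a : ℤ) (l₂ : List Bool),
    vA a (l₁ ++ false :: l₂) = vA a l₁ ++ vA (a + delta l₁) (false :: l₂)
  | [], a, l₂ => by simp
  | [b], a, l₂ => by
    rw [List.singleton_append, vA_cons2]
    simp [stepVal]
  | b :: c :: t, a, l₂ => by
    rw [List.cons_append, List.cons_append, vA_cons2]
    have ih := vA_append_false (c :: t) (a + stepVal b) l₂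
    rw [← List.cons_append, ih, vA_cons2]
    simp [← add_assoc, List.append_assoc]


lemma W_zero : W 0 = [] := rfl

@[simp] lemma valleyLevels_nil : valleyLevels [] = [] := rfl

lemma W_nest_add (q r : DyckWord) :
    W (q.nest + r) = true :: (W q ++ false :: W r) := by
  show (q.nest.toList ++ r.toList).map sb = _
  show (([U] ++ q.toList ++ [D]) ++ r.toList).map sb = _
  simp [W, sb]

lemma delta_W (q : DyckWord) : delta (W q) = 0 := by
  rw [delta_eq_counts, count_true_W, count_false_W, q.count_U_eq_count_D]; ring

lemma W_head (r : DyckWord) (hr : r ≠ 0) : W r = true :: (r.toList.tail.map sb) := by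
  have h1 : r.toList ≠ [] := DyckWord.toList_ne_nil.mpr hr
  conv_lhs => rw [W, ← List.cons_head_tail h1]
  rw [DyckWord.head_eq_U r h1]
  rfl

/-- Main structural lemma: valleys of the first-return decomposition. -/
lemma valleys_decomp (q r : DyckWord) :
    valleyLevels (W (q.nest + r)) = (valleyLevels (W q)).map (· + 1) ++
      (if r = 0 then [] else 0 :: valleyLevels (W r)) := by
  simp only [valleyLevels_eq_vA]
  rw [W_nest_add, vA_true_cons, vA_append_false, delta_W, add_zero]
  have h1 : vA (0 + 1) (W q) = (vA 0 (W q)).map (· + 1) := vA_shift (W q) 0 1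
  rw [h1]
  congr 1
  by_cases hr : r = 0
  · subst hr; rw [W_zero]; simp
  · rw [if_neg hr, W_head r hr, vA_cons2]
    have : (0:ℤ) + 1 + stepVal false = 0 := by simp [stepVal]
    rw [this]
    simp [← W_head r hr]

lemma valley_nonneg {p : DyckWord} {v : ℤ} (hv : v ∈ valleyLevels (W p)) : 0 ≤ v := by
  rw [valleyLevels] at hv
  obtain ⟨x, hx, hxe⟩ := List.mem_filterMap.mp hv
  have hv2 : v = x.2 := by
    by_cases h : x.1.1 = false ∧ x.1.2 = true
    · rw [if_pos h] at hxe; exact (Option.some_inj.mp hxe).symm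
    · rw [if_neg h] at hxe; cases hxe
  subst hv2
  have hx2 : x.2 ∈ (heights (W p)).tail := (List.of_mem_zip hx).2
  exact (isDyck_W p).2 _ (List.mem_of_mem_tail hx2)

/-- Restricted predicate on Dyck words. -/
def R (p : DyckWord) : Prop := RestrictedD (-1) (W p)

/-- Last valley at level ≤ 0 (or no valley). -/
def lastOK (p : DyckWord) : Prop := ∀ v ∈ (valleyLevels (W p)).getLast?, v ≤ 0

lemma R_zero : R 0 := by
  rw [R, RestrictedD, W_zero]; exact List.isChain_nil

lemma restricted_decomp (q r : DyckWord) :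
    R (q.nest + r) ↔ R q ∧ R r ∧ (r = 0 ∨ lastOK q) := by
  rw [R, RestrictedD, valleys_decomp]
  unfold List.Chain'
  by_cases hr : r = 0
  · subst hr
    rw [if_pos rfl, List.append_nil, List.isChain_map]
    have he : (fun (a b : ℤ) => (-1:ℤ) ≤ b + 1 - (a + 1)) = fun a b => (-1:ℤ) ≤ b - a := by
      funext a b; rw [show b + 1 - (a + 1) = b - a by ring]
    rw [he]
    simp [R, RestrictedD, R_zero, W_zero, List.Chain']
  · rw [if_neg hr, List.isChain_append, List.isChain_map, List.isChain_cons]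
    have he : (fun (a b : ℤ) => (-1:ℤ) ≤ b + 1 - (a + 1)) = fun a b => (-1:ℤ) ≤ b - a := by
      funext a b; rw [show b + 1 - (a + 1) = b - a by ring]
    rw [he]
    have hhd : ∀ y ∈ (valleyLevels (W r)).head?, (-1:ℤ) ≤ y - 0 := by
      intro y hy
      have := valley_nonneg (p := r) (List.mem_of_mem_head? hy)
      omega
    constructor
    · rintro ⟨h1, ⟨-, h2⟩, h3⟩
      refine ⟨h1, h2, Or.inr ?_⟩
      intro v hv
      have hmem : v + 1 ∈ ((valleyLevels (W q)).map (· + 1)).getLast? := by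
        rcases List.eq_nil_or_concat' (valleyLevels (W q)) with hq | ⟨L, u, hq⟩
        · rw [hq] at hv; cases hv
        · rw [hq] at hv ⊢
          rw [List.getLast?_concat] at hv
          simp only [List.map_append, List.map_cons, List.map_nil, List.getLast?_concat]
          simp only [Option.mem_def, Option.some_inj] at hv ⊢
          rw [← hv]
      have := h3 (v + 1) hmem 0 rfl
      omega
    · rintro ⟨h1, h2, h3⟩
      refine ⟨h1, ⟨hhd, h2⟩, ?_⟩
      intro x hx y hy
      rcases List.eq_nil_or_concat' (valleyLevels (W q)) with hq | ⟨L, u, hq⟩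
      · rw [hq] at hx; cases hx
      · rw [hq] at hx
        simp only [List.map_append, List.map_cons, List.map_nil, List.getLast?_concat] at hx
        have hx' : x = u + 1 := by simpa using hx.symm
        have hy' : y = 0 := by simpa using hy.symm
        have hu : u ≤ 0 := by
          rcases h3 with h3 | h3
          · exact absurd h3 hr
          · exact h3 u (by rw [hq, List.getLast?_concat]; rfl)
        subst hx'; subst hy'; omega

lemma lastOK_decomp_zero (q : DyckWord) :
    lastOK (q.nest + 0) ↔ valleyLevels (W q) = [] := by
  rw [lastOK, valleys_decomp, if_pos rfl, List.append_nil]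
  rcases List.eq_nil_or_concat' (valleyLevels (W q)) with hq | ⟨L, u, hq⟩
  · rw [hq]; simp
  · rw [hq]
    simp only [List.map_append, List.map_cons, List.map_nil, List.getLast?_concat]
    have hu : 0 ≤ u := valley_nonneg (p := q) (by rw [hq]; exact List.mem_append_right _ (List.mem_singleton_self u))
    constructor
    · intro h
      have := h (u + 1) rfl
      omega
    · intro h
      exact absurd h (by simp)

lemma lastOK_decomp_ne (q r : DyckWord) (hr : r ≠ 0) :
    lastOK (q.nest + r) ↔ lastOK r := by
  rw [lastOK, valleys_decomp, if_neg hr, List.getLast?_append_cons]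
  rcases List.eq_nil_or_concat' (valleyLevels (W r)) with hq | ⟨L, u, hq⟩
  · rw [hq]
    simp [lastOK, hq]
  · rw [hq, lastOK, hq]
    have : (0:ℤ) :: (L ++ [u]) = (0 :: L) ++ [u] := rfl
    rw [this, List.getLast?_concat, List.getLast?_concat]

-- CHUNK4 (appended inside namespace DAux, before `end DAux`)

lemma semilength_eq_zero_iff {p : DyckWord} : p.semilength = 0 ↔ p = 0 := by
  constructor
  · intro h
    have h2 := p.two_mul_semilength_eq_length
    rw [h] at h2
    have : p.toList = [] := List.length_eq_zero_iff.mp (by omega)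
    exact DyckWord.toList_eq_nil.mp this
  · rintro rfl; rfl

lemma finite_and (n : ℕ) (Q : DyckWord → Prop) :
    Finite {p : DyckWord // p.semilength = n ∧ Q p} := by
  apply Finite.of_injective (fun x => (⟨x.1, x.2.1⟩ : {p : DyckWord // p.semilength = n}))
  intro a b h
  exact Subtype.ext (congrArg (fun z : {p : DyckWord // p.semilength = n} => z.1) h)

lemma finite_sl_le (n : ℕ) : Finite {p : DyckWord // p.semilength ≤ n} := by
  apply Finite.of_injective (fun x : {p : DyckWord // p.semilength ≤ n} =>
    (⟨⟨x.1.semilength, Nat.lt_succ_of_le x.2⟩, ⟨x.1, rfl⟩⟩ :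
      Σ i : Fin (n+1), {p : DyckWord // p.semilength = i.1}))
  intro a b h
  apply Subtype.ext
  exact congrArg (fun s : (Σ i : Fin (n+1), {p : DyckWord // p.semilength = i.1}) => s.2.1) h

lemma finite_pairs (n : ℕ) (C : DyckWord × DyckWord → Prop) :
    Finite {qr : DyckWord × DyckWord //
      qr.1.semilength + qr.2.semilength = n ∧ C qr} := by
  haveI := finite_sl_le n
  apply Finite.of_injective (fun x : {qr : DyckWord × DyckWord //
      qr.1.semilength + qr.2.semilength = n ∧ C qr} =>
    ((⟨x.1.1, by have := x.2.1; omega⟩, ⟨x.1.2, by have := x.2.1; omega⟩) :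
      {p : DyckWord // p.semilength ≤ n} × {p : DyckWord // p.semilength ≤ n}))
  intro a b h
  apply Subtype.ext
  exact Prod.ext (congrArg (fun y : {p : DyckWord // p.semilength ≤ n} ×
    {p : DyckWord // p.semilength ≤ n} => y.1.1) h)
    (congrArg (fun y : {p : DyckWord // p.semilength ≤ n} ×
    {p : DyckWord // p.semilength ≤ n} => y.2.1) h)

lemma nat_card_sigma {ι : Type*} [Fintype ι] (f : ι → Type*) [∀ i, Finite (f i)] :
    Nat.card (Σ i, f i) = ∑ i, Nat.card (f i) := by
  letI : ∀ i, Fintype (f i) := fun i => Fintype.ofFinite _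
  simp [Nat.card_eq_fintype_card]

/-- split a subtype card by a decidable side condition -/
lemma nat_card_split {α : Type*} (c d : α → Prop) [Finite {x : α // c x}] :
    Nat.card {x : α // c x} =
      Nat.card {x : α // c x ∧ d x} + Nat.card {x : α // c x ∧ ¬ d x} := by
  classical
  haveI : Finite {x : α // c x ∧ d x} :=
    Finite.of_injective (fun y => (⟨y.1, y.2.1⟩ : {x // c x}))
      (fun a b h => Subtype.ext (congrArg (fun z : {x // c x} => z.1) h))
  haveI : Finite {x : α // c x ∧ ¬ d x} :=
    Finite.of_injective (fun y => (⟨y.1, y.2.1⟩ : {x // c x}))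
      (fun a b h => Subtype.ext (congrArg (fun z : {x // c x} => z.1) h))
  rw [← Nat.card_sum]
  apply Nat.card_congr
  exact {
    toFun := fun x => if h : d x.1 then Sum.inl ⟨x.1, x.2, h⟩ else Sum.inr ⟨x.1, x.2, h⟩
    invFun := fun y => y.elim (fun a => ⟨a.1, a.2.1⟩) (fun a => ⟨a.1, a.2.1⟩)
    left_inv := fun x => by by_cases h : d x.1 <;> simp [h]
    right_inv := fun y => by
      rcases y with a | a
      · simp [a.2.2]
      · simp [a.2.2] }

/-- cards of pair-sets as convolution over the antidiagonal -/
lemma card_pairs (n : ℕ) (P Q : DyckWord → Prop) :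
    Nat.card {qr : DyckWord × DyckWord //
        qr.1.semilength + qr.2.semilength = n ∧ P qr.1 ∧ Q qr.2} =
      ∑ ij ∈ Finset.HasAntidiagonal.antidiagonal n,
        Nat.card {q : DyckWord // q.semilength = ij.1 ∧ P q} *
          Nat.card {r : DyckWord // r.semilength = ij.2 ∧ Q r} := by
  haveI : ∀ (ij : Finset.HasAntidiagonal.antidiagonal n),
      Finite ({q : DyckWord // q.semilength = (ij : ℕ × ℕ).1 ∧ P q} ×
        {r : DyckWord // r.semilength = (ij : ℕ × ℕ).2 ∧ Q r}) := by
    intro ij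
    haveI := finite_and (ij : ℕ × ℕ).1 P
    haveI := finite_and (ij : ℕ × ℕ).2 Q
    infer_instance
  have E : {qr : DyckWord × DyckWord //
        qr.1.semilength + qr.2.semilength = n ∧ P qr.1 ∧ Q qr.2} ≃
      Σ ij : Finset.HasAntidiagonal.antidiagonal n,
        ({q : DyckWord // q.semilength = (ij : ℕ × ℕ).1 ∧ P q} ×
         {r : DyckWord // r.semilength = (ij : ℕ × ℕ).2 ∧ Q r}) := {
    toFun := fun x => ⟨⟨(x.1.1.semilength, x.1.2.semilength),
        Finset.HasAntidiagonal.mem_antidiagonal.mpr x.2.1⟩,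
      (⟨x.1.1, rfl, x.2.2.1⟩, ⟨x.1.2, rfl, x.2.2.2⟩)⟩
    invFun := fun y => ⟨(y.2.1.1, y.2.2.1), by
      have hij := Finset.HasAntidiagonal.mem_antidiagonal.mp y.1.2
      have h1 := y.2.1.2.1
      have h2 := y.2.2.2.1
      exact ⟨by rw [h1, h2]; exact hij, y.2.1.2.2, y.2.2.2.2⟩⟩
    left_inv := fun x => Subtype.ext rfl
    right_inv := fun y => by
      obtain ⟨⟨⟨i, j⟩, hij⟩, ⟨q, hq, hPq⟩, ⟨r, hr, hQr⟩⟩ := y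
      dsimp at hq hr
      subst hq; subst hr
      rfl }
  rw [Nat.card_congr E, nat_card_sigma, ← Finset.sum_coe_sort (Finset.HasAntidiagonal.antidiagonal n)]
  congr 1
  funext ij
  haveI := finite_and (ij : ℕ × ℕ).1 P
  haveI := finite_and (ij : ℕ × ℕ).2 Q
  rw [Nat.card_prod]

/-- counting functions -/
noncomputable def fc (n : ℕ) : ℕ := Nat.card {p : DyckWord // p.semilength = n ∧ R p}
noncomputable def bc (n : ℕ) : ℕ :=
  Nat.card {p : DyckWord // p.semilength = n ∧ (R p ∧ lastOK p)}

lemma lastOK_zero : lastOK 0 := by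
  intro v hv
  rw [W_zero, valleyLevels_nil] at hv
  cases hv

lemma fc_zero : fc 0 = 1 := by
  rw [fc, Nat.card_eq_one_iff_unique]
  constructor
  · constructor
    intro a b
    apply Subtype.ext
    rw [semilength_eq_zero_iff.mp a.2.1, semilength_eq_zero_iff.mp b.2.1]
  · exact ⟨0, rfl, R_zero⟩

lemma bc_zero : bc 0 = 1 := by
  rw [bc, Nat.card_eq_one_iff_unique]
  constructor
  · constructor
    intro a b
    apply Subtype.ext
    rw [semilength_eq_zero_iff.mp a.2.1, semilength_eq_zero_iff.mp b.2.1]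
  · exact ⟨0, rfl, R_zero, lastOK_zero⟩

/-- the valley-free words -/
def Nw : ℕ → DyckWord
  | 0 => 0
  | n + 1 => (Nw n).nest

lemma sl_Nw (n : ℕ) : (Nw n).semilength = n := by
  induction n with
  | zero => rfl
  | succ n ih => rw [Nw, DyckWord.semilength_nest, ih]

lemma valleys_Nw (n : ℕ) : valleyLevels (W (Nw n)) = [] := by
  induction n with
  | zero => rw [show Nw 0 = 0 from rfl, W_zero, valleyLevels_nil]
  | succ n ih =>
    have : Nw (n+1) = (Nw n).nest + 0 := by rw [add_zero]; rfl
    rw [this, valleys_decomp, if_pos rfl, ih]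
    simp

lemma eq_Nw : ∀ (n : ℕ) (p : DyckWord), p.semilength = n → valleyLevels (W p) = [] →
    p = Nw n := by
  intro n
  induction n using Nat.strong_induction_on with
  | _ n ih =>
  intro p hsl hv
  rcases Nat.eq_zero_or_pos n with rfl | hn
  · rw [show Nw 0 = 0 from rfl]; exact semilength_eq_zero_iff.mp hsl
  · have hp0 : p ≠ 0 := by
      intro h
      rw [h] at hsl
      have h0 : (0:DyckWord).semilength = 0 := rfl
      omega
    have hdec := DyckWord.nest_insidePart_add_outsidePart hp0
    have hout : p.outsidePart = 0 := by
      by_contra hout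
      have := valleys_decomp p.insidePart p.outsidePart
      rw [hdec, if_neg hout, hv] at this
      exact absurd this.symm (by simp)
    have hv2 : valleyLevels (W p.insidePart) = [] := by
      have := valleys_decomp p.insidePart p.outsidePart
      rw [hdec, hout, if_pos rfl, List.append_nil, hv] at this
      exact List.map_eq_nil_iff.mp this.symm
    have hsl2 := DyckWord.semilength_insidePart_add_semilength_outsidePart_add_one hp0
    rw [hout] at hsl2
    have hsl3 : p.insidePart.semilength = n - 1 := by
      rw [hsl] at hsl2
      have : (0 : DyckWord).semilength = 0 := rfl
      omega
    have := ih (n-1) (by omega) p.insidePart hsl3 hv2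
    obtain ⟨m, rfl⟩ : ∃ m, n = m + 1 := ⟨n - 1, by omega⟩
    rw [← hdec, hout, this, add_zero]
    simp only [Nat.add_sub_cancel]
    rfl

lemma card_vfree (n : ℕ) :
    Nat.card {p : DyckWord // p.semilength = n ∧ valleyLevels (W p) = []} = 1 := by
  rw [Nat.card_eq_one_iff_unique]
  constructor
  · constructor
    intro a b
    apply Subtype.ext
    rw [eq_Nw n a.1 a.2.1 a.2.2, eq_Nw n b.1 b.2.1 b.2.2]
  · exact ⟨Nw n, sl_Nw n, valleys_Nw n⟩

-- CHUNK 5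
lemma sl_zero' : (0 : DyckWord).semilength = 0 := rfl

lemma succ_ne_zero' {p : DyckWord} {n : ℕ} (h : p.semilength = n + 1) : p ≠ 0 := by
  intro h0
  rw [h0, sl_zero'] at h
  omega

/-- decomposition equivalence for `R` -/
noncomputable def decompF (n : ℕ) : {p : DyckWord // p.semilength = n + 1 ∧ R p} ≃
    {qr : DyckWord × DyckWord // qr.1.semilength + qr.2.semilength = n ∧
      (R qr.1 ∧ R qr.2 ∧ (qr.2 = 0 ∨ lastOK qr.1))} where
  toFun x := ⟨(x.1.insidePart, x.1.outsidePart), by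
    have h0 : x.1 ≠ 0 := succ_ne_zero' x.2.1
    have hsl := DyckWord.semilength_insidePart_add_semilength_outsidePart_add_one h0
    have hr : R (x.1.insidePart.nest + x.1.outsidePart) := by
      rw [DyckWord.nest_insidePart_add_outsidePart h0]; exact x.2.2
    refine ⟨?_, (restricted_decomp _ _).mp hr⟩
    show x.1.insidePart.semilength + x.1.outsidePart.semilength = n
    have := x.2.1
    omega⟩
  invFun y := ⟨y.1.1.nest + y.1.2, by
    refine ⟨?_, (restricted_decomp _ _).mpr y.2.2⟩
    rw [DyckWord.semilength_add, DyckWord.semilength_nest]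
    have := y.2.1
    omega⟩
  left_inv x := Subtype.ext (DyckWord.nest_insidePart_add_outsidePart (succ_ne_zero' x.2.1))
  right_inv y := by
    apply Subtype.ext
    have h1 : (y.1.1.nest + y.1.2).insidePart = y.1.1 := by
      rw [DyckWord.insidePart_add (DyckWord.nest_ne_zero), DyckWord.insidePart_nest]
    have h2 : (y.1.1.nest + y.1.2).outsidePart = y.1.2 := by
      rw [DyckWord.outsidePart_add (DyckWord.nest_ne_zero), DyckWord.outsidePart_nest, zero_add]
    exact Prod.ext h1 h2

/-- decomposition equivalence for `R ∧ lastOK` -/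
noncomputable def decompB (n : ℕ) :
    {p : DyckWord // p.semilength = n + 1 ∧ (R p ∧ lastOK p)} ≃
    {qr : DyckWord × DyckWord // qr.1.semilength + qr.2.semilength = n ∧
      (R qr.1 ∧ R qr.2 ∧ (qr.2 = 0 ∨ lastOK qr.1) ∧
        (if qr.2 = 0 then valleyLevels (W qr.1) = [] else lastOK qr.2))} where
  toFun x := ⟨(x.1.insidePart, x.1.outsidePart), by
    have h0 : x.1 ≠ 0 := succ_ne_zero' x.2.1
    have hsl := DyckWord.semilength_insidePart_add_semilength_outsidePart_add_one h0
    have hdec := DyckWord.nest_insidePart_add_outsidePart h0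
    have hr : R (x.1.insidePart.nest + x.1.outsidePart) := by
      rw [hdec]; exact x.2.2.1
    have hlast : lastOK (x.1.insidePart.nest + x.1.outsidePart) := by
      rw [hdec]; exact x.2.2.2
    obtain ⟨hRq, hRr, hor⟩ := (restricted_decomp _ _).mp hr
    refine ⟨by
      show x.1.insidePart.semilength + x.1.outsidePart.semilength = n
      have := x.2.1
      omega, hRq, hRr, hor, ?_⟩
    by_cases h : x.1.outsidePart = 0
    · rw [if_pos h]
      rw [h] at hlast
      exact (lastOK_decomp_zero _).mp hlast
    · rw [if_neg h]
      exact (lastOK_decomp_ne _ _ h).mp hlast⟩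
  invFun y := ⟨y.1.1.nest + y.1.2, by
    obtain ⟨hsl, hRq, hRr, hor, hif⟩ := y.2
    refine ⟨?_, (restricted_decomp _ _).mpr ⟨hRq, hRr, hor⟩, ?_⟩
    · rw [DyckWord.semilength_add, DyckWord.semilength_nest]
      omega
    · by_cases h : y.1.2 = 0
      · rw [if_pos h] at hif
        rw [h]
        exact (lastOK_decomp_zero _).mpr hif
      · rw [if_neg h] at hif
        exact (lastOK_decomp_ne _ _ h).mpr hif⟩
  left_inv x := Subtype.ext (DyckWord.nest_insidePart_add_outsidePart (succ_ne_zero' x.2.1))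
  right_inv y := by
    apply Subtype.ext
    have h1 : (y.1.1.nest + y.1.2).insidePart = y.1.1 := by
      rw [DyckWord.insidePart_add (DyckWord.nest_ne_zero), DyckWord.insidePart_nest]
    have h2 : (y.1.1.nest + y.1.2).outsidePart = y.1.2 := by
      rw [DyckWord.outsidePart_add (DyckWord.nest_ne_zero), DyckWord.outsidePart_nest, zero_add]
    exact Prod.ext h1 h2

lemma card_fc_ne (j : ℕ) :
    Nat.card {r : DyckWord // r.semilength = j ∧ (R r ∧ r ≠ 0)} =
      if j = 0 then 0 else fc j := by
  rcases j with _ | m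
  · rw [if_pos rfl]
    haveI : IsEmpty {r : DyckWord // r.semilength = 0 ∧ (R r ∧ r ≠ 0)} :=
      ⟨fun x => x.2.2.2 (semilength_eq_zero_iff.mp x.2.1)⟩
    exact Nat.card_of_isEmpty
  · rw [if_neg (by omega), fc]
    apply Nat.card_congr
    apply Equiv.subtypeEquivRight
    intro r
    constructor
    · rintro ⟨h1, h2, -⟩; exact ⟨h1, h2⟩
    · rintro ⟨h1, h2⟩; exact ⟨h1, h2, succ_ne_zero' h1⟩

lemma card_bc_ne (j : ℕ) :
    Nat.card {r : DyckWord // r.semilength = j ∧ ((R r ∧ lastOK r) ∧ r ≠ 0)} =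
      if j = 0 then 0 else bc j := by
  rcases j with _ | m
  · rw [if_pos rfl]
    haveI : IsEmpty {r : DyckWord // r.semilength = 0 ∧ ((R r ∧ lastOK r) ∧ r ≠ 0)} :=
      ⟨fun x => x.2.2.2 (semilength_eq_zero_iff.mp x.2.1)⟩
    exact Nat.card_of_isEmpty
  · rw [if_neg (by omega), bc]
    apply Nat.card_congr
    apply Equiv.subtypeEquivRight
    intro r
    constructor
    · rintro ⟨h1, h2, -⟩; exact ⟨h1, h2⟩
    · rintro ⟨h1, h2⟩; exact ⟨h1, h2, succ_ne_zero' h1⟩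

lemma fc_succ (n : ℕ) : fc (n + 1) =
    fc n + ∑ ij ∈ Finset.HasAntidiagonal.antidiagonal n, bc ij.1 * (if ij.2 = 0 then 0 else fc ij.2) := by
  classical
  rw [fc, Nat.card_congr (decompF n)]
  haveI := finite_pairs n (fun qr => R qr.1 ∧ R qr.2 ∧ (qr.2 = 0 ∨ lastOK qr.1))
  rw [nat_card_split _ (fun qr => qr.2 = 0)]
  congr 1
  · -- r = 0 branch gives fc n
    rw [fc]
    apply Nat.card_congr
    exact {
      toFun := fun x => ⟨x.1.1, by
        have h0 := x.2.2
        have hsl := x.2.1.1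
        rw [h0, sl_zero'] at hsl
        exact ⟨by omega, x.2.1.2.1⟩⟩
      invFun := fun q => ⟨(q.1, 0), ⟨⟨by
        show q.1.semilength + (0:DyckWord).semilength = n
        rw [sl_zero']
        have := q.2.1
        omega, q.2.2, R_zero, Or.inl rfl⟩, rfl⟩⟩
      left_inv := fun x => Subtype.ext (Prod.ext rfl x.2.2.symm)
      right_inv := fun q => Subtype.ext rfl }
  · -- r ≠ 0 branch: convolution
    have e := Equiv.subtypeEquivRight (p := fun qr : DyckWord × DyckWord =>
        (qr.1.semilength + qr.2.semilength = n ∧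
          (R qr.1 ∧ R qr.2 ∧ (qr.2 = 0 ∨ lastOK qr.1))) ∧ ¬ qr.2 = 0)
      (q := fun qr : DyckWord × DyckWord =>
        qr.1.semilength + qr.2.semilength = n ∧ (R qr.1 ∧ lastOK qr.1) ∧ (R qr.2 ∧ qr.2 ≠ 0))
      (fun qr => by
        constructor
        · rintro ⟨⟨hsl, hRq, hRr, hor⟩, hne⟩
          exact ⟨hsl, ⟨hRq, hor.resolve_left hne⟩, hRr, hne⟩
        · rintro ⟨hsl, ⟨hRq, hOK⟩, hRr, hne⟩
          exact ⟨⟨hsl, hRq, hRr, Or.inr hOK⟩, hne⟩)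
    rw [Nat.card_congr e, card_pairs n (fun q => R q ∧ lastOK q) (fun r => R r ∧ r ≠ 0)]
    apply Finset.sum_congr rfl
    intro ij _
    rw [card_fc_ne]
    rfl

lemma bc_succ (n : ℕ) : bc (n + 1) =
    1 + ∑ ij ∈ Finset.HasAntidiagonal.antidiagonal n, bc ij.1 * (if ij.2 = 0 then 0 else bc ij.2) := by
  classical
  rw [bc, Nat.card_congr (decompB n)]
  haveI := finite_pairs n (fun qr => R qr.1 ∧ R qr.2 ∧ (qr.2 = 0 ∨ lastOK qr.1) ∧
    (if qr.2 = 0 then valleyLevels (W qr.1) = [] else lastOK qr.2))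
  rw [nat_card_split _ (fun qr => qr.2 = 0)]
  congr 1
  · -- r = 0 branch: valley-free, card 1
    rw [← card_vfree n]
    apply Nat.card_congr
    exact {
      toFun := fun x => ⟨x.1.1, by
        have h0 := x.2.2
        have hsl := x.2.1.1
        rw [h0, sl_zero'] at hsl
        have hif := x.2.1.2.2.2.2
        rw [if_pos h0] at hif
        exact ⟨by omega, hif⟩⟩
      invFun := fun q => ⟨(q.1, 0), ⟨by
        refine ⟨by
          show q.1.semilength + (0:DyckWord).semilength = n
          rw [sl_zero']
          have := q.2.1
          omega, ?_, R_zero, Or.inl rfl, ?_⟩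
        · rw [R, RestrictedD, q.2.2]
          exact List.isChain_nil
        · show (if (0:DyckWord) = 0 then valleyLevels (W q.1) = [] else lastOK 0)
          rw [if_pos rfl]
          exact q.2.2, rfl⟩⟩
      left_inv := fun x => Subtype.ext (Prod.ext rfl x.2.2.symm)
      right_inv := fun q => Subtype.ext rfl }
  · -- r ≠ 0 branch
    have e := Equiv.subtypeEquivRight (p := fun qr : DyckWord × DyckWord =>
        (qr.1.semilength + qr.2.semilength = n ∧
          (R qr.1 ∧ R qr.2 ∧ (qr.2 = 0 ∨ lastOK qr.1) ∧
            (if qr.2 = 0 then valleyLevels (W qr.1) = [] else lastOK qr.2))) ∧ ¬ qr.2 = 0)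
      (q := fun qr : DyckWord × DyckWord =>
        qr.1.semilength + qr.2.semilength = n ∧ (R qr.1 ∧ lastOK qr.1) ∧
          ((R qr.2 ∧ lastOK qr.2) ∧ qr.2 ≠ 0))
      (fun qr => by
        constructor
        · rintro ⟨⟨hsl, hRq, hRr, hor, hif⟩, hne⟩
          rw [if_neg hne] at hif
          exact ⟨hsl, ⟨hRq, hor.resolve_left hne⟩, ⟨hRr, hif⟩, hne⟩
        · rintro ⟨hsl, ⟨hRq, hOK⟩, ⟨hRr, hOKr⟩, hne⟩
          exact ⟨⟨hsl, hRq, hRr, Or.inr hOK, by rw [if_neg hne]; exact hOKr⟩, hne⟩)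
    rw [Nat.card_congr e,
      card_pairs n (fun q => R q ∧ lastOK q) (fun r => (R r ∧ lastOK r) ∧ r ≠ 0)]
    apply Finset.sum_congr rfl
    intro ij _
    rw [card_bc_ne]
    rfl

/-- link to `dDyckCount` -/
lemma dDyckCount_eq (n : ℕ) : dDyckCount (-1) n = fc n := by
  rw [dDyckCount, ← Nat.card_coe_set_eq, fc]
  apply Nat.card_congr
  apply Equiv.symm
  refine Equiv.ofBijective
    (fun x => ⟨W x.1, by exact ⟨isDyck_W _, by rw [semilength_W]; exact x.2.1, x.2.2⟩⟩)
    ⟨?_, ?_⟩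
  · intro a b h
    apply Subtype.ext
    apply W_injective
    exact congrArg Subtype.val h
  · rintro ⟨l, hl⟩
    have hy : IsDyck l ∧ semilength l = n ∧ RestrictedD (-1) l := hl
    refine ⟨⟨toDW l hy.1, ?_, ?_⟩, ?_⟩
    · rw [← semilength_W, W_toDW l hy.1]
      exact hy.2.1
    · rw [R, RestrictedD, W_toDW l hy.1]
      exact hy.2.2
    · exact Subtype.ext (W_toDW l hy.1)

end DAux

open PowerSeries

/-- The generating function `L(x) = Σ_{n ≥ 1} r(n) x^n` of the numbers of
`(-1)`-Dyck paths of semi-length `n`. -/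
noncomputable def Lgf : PowerSeries ℚ :=
  PowerSeries.mk fun n => if n = 0 then 0 else (dDyckCount (-1) n : ℚ)

namespace DAux

/-- GF of `bc` -/
noncomputable def Bs : PowerSeries ℚ := PowerSeries.mk fun n => (bc n : ℚ)

/-- all-ones series -/
noncomputable def O : PowerSeries ℚ := PowerSeries.mk fun _ => (1 : ℚ)

lemma coeff_Bs (n : ℕ) : coeff n Bs = (bc n : ℚ) := coeff_mk n _

lemma coeff_Lgf (n : ℕ) : coeff n Lgf = if n = 0 then 0 else (fc n : ℚ) := by
  rw [Lgf, coeff_mk, dDyckCount_eq]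

lemma coeff_Bs_sub_one (j : ℕ) :
    coeff j (Bs - 1) = if j = 0 then 0 else (bc j : ℚ) := by
  rw [map_sub]
  cases j with
  | zero => simp [coeff_Bs, bc_zero, coeff_zero_eq_constantCoeff]
  | succ m => simp [coeff_Bs, coeff_one]

lemma hE2 : Bs = O + X * (Bs * (Bs - 1)) := by
  ext n
  rw [map_add]
  cases n with
  | zero =>
    rw [coeff_Bs, bc_zero, coeff_zero_X_mul]
    simp [O, coeff_mk]
  | succ n =>
    rw [coeff_Bs, bc_succ n, coeff_succ_X_mul, coeff_mul]
    have hsum : ∑ ij ∈ Finset.HasAntidiagonal.antidiagonal n, coeff ij.1 Bs * coeff ij.2 (Bs - 1) =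
        ∑ ij ∈ Finset.HasAntidiagonal.antidiagonal n,
          (bc ij.1 : ℚ) * (if ij.2 = 0 then 0 else (bc ij.2 : ℚ)) := by
      apply Finset.sum_congr rfl
      intro ij _
      rw [coeff_Bs, coeff_Bs_sub_one]
    rw [hsum]
    show ((1 + ∑ ij ∈ Finset.HasAntidiagonal.antidiagonal n, bc ij.1 * (if ij.2 = 0 then 0 else bc ij.2) : ℕ) : ℚ) = _
    push_cast
    simp only [O, coeff_mk]

lemma hE1 : Lgf = X * (1 + Lgf) + X * (Bs * Lgf) := by
  ext n
  rw [map_add]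
  cases n with
  | zero =>
    rw [coeff_Lgf, coeff_zero_X_mul, coeff_zero_X_mul]
    simp
  | succ n =>
    rw [coeff_Lgf, coeff_succ_X_mul, coeff_succ_X_mul, coeff_mul]
    have hsum : ∑ ij ∈ Finset.HasAntidiagonal.antidiagonal n, coeff ij.1 Bs * coeff ij.2 Lgf =
        ∑ ij ∈ Finset.HasAntidiagonal.antidiagonal n,
          (bc ij.1 : ℚ) * (if ij.2 = 0 then 0 else (fc ij.2 : ℚ)) := by
      apply Finset.sum_congr rfl
      intro ij _
      rw [coeff_Bs, coeff_Lgf]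
    rw [hsum, if_neg (Nat.succ_ne_zero n), fc_succ n, map_add, coeff_Lgf]
    have h1 : coeff n (1 : PowerSeries ℚ) + (if n = 0 then (0:ℚ) else (fc n : ℚ)) = (fc n : ℚ) := by
      cases n with
      | zero => simp [fc_zero]
      | succ m => simp [coeff_one]
    push_cast
    rw [h1]

lemma hO : (1 - X) * O = 1 := by
  ext n
  rw [sub_mul, one_mul, map_sub]
  cases n with
  | zero =>
    simp [O, coeff_mk, coeff_zero_X_mul, coeff_zero_eq_constantCoeff]
  | succ n =>
    simp [O, coeff_mk, coeff_succ_X_mul, coeff_one]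

lemma hK : ((1 : PowerSeries ℚ) - X - X * Bs) * Lgf = X := by
  linear_combination hE1

lemma hB : ((1 : PowerSeries ℚ) - X) * Bs = 1 + X * (1 - X) * (Bs * (Bs - 1)) := by
  linear_combination (((1 : PowerSeries ℚ) - X)) * hE2 + hO

lemma unitK : IsUnit (((1 : PowerSeries ℚ) - X - X * Bs)) := by
  rw [PowerSeries.isUnit_iff_constantCoeff]
  have : constantCoeff ((1 : PowerSeries ℚ) - X - X * Bs) = 1 := by
    simp [map_sub]
  rw [this]
  exact isUnit_one

end DAux

open DAux in
/-- `L(x) = (-1 + 4x - 3x² + √(1-4x+2x²+x⁴)) / (2(1-4x+2x²))`, stated as the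
squared (algebraic) identity in `ℚ[[x]]`. -/
theorem Lgf_algebraic_equation :
    (2 * (1 - 4 * X + 2 * X ^ 2) * Lgf + 1 - 4 * X + 3 * (X : PowerSeries ℚ) ^ 2) ^ 2 =
      1 - 4 * X + 2 * X ^ 2 + X ^ 4 := by
  have hk := hK
  have hb := hB
  apply (unitK.pow 2).mul_left_cancel
  linear_combination
    (2 * ((1:PowerSeries ℚ) - 4*X + 2*X^2) *
      (2 * (1 - 4*X + 2*X^2) * ((1 - X - X*Bs) * Lgf) + 2 * (1 - 4*X + 2*X^2) * X +
        2 * (1 - 4*X + 3*X^2) * (1 - X - X*Bs))) * hk +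
    (4 * ((1:PowerSeries ℚ) - 4*X + 2*X^2) * X^2) * hb
end

section
/- The total area of all Dyck paths of semi-length n equals 4^n − binom(2n+1, n). -/
namespace DP

def diff (l : List Bool) : ℤ := (l.count true : ℤ) - l.count false

@[simp] lemma diff_nil : diff [] = 0 := by simp [diff]

lemma diff_cons (b : Bool) (l : List Bool) : diff (b :: l) = stepVal b + diff l := by
  cases b <;> simp [diff, stepVal, List.count_cons] <;> push_cast <;> ring

lemma diff_append (l₁ l₂ : List Bool) : diff (l₁ ++ l₂) = diff l₁ + diff l₂ := by
  simp [diff, List.count_append]; push_cast; ring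

lemma length_eq (l : List Bool) : l.length = l.count true + l.count false := by
  induction l with
  | nil => simp
  | cons b t ih =>
    cases b <;> simp only [List.count_cons, List.length_cons, ih] <;> simp <;> omega

lemma foldl_step (a : ℤ) (l : List Bool) :
    l.foldl (fun h b => h + stepVal b) a = a + diff l := by
  induction l generalizing a with
  | nil => simp
  | cons b t ih => rw [List.foldl_cons, ih, diff_cons]; ring

lemma scanl_append (f : ℤ → Bool → ℤ) (a : ℤ) (l₁ l₂ : List Bool) :
    (l₁ ++ l₂).scanl f a = l₁.scanl f a ++ (l₂.scanl f (l₁.foldl f a)).tail := by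
  induction l₁ generalizing a with
  | nil =>
    cases l₂ with
    | nil => simp
    | cons b t => simp [List.scanl_cons]
  | cons b t ih => simp [List.scanl_cons, ih]

lemma scanl_shift (a c : ℤ) (l : List Bool) :
    l.scanl (fun h b => h + stepVal b) (a + c) =
      (l.scanl (fun h b => h + stepVal b) a).map (· + c) := by
  induction l generalizing a with
  | nil => simp
  | cons b t ih =>
    simp only [List.scanl_cons, List.map_append, List.map_cons]
    rw [show a + c + stepVal b = (a + stepVal b) + c by ring, ih]

lemma mem_scanl_iff (a h : ℤ) (l : List Bool) :
    h ∈ l.scanl (fun h b => h + stepVal b) a ↔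
      ∃ l₁ l₂, l = l₁ ++ l₂ ∧ h = a + diff l₁ := by
  induction l generalizing a with
  | nil =>
    simp only [List.scanl_nil, List.mem_singleton]
    constructor
    · rintro rfl; exact ⟨[], [], by simp⟩
    · rintro ⟨l₁, l₂, h1, rfl⟩
      have : l₁ = [] := by have := congrArg List.length h1; simp at this; exact List.eq_nil_of_length_eq_zero (by omega)
      simp [this]
  | cons b t ih =>
    simp only [List.scanl_cons, List.singleton_append, List.mem_cons, ih]
    constructor
    · rintro (rfl | ⟨t₁, t₂, rfl, rfl⟩)
      · exact ⟨[], b :: t, by simp⟩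
      · exact ⟨b :: t₁, t₂, by simp, by rw [diff_cons]; ring⟩
    · rintro ⟨l₁, l₂, h1, rfl⟩
      cases l₁ with
      | nil => left; simp
      | cons c t₁ =>
        right
        rw [List.cons_append] at h1
        injection h1 with hb ht
        subst hb
        exact ⟨t₁, l₂, ht, by rw [diff_cons]; ring⟩

lemma mem_heights_iff (h : ℤ) (l : List Bool) :
    h ∈ heights l ↔ ∃ l₁ l₂, l = l₁ ++ l₂ ∧ h = diff l₁ := by
  rw [heights, mem_scanl_iff]; simp

lemma isDyck_iff (p : List Bool) :
    IsDyck p ↔ diff p = 0 ∧ ∀ l₁ l₂, p = l₁ ++ l₂ → 0 ≤ diff l₁ := by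
  constructor
  · rintro ⟨h1, h2⟩
    refine ⟨by simp [diff, h1], fun l₁ l₂ he => h2 _ ((mem_heights_iff _ _).2 ⟨l₁, l₂, he, rfl⟩)⟩
  · rintro ⟨h1, h2⟩
    refine ⟨?_, fun h hh => ?_⟩
    · have := h1; simp [diff, sub_eq_zero] at this; exact_mod_cast this
    · obtain ⟨l₁, l₂, he, rfl⟩ := (mem_heights_iff _ _).1 hh
      exact h2 _ _ he



lemma heights_UPDQ (P Q : List Bool) (hP : diff P = 0) :
    heights (true :: P ++ false :: Q) =
      0 :: ((heights P).map (· + 1) ++ heights Q) := by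
  have h1 : heights (true :: (P ++ false :: Q)) =
      0 :: ((P ++ false :: Q).scanl (fun h b => h + stepVal b) 1) := by
    rw [heights, List.scanl_cons]; norm_num [stepVal]
  rw [show (true :: P ++ false :: Q) = true :: (P ++ false :: Q) by simp, h1,
    scanl_append, foldl_step, hP]
  norm_num
  rw [show (1 + stepVal false) = 0 by norm_num [stepVal]]
  congr 1
  have := scanl_shift 0 1 P
  norm_num at this
  rw [this, heights]

lemma length_heights (p : List Bool) : (heights p).length = p.length + 1 :=
  List.length_scanl

lemma sum_map_add_one (l : List ℤ) : (l.map (· + 1)).sum = l.sum + l.length := by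
  induction l with
  | nil => simp
  | cons a t ih => simp [ih]; push_cast; ring

lemma pathArea_UPDQ (P Q : List Bool) (hP : diff P = 0) :
    pathArea (true :: P ++ false :: Q) =
      pathArea P + (P.length + 1) + pathArea Q := by
  rw [pathArea, heights_UPDQ P Q hP]
  simp only [List.sum_cons, List.sum_append]
  rw [sum_map_add_one, length_heights]
  simp only [pathArea]
  push_cast
  ring

lemma isDyck_UPDQ (P Q : List Bool) (hP : IsDyck P) (hQ : IsDyck Q) :
    IsDyck (true :: P ++ false :: Q) := by
  have hdP : diff P = 0 := ((isDyck_iff P).1 hP).1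
  constructor
  · simp only [List.cons_append, List.count_cons, List.count_append]
    have := hP.1; have := hQ.1
    simp_all
    omega
  · intro h hh
    rw [heights_UPDQ P Q hdP] at hh
    simp only [List.mem_cons, List.mem_append, List.mem_map] at hh
    rcases hh with rfl | ⟨x, hx, rfl⟩ | hx
    · exact le_refl 0
    · have := hP.2 x hx; omega
    · exact hQ.2 _ hx

lemma length_UPDQ (P Q : List Bool) : (true :: P ++ false :: Q).length = P.length + Q.length + 2 := by
  simp; omega

lemma dyck_length (P : List Bool) (h : IsDyck P) : P.length = 2 * semilength P := by
  rw [length_eq, semilength, h.1]; ring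



lemma isDyck_iff' (p : List Bool) :
    IsDyck p ↔ diff p = 0 ∧ ∀ i, 0 ≤ diff (p.take i) := by
  rw [isDyck_iff]
  refine and_congr_right fun _ => ⟨fun h i => h _ _ (List.take_append_drop i p).symm,
    fun h l₁ l₂ he => ?_⟩
  have : l₁ = p.take l₁.length := by rw [he, List.take_left]
  rw [this]; exact h _

lemma take_add' {α : Type*} (l : List α) (m n : ℕ) :
    l.take (m + n) = l.take m ++ (l.drop m).take n := by
  rw [List.take_drop]
  conv_lhs => rw [← List.take_append_drop m (l.take (m + n))]
  congr 1
  rw [List.take_take, min_eq_left (Nat.le_add_right m n)]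

lemma prefix_ne (P P' Q Q' : List Bool) (hP : IsDyck P) (hP' : IsDyck P')
    (hlt : P.length < P'.length) (he : P ++ false :: Q = P' ++ false :: Q') : False := by
  have h1 : (P ++ false :: Q).take (P.length + 1) = P ++ [false] := by
    rw [show P.length + 1 = P.length + 1 from rfl, take_add' _ P.length 1, List.take_left,
      List.drop_left]
    rfl
  have h2 : (P' ++ false :: Q').take (P.length + 1) = P'.take (P.length + 1) := by
    rw [List.take_append_of_le_length (by omega)]
  have h3 : P ++ [false] = P'.take (P.length + 1) := by rw [← h1, he, h2]
  have h4 := ((isDyck_iff' P').1 hP').2 (P.length + 1)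
  rw [← h3, diff_append] at h4
  have h5 : diff P = 0 := ((isDyck_iff' P).1 hP).1
  rw [h5] at h4
  simp [diff, stepVal] at h4

lemma decomp_unique (P P' Q Q' : List Bool) (hP : IsDyck P) (hP' : IsDyck P')
    (he : P ++ false :: Q = P' ++ false :: Q') : P = P' ∧ Q = Q' := by
  rcases lt_trichotomy P.length P'.length with h | h | h
  · exact absurd (prefix_ne P P' Q Q' hP hP' h he) (by simp)
  · have := List.append_inj he (by omega)
    exact ⟨this.1, by injection this.2⟩
  · exact absurd (prefix_ne P' P Q' Q hP' hP h he.symm) (by simp)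

lemma exists_decomp (p : List Bool) (hp : IsDyck p) (hne : p ≠ []) :
    ∃ P Q, IsDyck P ∧ IsDyck Q ∧ p = true :: P ++ false :: Q := by
  rw [isDyck_iff'] at hp
  obtain ⟨hbal, hpre⟩ := hp
  -- head is true
  obtain ⟨b, t, rfl⟩ : ∃ b t, p = b :: t := by
    cases p with
    | nil => exact absurd rfl hne
    | cons b t => exact ⟨b, t, rfl⟩
  have hb : b = true := by
    by_contra h
    have hb : b = false := by simpa using h
    have := hpre 1
    rw [hb] at this
    simp [diff, stepVal, List.take_succ_cons] at this
  subst hb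
  have hbalt : diff t = -1 := by
    rw [diff_cons] at hbal; simp [stepVal] at hbal; linarith
  have hpret : ∀ i, -1 ≤ diff (t.take i) := by
    intro i
    have := hpre (i + 1)
    rw [List.take_succ_cons, diff_cons] at this
    simp [stepVal] at this
    linarith
  have hex : ∃ k, diff (t.take k) = -1 := ⟨t.length, by simpa using hbalt⟩
  obtain ⟨k, hkdiff, hmin⟩ :
      ∃ k, diff (t.take k) = -1 ∧ ∀ i, i < k → diff (t.take i) ≠ -1 :=
    ⟨Nat.find hex, Nat.find_spec hex, fun i h2 => Nat.find_min hex h2⟩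
  have hkle : k ≤ t.length := by
    by_contra h
    push_neg at h
    exact hmin t.length h (by simpa using hbalt)
  obtain ⟨m, rfl⟩ : ∃ m, k = m + 1 := by
    refine ⟨k - 1, ?_⟩
    rcases Nat.eq_zero_or_pos k with h | h
    · exfalso; rw [h] at hkdiff; simp at hkdiff
    · omega
  have hmlt : m < t.length := by omega
  set x := t.get ⟨m, hmlt⟩ with hx
  have htake : t.take (m + 1) = t.take m ++ [x] := by
    rw [List.take_succ]
    congr 1
    rw [List.getElem?_eq_getElem hmlt]
    rfl
  have h3 : diff (t.take (m + 1)) = diff (t.take m) + stepVal x := by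
    rw [htake, diff_append, diff_cons, diff_nil]; ring
  have h1 : -1 ≤ diff (t.take m) := hpret _
  have h2 : diff (t.take m) ≠ -1 := hmin _ (by omega)
  have hd1 : diff (t.take m) = 0 ∧ x = false := by
    cases hgv : x with
    | true => exfalso; rw [hgv] at h3; simp [stepVal] at h3; omega
    | false => refine ⟨?_, rfl⟩; rw [hgv] at h3; simp [stepVal] at h3; omega
  obtain ⟨hdm, hxf⟩ := hd1
  refine ⟨t.take m, t.drop (m + 1), ?_, ?_, ?_⟩
  · rw [isDyck_iff']
    refine ⟨hdm, fun i => ?_⟩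
    rcases le_or_gt i m with h | h
    · rw [List.take_take, min_eq_left h]
      have ha := hpret i
      have hb := hmin i (by omega)
      omega
    · rw [List.take_take, min_eq_right (by omega), hdm]
  · rw [isDyck_iff']
    constructor
    · have := diff_append (t.take (m + 1)) (t.drop (m + 1))
      rw [List.take_append_drop] at this
      omega
    · intro i
      have := hpret (m + 1 + i)
      rw [take_add' t (m + 1) i, diff_append] at this
      omega
  · rw [hxf] at htake
    conv_lhs => rw [← List.take_append_drop (m + 1) t, htake]
    simp



open scoped Classical

noncomputable def Dset (n : ℕ) : Finset (List Bool) :=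
  (Finset.univ.filter (fun f : Fin (2 * n) → Bool => IsDyck (List.ofFn f))).image List.ofFn

lemma ofFn_cast {α : Type*} (l : List α) {n : ℕ} (h : l.length = n) :
    List.ofFn (fun i : Fin n => l.get (Fin.cast h.symm i)) = l := by
  subst h
  simp only [Fin.cast_refl, Function.comp]
  exact List.ofFn_get l

lemma mem_Dset {n : ℕ} {p : List Bool} : p ∈ Dset n ↔ p.length = 2 * n ∧ IsDyck p := by
  simp only [Dset, Finset.mem_image, Finset.mem_filter, Finset.mem_univ, true_and]
  constructor
  · rintro ⟨f, hf, rfl⟩; exact ⟨List.length_ofFn, hf⟩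
  · rintro ⟨hl, hd⟩
    exact ⟨fun i => p.get (Fin.cast hl.symm i), by rw [ofFn_cast p hl]; exact hd,
      ofFn_cast p hl⟩

noncomputable def AD (n : ℕ) : ℤ := ∑ p ∈ Dset n, pathArea p
noncomputable def cD (n : ℕ) : ℤ := (Dset n).card

lemma Dset_succ (n : ℕ) :
    Dset (n + 1) = (Finset.range (n + 1)).biUnion
      (fun m => ((Dset m) ×ˢ (Dset (n - m))).image
        (fun pq => true :: pq.1 ++ false :: pq.2)) := by
  ext p
  simp only [Finset.mem_biUnion, Finset.mem_range, Finset.mem_image, Finset.mem_product,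
    mem_Dset]
  constructor
  · rintro ⟨hl, hd⟩
    have hne : p ≠ [] := by intro h; rw [h] at hl; simp at hl
    obtain ⟨P, Q, hP, hQ, rfl⟩ := exists_decomp p hd hne
    have hlP : P.length = 2 * semilength P := dyck_length P hP
    have hlQ : Q.length = 2 * semilength Q := dyck_length Q hQ
    rw [length_UPDQ] at hl
    refine ⟨semilength P, by omega, ⟨P, Q⟩, ⟨⟨hlP, hP⟩, ?_, hQ⟩, rfl⟩
    exact (show Q.length = 2 * (n - semilength P) by omega)
  · rintro ⟨m, hm, ⟨P, Q⟩, ⟨⟨hlP, hP⟩, hlQ, hQ⟩, rfl⟩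
    refine ⟨?_, isDyck_UPDQ P Q hP hQ⟩
    rw [length_UPDQ]; omega

lemma sum_Dset_succ (n : ℕ) (F : List Bool → ℤ) :
    ∑ p ∈ Dset (n + 1), F p =
      ∑ m ∈ Finset.range (n + 1), ∑ P ∈ Dset m, ∑ Q ∈ Dset (n - m),
        F (true :: P ++ false :: Q) := by
  rw [Dset_succ, Finset.sum_biUnion]
  · refine Finset.sum_congr rfl fun m _ => ?_
    rw [Finset.sum_image, Finset.sum_product]
    rintro ⟨P, Q⟩ hPQ ⟨P', Q'⟩ hPQ' he
    simp only [Finset.coe_product, Set.mem_prod, Finset.mem_coe, Finset.mem_product, mem_Dset] at hPQ hPQ'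
    injection he with _ he'
    obtain ⟨h1, h2⟩ := decomp_unique P P' Q Q' hPQ.1.2 hPQ'.1.2 he'
    simp [h1, h2]
  · intro m₁ h₁ m₂ h₂ hne
    simp only [Function.onFun]
    rw [Finset.disjoint_left]
    rintro p hp₁ hp₂
    simp only [Finset.mem_image, Finset.mem_product, mem_Dset] at hp₁ hp₂
    obtain ⟨⟨P₁, Q₁⟩, ⟨⟨hl₁, hd₁⟩, _⟩, he₁⟩ := hp₁
    obtain ⟨⟨P₂, Q₂⟩, ⟨⟨hl₂, hd₂⟩, _⟩, he₂⟩ := hp₂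
    rw [← he₂] at he₁
    injection he₁ with _ he'
    obtain ⟨h1, _⟩ := decomp_unique P₁ P₂ Q₁ Q₂ hd₁ hd₂ he'
    apply hne
    have e : P₁.length = P₂.length := by rw [h1]
    have e₁ : P₁.length = 2 * m₁ := hl₁
    have e₂ : P₂.length = 2 * m₂ := hl₂
    omega

lemma cD_succ (n : ℕ) :
    cD (n + 1) = ∑ m ∈ Finset.range (n + 1), cD m * cD (n - m) := by
  have := sum_Dset_succ n (fun _ => (1 : ℤ))
  simp only [Finset.sum_const, nsmul_eq_mul, mul_one] at this
  simpa [cD] using this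

lemma sum_expand (s t : Finset (List Bool)) (k : ℤ) :
    ∑ P ∈ s, ∑ Q ∈ t, (pathArea P + k + pathArea Q)
      = (t.card : ℤ) * ∑ P ∈ s, pathArea P + (s.card : ℤ) * (t.card : ℤ) * k
        + (s.card : ℤ) * ∑ Q ∈ t, pathArea Q := by
  have h : ∀ P ∈ s, ∑ Q ∈ t, (pathArea P + k + pathArea Q)
      = (t.card : ℤ) * (pathArea P + k) + ∑ Q ∈ t, pathArea Q := by
    intro P _
    rw [Finset.sum_add_distrib, Finset.sum_const, nsmul_eq_mul]
  rw [Finset.sum_congr rfl h, Finset.sum_add_distrib, Finset.sum_const, nsmul_eq_mul,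
    ← Finset.mul_sum, Finset.sum_add_distrib, Finset.sum_const, nsmul_eq_mul]
  ring

lemma AD_succ (n : ℕ) :
    AD (n + 1) = ∑ m ∈ Finset.range (n + 1),
      (AD m * cD (n - m) + cD m * AD (n - m) + (2 * m + 1) * (cD m * cD (n - m))) := by
  rw [AD, sum_Dset_succ]
  refine Finset.sum_congr rfl fun m hm => ?_
  have hinner : ∀ P ∈ Dset m, ∑ Q ∈ Dset (n - m), pathArea (true :: P ++ false :: Q)
      = ∑ Q ∈ Dset (n - m), (pathArea P + (2 * m + 1) + pathArea Q) := by
    intro P hP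
    refine Finset.sum_congr rfl fun Q hQ => ?_
    rw [mem_Dset] at hP
    rw [pathArea_UPDQ P Q ((isDyck_iff' P).1 hP.2).1, hP.1]
    push_cast
    ring
  rw [Finset.sum_congr rfl hinner, sum_expand]
  simp only [AD, cD]
  push_cast
  ring



lemma Dset_zero : Dset 0 = {[]} := by
  ext p
  rw [mem_Dset]
  simp only [Nat.mul_zero, Finset.mem_singleton, List.length_eq_zero_iff]
  constructor
  · rintro ⟨rfl, _⟩; rfl
  · rintro rfl
    refine ⟨rfl, rfl, fun h hh => ?_⟩
    simp [heights] at hh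
    omega

lemma AD_zero : AD 0 = 0 := by
  rw [AD, Dset_zero]
  simp [pathArea, heights]

lemma cD_zero : cD 0 = 1 := by rw [cD, Dset_zero]; simp

lemma cD_eq_catalan (n : ℕ) : cD n = (catalan n : ℤ) := by
  induction n using Nat.strong_induction_on with
  | _ n ih =>
    match n with
    | 0 => simp [cD_zero]
    | k + 1 =>
      rw [cD_succ, catalan_succ]
      rw [Fin.sum_univ_eq_sum_range (fun i => catalan i * catalan (k - i)) (k + 1)]
      push_cast
      refine Finset.sum_congr rfl fun m hm => ?_
      rw [Finset.mem_range] at hm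
      rw [ih m (by omega), ih (k - m) (by omega)]

lemma cat_rec (n : ℕ) : (n + 2) * catalan (n + 1) = (4 * n + 2) * catalan n := by
  have h1 := succ_mul_catalan_eq_centralBinom n
  have h2 := succ_mul_catalan_eq_centralBinom (n + 1)
  have h3 := Nat.succ_mul_centralBinom_succ n
  apply Nat.eq_of_mul_eq_mul_left (show 0 < n + 1 by omega)
  calc (n + 1) * ((n + 2) * catalan (n + 1))
      = (n + 1 + 1) * catalan (n + 1) * (n + 1) := by ring
    _ = (n + 1) * Nat.centralBinom (n + 1) := by rw [h2]; ring
    _ = 2 * (2 * n + 1) * Nat.centralBinom n := h3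
    _ = 2 * (2 * n + 1) * ((n + 1) * catalan n) := by rw [h1]
    _ = (n + 1) * ((4 * n + 2) * catalan n) := by ring

lemma choose_rec (n : ℕ) :
    4 * (2 * n + 1).choose n = (2 * n + 3).choose (n + 1) + catalan (n + 1) := by
  set X := (2 * n + 1).choose n with hX
  have hC : (2 * n + 2).choose (n + 1) = 2 * X := by
    have hs : (2 * n + 1).choose (n + 1) = X := by
      rw [hX, ← Nat.choose_symm (show n + 1 ≤ 2 * n + 1 by omega)]
      congr 1
      omega
    rw [show 2 * n + 2 = (2 * n + 1) + 1 from rfl, Nat.choose_succ_succ, hs, hX]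
    ring
  have hD : (n + 2) * catalan (n + 1) = 2 * X := by
    have := succ_mul_catalan_eq_centralBinom (n + 1)
    rw [Nat.centralBinom] at this
    rw [show n + 1 + 1 = n + 2 from rfl] at this
    rw [this, show 2 * (n + 1) = 2 * n + 2 by ring, hC]
  have hA : (2 * n + 3) * (2 * n + 2).choose n = (2 * n + 3).choose (n + 1) * (n + 1) := by
    have := Nat.add_one_mul_choose_eq (2 * n + 2) n
    simpa using this
  have hB : (2 * n + 2).choose (n + 1) * (n + 1) = (2 * n + 2).choose n * (n + 2) := by
    have := Nat.choose_succ_right_eq (2 * n + 2) n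
    rw [this]
    congr 1
    omega
  have hE : (n + 2) * (2 * n + 3).choose (n + 1) = 2 * (2 * n + 3) * X := by
    apply Nat.eq_of_mul_eq_mul_left (show 0 < n + 1 by omega)
    calc (n + 1) * ((n + 2) * (2 * n + 3).choose (n + 1))
        = ((2 * n + 3).choose (n + 1) * (n + 1)) * (n + 2) := by ring
      _ = ((2 * n + 3) * (2 * n + 2).choose n) * (n + 2) := by rw [hA]
      _ = (2 * n + 3) * ((2 * n + 2).choose n * (n + 2)) := by ring
      _ = (2 * n + 3) * ((2 * n + 2).choose (n + 1) * (n + 1)) := by rw [hB]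
      _ = (2 * n + 3) * (2 * X * (n + 1)) := by rw [hC]
      _ = (n + 1) * (2 * (2 * n + 3) * X) := by ring
  apply Nat.eq_of_mul_eq_mul_left (show 0 < n + 2 by omega)
  calc (n + 2) * (4 * X) = 2 * (2 * n + 3) * X + 2 * X := by ring
    _ = (n + 2) * (2 * n + 3).choose (n + 1) + (n + 2) * catalan (n + 1) := by rw [hE, hD]
    _ = (n + 2) * ((2 * n + 3).choose (n + 1) + catalan (n + 1)) := by ring

lemma AD_succ' (n : ℕ) :
    AD (n + 1) = 2 * (∑ m ∈ Finset.range (n + 1), AD m * (catalan (n - m) : ℤ))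
      + (n + 1) * (catalan (n + 1) : ℤ) := by
  rw [AD_succ]
  simp only [cD_eq_catalan]
  rw [Finset.sum_add_distrib, Finset.sum_add_distrib]
  have hrefl : ∑ m ∈ Finset.range (n + 1), (catalan m : ℤ) * AD (n - m)
      = ∑ m ∈ Finset.range (n + 1), AD m * (catalan (n - m) : ℤ) := by
    rw [← Finset.sum_range_reflect (fun m => AD m * (catalan (n - m) : ℤ)) (n + 1)]
    refine Finset.sum_congr rfl fun m hm => ?_
    rw [Finset.mem_range] at hm
    rw [show n + 1 - 1 - m = n - m by omega, show n - (n - m) = m by omega]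
    ring
  have hsym : (2 : ℤ) * ∑ m ∈ Finset.range (n + 1),
        (2 * (m : ℤ) + 1) * ((catalan m : ℤ) * (catalan (n - m) : ℤ))
      = (2 * n + 2) * ∑ m ∈ Finset.range (n + 1), (catalan m : ℤ) * (catalan (n - m) : ℤ) := by
    have h2 : ∑ m ∈ Finset.range (n + 1),
          (2 * (m : ℤ) + 1) * ((catalan m : ℤ) * (catalan (n - m) : ℤ))
        = ∑ m ∈ Finset.range (n + 1),
          (2 * ((n : ℤ) - m) + 1) * ((catalan m : ℤ) * (catalan (n - m) : ℤ)) := by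
      rw [← Finset.sum_range_reflect (fun m =>
        (2 * ((n : ℤ) - m) + 1) * ((catalan m : ℤ) * (catalan (n - m) : ℤ))) (n + 1)]
      refine Finset.sum_congr rfl fun m hm => ?_
      rw [Finset.mem_range] at hm
      rw [show n + 1 - 1 - m = n - m by omega, show n - (n - m) = m by omega]
      push_cast [show ((n - m : ℕ) : ℤ) = (n : ℤ) - m by omega]
      ring
    calc (2 : ℤ) * ∑ m ∈ Finset.range (n + 1),
          (2 * (m : ℤ) + 1) * ((catalan m : ℤ) * (catalan (n - m) : ℤ))
        = ∑ m ∈ Finset.range (n + 1), (2 * (m : ℤ) + 1) * ((catalan m : ℤ) * (catalan (n - m) : ℤ))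
          + ∑ m ∈ Finset.range (n + 1), (2 * ((n : ℤ) - m) + 1) * ((catalan m : ℤ) * (catalan (n - m) : ℤ)) := by
          rw [← h2]; ring
      _ = ∑ m ∈ Finset.range (n + 1), ((2 * n + 2) * ((catalan m : ℤ) * (catalan (n - m) : ℤ))) := by
          rw [← Finset.sum_add_distrib]
          refine Finset.sum_congr rfl fun m hm => ?_
          ring
      _ = (2 * n + 2) * ∑ m ∈ Finset.range (n + 1), (catalan m : ℤ) * (catalan (n - m) : ℤ) := by
          rw [Finset.mul_sum]
  have hcat : ∑ m ∈ Finset.range (n + 1), (catalan m : ℤ) * (catalan (n - m) : ℤ)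
      = (catalan (n + 1) : ℤ) := by
    rw [catalan_succ, Fin.sum_univ_eq_sum_range (fun i => catalan i * catalan (n - i)) (n + 1)]
    push_cast
    rfl
  rw [hrefl]
  have h3 : ∑ m ∈ Finset.range (n + 1),
      (2 * (m : ℤ) + 1) * ((catalan m : ℤ) * (catalan (n - m) : ℤ))
      = (n + 1) * (catalan (n + 1) : ℤ) := by
    have := hsym
    rw [hcat] at this
    linarith
  rw [← h3]
  have : ∀ m ∈ Finset.range (n + 1),
      (2 * (m : ℤ) + 1) * ((catalan m : ℤ) * (catalan (n - m) : ℤ))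
      = (2 * (m : ℕ) + 1 : ℤ) * ((catalan m : ℤ) * (catalan (n - m) : ℤ)) := by
    intro m _; push_cast; ring
  rw [Finset.sum_congr rfl this]
  push_cast
  ring



lemma AD_key (n : ℕ) : AD (n + 1) = 4 * AD n + (catalan (n + 1) : ℤ) := by
  induction n using Nat.strong_induction_on with
  | _ n ih =>
    match n with
    | 0 =>
      rw [AD_succ']
      simp [AD_zero, catalan_one]
    | k + 1 =>
      have hS1 : ∑ m ∈ Finset.range (k + 2), AD m * (catalan (k + 1 - m) : ℤ)
          = 4 * (∑ m ∈ Finset.range (k + 1), AD m * (catalan (k - m) : ℤ))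
            + ((catalan (k + 2) : ℤ) - catalan (k + 1)) := by
        rw [Finset.sum_range_succ' (fun m => AD m * (catalan (k + 1 - m) : ℤ)) (k + 1)]
        rw [AD_zero]
        have hstep : ∀ m ∈ Finset.range (k + 1),
            AD (m + 1) * (catalan (k + 1 - (m + 1)) : ℤ)
            = 4 * (AD m * (catalan (k - m) : ℤ)) + (catalan (m + 1) : ℤ) * (catalan (k - m) : ℤ) := by
          intro m hm
          rw [Finset.mem_range] at hm
          rw [show k + 1 - (m + 1) = k - m by omega, ih m (by omega)]
          ring
        rw [Finset.sum_congr rfl hstep, Finset.sum_add_distrib, ← Finset.mul_sum]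
        have hconv : ∑ m ∈ Finset.range (k + 1), (catalan (m + 1) : ℤ) * (catalan (k - m) : ℤ)
            = (catalan (k + 2) : ℤ) - catalan (k + 1) := by
          have h := catalan_succ (k + 1)
          rw [Fin.sum_univ_eq_sum_range (fun i => catalan i * catalan (k + 1 - i)) (k + 2)] at h
          rw [Finset.sum_range_succ' (fun i => catalan i * catalan (k + 1 - i)) (k + 1)] at h
          simp only [catalan_zero, one_mul, Nat.sub_zero] at h
          have h' : (catalan (k + 2) : ℤ)
              = (∑ i ∈ Finset.range (k + 1), (catalan (i + 1) * catalan (k + 1 - (i + 1)) : ℕ) : ℤ)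
                + (catalan (k + 1) : ℤ) := by exact_mod_cast congrArg (Nat.cast : ℕ → ℤ) h
          rw [h']
          push_cast
          have heq : ∀ i ∈ Finset.range (k + 1),
              ((catalan (i + 1) : ℤ) * (catalan (k + 1 - (i + 1)) : ℤ))
              = (catalan (i + 1) : ℤ) * (catalan (k - i) : ℤ) := by
            intro i hi
            rw [show k + 1 - (i + 1) = k - i by omega]
          ring
        rw [hconv]
        ring
      have hk1 := AD_succ' (k + 1)
      have hk0 := AD_succ' k
      rw [hS1] at hk1
      have hcr : ((k + 1 : ℕ) + 2 : ℤ) * (catalan (k + 2) : ℤ)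
          = (4 * (k + 1 : ℕ) + 2 : ℤ) * (catalan (k + 1) : ℤ) := by
        exact_mod_cast congrArg (Nat.cast : ℕ → ℤ) (cat_rec (k + 1))
      push_cast at hcr hk1 hk0 ⊢
      linarith

lemma AD_closed (n : ℕ) : AD n = 4 ^ n - ((2 * n + 1).choose n : ℤ) := by
  induction n with
  | zero => simp [AD_zero]
  | succ k ih =>
    rw [AD_key, ih]
    have hc : ((4 * (2 * k + 1).choose k : ℕ) : ℤ)
        = ((2 * k + 3).choose (k + 1) : ℤ) + (catalan (k + 1) : ℤ) := by
      exact_mod_cast congrArg (Nat.cast : ℕ → ℤ) (choose_rec k)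
    push_cast at hc
    rw [show 2 * (k + 1) + 1 = 2 * k + 3 by ring]
    push_cast
    ring_nf
    ring_nf at hc
    linarith

end DP

open scoped Classical

/-- The total area of all Dyck paths of semi-length `n` is `4^n - C(2n+1, n)`. -/
theorem total_area_dyck (n : ℕ) :
    ∑ f ∈ Finset.univ.filter (fun f : Fin (2 * n) → Bool => IsDyck (List.ofFn f)),
        pathArea (List.ofFn f) =
      4 ^ n - ((2 * n + 1).choose n : ℤ) := by
  rw [← DP.AD_closed, DP.AD, DP.Dset]
  exact (Finset.sum_image (fun x _ y _ h => List.ofFn_injective h)).symm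
end
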